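/- arXiv:2211.02595 — 7 statements merged into one kernel-verified Lean document; each statement's English description precedes it below -/
import Mathlib

section
/- Quantitative Merle–Zaag alternative: Let τ₀ ∈ ℝ, C₀ > 0, and let ρ : (−∞, τ₀] → (0, ∞) be differentiable with lim_{τ→−∞} ρ(τ) = ∞ and −ρ(τ) ≤ 5ρ′(τ) ≤ 0. Let U₊, U₀, U₋ : (−∞, τ₀] → [0, ∞) be differentiable functions with lim_{τ→−∞}(U₊ + U₀ + U₋)(τ) = 0 which satisfy, for all τ ≤ τ₀: U₊′ ≥ U₊ − C₀ρ⁻¹(U₊ + U₀ + U₋), |U₀′| ≤ C₀ρ⁻¹(U₊ + U₀ + U₋), and U₋′ ≤ −U₋ + C₀ρ⁻¹(U₊ + U₀ + U₋). Then there exist a constant C < ∞ and τ₁ ≤ τ₀ such that either U₀(τ) + U₋(τ) ≤ Cρ(τ)⁻¹U₊(τ) for all τ ≤ τ₁ (the unstable mode is dominant), or U₋(τ) + U₊(τ) ≤ Cρ(τ)⁻¹U₀(τ) for all τ ≤ τ₁ (the neutral mode is dominant). -/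
open Set Filter Topology

lemma mz_slope_right {f : ℝ → ℝ} {f' σ b τ₀ : ℝ}
    (hd : HasDerivWithinAt f f' (Set.Iic τ₀) σ) (hσb : σ < b) (hbτ₀ : b ≤ τ₀)
    (h : ∀ τ ∈ Set.Ioc σ b, f σ ≤ f τ) : 0 ≤ f' := by
  have hsub : Set.Ioc σ b ⊆ Set.Iic τ₀ := fun τ hτ => le_trans hτ.2 hbτ₀
  have hd' : HasDerivWithinAt f f' (Set.Ioc σ b) σ := hd.mono hsub
  have hslope := hasDerivWithinAt_iff_tendsto_slope.1 hd'
  have hne : (𝓝[Set.Ioc σ b \ {σ}] σ).NeBot := by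
    have he : Set.Ioc σ b \ {σ} = Set.Ioc σ b := by
      ext τ; simp only [Set.mem_diff, Set.mem_singleton_iff, Set.mem_Ioc, and_iff_left_iff_imp]
      rintro ⟨h1, _⟩; exact ne_of_gt h1
    rw [he]
    refine mem_closure_iff_nhdsWithin_neBot.1 ?_
    rw [closure_Ioc (ne_of_lt hσb)]
    exact ⟨le_refl σ, le_of_lt hσb⟩
  refine ge_of_tendsto hslope ?_
  filter_upwards [self_mem_nhdsWithin] with τ hτ
  rcases hτ with ⟨hτ1, _⟩
  have hfστ := h τ hτ1
  rw [slope_def_field]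
  exact div_nonneg (by linarith) (by linarith [hτ1.1])

lemma mz_slope_left {f : ℝ → ℝ} {f' a σ τ₀ : ℝ}
    (hd : HasDerivWithinAt f f' (Set.Iic τ₀) σ) (haσ : a < σ) (hστ₀ : σ ≤ τ₀)
    (h : ∀ τ ∈ Set.Ico a σ, f σ ≤ f τ) : f' ≤ 0 := by
  have hsub : Set.Ico a σ ⊆ Set.Iic τ₀ := fun τ hτ => le_trans (le_of_lt hτ.2) hστ₀
  have hd' : HasDerivWithinAt f f' (Set.Ico a σ) σ := hd.mono hsub
  have hslope := hasDerivWithinAt_iff_tendsto_slope.1 hd'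
  have hne : (𝓝[Set.Ico a σ \ {σ}] σ).NeBot := by
    have he : Set.Ico a σ \ {σ} = Set.Ico a σ := by
      ext τ; simp only [Set.mem_diff, Set.mem_singleton_iff, Set.mem_Ico, and_iff_left_iff_imp]
      rintro ⟨_, h2⟩; exact ne_of_lt h2
    rw [he]
    refine mem_closure_iff_nhdsWithin_neBot.1 ?_
    rw [closure_Ico (ne_of_lt haσ)]
    exact ⟨le_of_lt haσ, le_refl σ⟩
  refine le_of_tendsto hslope ?_
  filter_upwards [self_mem_nhdsWithin] with τ hτ
  rcases hτ with ⟨hτ1, _⟩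
  have hfστ := h τ hτ1
  rw [slope_def_field]
  exact div_nonpos_of_nonneg_of_nonpos (by linarith) (by linarith [hτ1.2])

/-- Monotone comparison on an interval from a derivative family within `Iic τ₀`. -/
lemma mz_le_of_deriv_nonneg {f f' : ℝ → ℝ} {τ₀ a b : ℝ}
    (hd : ∀ τ ≤ τ₀, HasDerivWithinAt f (f' τ) (Set.Iic τ₀) τ)
    (hab : a ≤ b) (hb : b ≤ τ₀) (hpos : ∀ τ ∈ Set.Ioo a b, 0 ≤ f' τ) :
    f a ≤ f b := by
  have hmono : MonotoneOn f (Set.Icc a b) := by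
    refine monotoneOn_of_deriv_nonneg (convex_Icc a b) ?_ ?_ ?_
    · intro τ hτ
      exact ((hd τ (le_trans hτ.2 hb)).continuousWithinAt).mono
        (fun s hs => le_trans hs.2 hb)
    · intro τ hτ
      rw [interior_Icc] at hτ
      have hτ₀ : τ ≤ τ₀ := le_trans (le_of_lt hτ.2) hb
      have : HasDerivAt f (f' τ) τ := by
        refine (hd τ hτ₀).hasDerivAt ?_
        exact Iic_mem_nhds (lt_of_lt_of_le hτ.2 hb)
      exact this.differentiableAt.differentiableWithinAt
    · intro τ hτ
      have hτ' : τ ∈ Set.Ioo a b := by rwa [interior_Icc] at hτ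
      have hτ₀ : τ ≤ τ₀ := le_trans (le_of_lt hτ'.2) hb
      have hda : HasDerivAt f (f' τ) τ := by
        refine (hd τ hτ₀).hasDerivAt ?_
        exact Iic_mem_nhds (lt_of_lt_of_le hτ'.2 hb)
      rw [hda.deriv]
      exact hpos τ hτ'
  exact hmono (Set.left_mem_Icc.2 hab) (Set.right_mem_Icc.2 hab) hab

lemma mz_le_of_deriv_nonpos {f f' : ℝ → ℝ} {τ₀ a b : ℝ}
    (hd : ∀ τ ≤ τ₀, HasDerivWithinAt f (f' τ) (Set.Iic τ₀) τ)
    (hab : a ≤ b) (hb : b ≤ τ₀) (hneg : ∀ τ ∈ Set.Ioo a b, f' τ ≤ 0) :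
    f b ≤ f a := by
  have := mz_le_of_deriv_nonneg (f := fun τ => -f τ) (f' := fun τ => -f' τ)
    (fun τ hτ => (hd τ hτ).neg) hab hb (fun τ hτ => by simp [hneg τ hτ])
  simpa using this

/-- Nonnegativity from monotonicity + vanishing at `-∞`. -/
lemma mz_nonneg_of_deriv_nonneg {f f' : ℝ → ℝ} {τ₀ b : ℝ}
    (hd : ∀ τ ≤ τ₀, HasDerivWithinAt f (f' τ) (Set.Iic τ₀) τ)
    (hb : b ≤ τ₀) (hpos : ∀ τ < b, 0 ≤ f' τ)
    (hlim : Filter.Tendsto f Filter.atBot (nhds 0)) :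
    ∀ τ ≤ b, 0 ≤ f τ := by
  intro τ hτ
  refine le_of_tendsto hlim ?_
  filter_upwards [eventually_le_atBot τ] with σ hσ
  exact mz_le_of_deriv_nonneg hd hσ (le_trans hτ hb)
    (fun s hs => hpos s (lt_of_lt_of_le hs.2 hτ))

/-- First crossing from the left of a positive point. -/
lemma mz_crossing_left {g : ℝ → ℝ} {τ₀ b : ℝ}
    (hg : ContinuousOn g (Set.Iic τ₀)) (hb : b ≤ τ₀) (hgb : 0 < g b)
    (hne : ∃ τ ≤ b, g τ ≤ 0) :
    ∃ σ < b, g σ = 0 ∧ ∀ τ ∈ Set.Ioc σ b, 0 < g τ := by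
  set T : Set ℝ := {τ | τ ≤ b ∧ g τ ≤ 0} with hT
  have hTne : T.Nonempty := by
    obtain ⟨τ, h1, h2⟩ := hne; exact ⟨τ, h1, h2⟩
  have hTclosed : IsClosed T := by
    have : T = Set.Iic b ∩ g ⁻¹' (Set.Iic 0) := by
      ext τ; simp [hT, Set.mem_setOf_eq]
    rw [this]
    exact (hg.mono (Iic_subset_Iic.2 hb)).preimage_isClosed_of_isClosed isClosed_Iic isClosed_Iic
  have hTbdd : BddAbove T := ⟨b, fun τ hτ => hτ.1⟩
  set σ := sSup T with hσ
  have hσT : σ ∈ T := hTclosed.csSup_mem hTne hTbdd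
  have hpos : ∀ τ ∈ Set.Ioc σ b, 0 < g τ := by
    intro τ hτ
    by_contra hc
    push_neg at hc
    have : τ ∈ T := ⟨hτ.2, hc⟩
    exact absurd (le_csSup hTbdd this) (not_le.2 hτ.1)
  have hσb : σ < b := by
    rcases lt_or_eq_of_le hσT.1 with h | h
    · exact h
    · exact absurd hσT.2 (not_le.2 (h ▸ hgb))
  refine ⟨σ, hσb, ?_, hpos⟩
  refine le_antisymm hσT.2 ?_
  have hcont : Filter.Tendsto g (𝓝[Set.Ioc σ b] σ) (nhds (g σ)) := by
    have h1 : ContinuousWithinAt g (Set.Iic τ₀) σ := hg σ (le_trans hσT.1 hb)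
    exact h1.tendsto.mono_left (nhdsWithin_mono σ (fun τ hτ => le_trans hτ.2 hb))
  have hne2 : (𝓝[Set.Ioc σ b] σ).NeBot := by
    refine mem_closure_iff_nhdsWithin_neBot.1 ?_
    rw [closure_Ioc (ne_of_lt hσb)]
    exact ⟨le_refl σ, le_of_lt hσb⟩
  refine ge_of_tendsto hcont ?_
  filter_upwards [self_mem_nhdsWithin] with τ hτ
  exact le_of_lt (hpos τ hτ)

/-- First crossing to the right of a positive point. -/
lemma mz_crossing_right {g : ℝ → ℝ} {τ₀ a b : ℝ}
    (hg : ContinuousOn g (Set.Iic τ₀)) (hb : b ≤ τ₀) (hab : a ≤ b)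
    (hga : 0 < g a) (hgb : g b ≤ 0) :
    ∃ σ ∈ Set.Ioc a b, g σ = 0 ∧ ∀ τ ∈ Set.Ico a σ, 0 < g τ := by
  set T : Set ℝ := {τ | τ ∈ Set.Icc a b ∧ g τ ≤ 0} with hT
  have hTne : T.Nonempty := ⟨b, ⟨hab, le_refl b⟩, hgb⟩
  have hTclosed : IsClosed T := by
    have : T = Set.Icc a b ∩ g ⁻¹' (Set.Iic 0) := by
      ext τ; simp [hT, Set.mem_setOf_eq]
    rw [this]
    exact (hg.mono (fun τ hτ => le_trans hτ.2 hb)).preimage_isClosed_of_isClosed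
      isClosed_Icc isClosed_Iic
  have hTbdd : BddBelow T := ⟨a, fun τ hτ => hτ.1.1⟩
  set σ := sInf T with hσ
  have hσT : σ ∈ T := hTclosed.csInf_mem hTne hTbdd
  have hpos : ∀ τ ∈ Set.Ico a σ, 0 < g τ := by
    intro τ hτ
    by_contra hc
    push_neg at hc
    have hτb : τ ≤ b := le_trans (le_of_lt hτ.2) hσT.1.2
    have : τ ∈ T := ⟨⟨hτ.1, hτb⟩, hc⟩
    exact absurd (csInf_le hTbdd this) (not_le.2 hτ.2)
  have haσ : a < σ := by
    rcases lt_or_eq_of_le hσT.1.1 with h | h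
    · exact h
    · exact absurd hσT.2 (not_le.2 (h ▸ hga))
  refine ⟨σ, ⟨haσ, hσT.1.2⟩, ?_, hpos⟩
  refine le_antisymm hσT.2 ?_
  have hcont : Filter.Tendsto g (𝓝[Set.Ico a σ] σ) (nhds (g σ)) := by
    have h1 : ContinuousWithinAt g (Set.Iic τ₀) σ := hg σ (le_trans hσT.1.2 hb)
    exact h1.tendsto.mono_left (nhdsWithin_mono σ
      (fun τ hτ => le_trans (le_of_lt hτ.2) (le_trans hσT.1.2 hb)))
  have hne2 : (𝓝[Set.Ico a σ] σ).NeBot := by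
    refine mem_closure_iff_nhdsWithin_neBot.1 ?_
    rw [closure_Ico (ne_of_lt haσ)]
    exact ⟨le_of_lt haσ, le_refl σ⟩
  refine ge_of_tendsto hcont ?_
  filter_upwards [self_mem_nhdsWithin] with τ hτ
  exact le_of_lt (hpos τ hτ)
set_option maxHeartbeats 1000000 in
/-- **Quantitative Merle–Zaag alternative** (Proposition 2.2 of the paper, ODE form).
Given an admissible graphical radius `ρ` (positive, tending to `∞` backwards in time,
with `-ρ ≤ 5ρ' ≤ 0`) and nonnegative differentiable functions `U₊, U₀, U₋` tending to `0`
at `-∞` satisfying the Merle–Zaag differential inequalities with coefficient `C₀ ρ⁻¹`,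
either the unstable mode or the neutral mode dominates quantitatively. -/
theorem quantitative_merle_zaag_alternative
    (τ₀ C₀ : ℝ) (hC₀ : 0 < C₀)
    (ρ ρ' Up Up' U0 U0' Um Um' : ℝ → ℝ)
    (hρpos : ∀ τ ≤ τ₀, 0 < ρ τ)
    (hρderiv : ∀ τ ≤ τ₀, HasDerivWithinAt ρ (ρ' τ) (Set.Iic τ₀) τ)
    (hρlim : Filter.Tendsto ρ Filter.atBot Filter.atTop)
    (hρ'lower : ∀ τ ≤ τ₀, -ρ τ ≤ 5 * ρ' τ)
    (hρ'upper : ∀ τ ≤ τ₀, 5 * ρ' τ ≤ 0)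
    (hUpnn : ∀ τ ≤ τ₀, 0 ≤ Up τ)
    (hU0nn : ∀ τ ≤ τ₀, 0 ≤ U0 τ)
    (hUmnn : ∀ τ ≤ τ₀, 0 ≤ Um τ)
    (hUpderiv : ∀ τ ≤ τ₀, HasDerivWithinAt Up (Up' τ) (Set.Iic τ₀) τ)
    (hU0deriv : ∀ τ ≤ τ₀, HasDerivWithinAt U0 (U0' τ) (Set.Iic τ₀) τ)
    (hUmderiv : ∀ τ ≤ τ₀, HasDerivWithinAt Um (Um' τ) (Set.Iic τ₀) τ)
    (hlim : Filter.Tendsto (fun τ => Up τ + U0 τ + Um τ) Filter.atBot (nhds 0))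
    (h1 : ∀ τ ≤ τ₀, Up τ - C₀ * (ρ τ)⁻¹ * (Up τ + U0 τ + Um τ) ≤ Up' τ)
    (h2 : ∀ τ ≤ τ₀, |U0' τ| ≤ C₀ * (ρ τ)⁻¹ * (Up τ + U0 τ + Um τ))
    (h3 : ∀ τ ≤ τ₀, Um' τ ≤ -Um τ + C₀ * (ρ τ)⁻¹ * (Up τ + U0 τ + Um τ)) :
    ∃ C : ℝ, ∃ τ₁ ≤ τ₀,
      (∀ τ ≤ τ₁, U0 τ + Um τ ≤ C * (ρ τ)⁻¹ * Up τ) ∨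
      (∀ τ ≤ τ₁, Um τ + Up τ ≤ C * (ρ τ)⁻¹ * U0 τ) := by
  classical
  -- the small coefficient and its derivative
  set E : ℝ → ℝ := fun τ => C₀ * (ρ τ)⁻¹ with hEdef
  set E' : ℝ → ℝ := fun τ => C₀ * (-ρ' τ / ρ τ ^ 2) with hE'def
  have hEd : ∀ τ ≤ τ₀, HasDerivWithinAt E (E' τ) (Set.Iic τ₀) τ := fun τ hτ =>
    ((hρderiv τ hτ).inv (ne_of_gt (hρpos τ hτ))).const_mul C₀
  have hEpos : ∀ τ ≤ τ₀, 0 < E τ := fun τ hτ => by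
    have := hρpos τ hτ
    simp only [hEdef]
    positivity
  have hE'nn : ∀ τ ≤ τ₀, 0 ≤ E' τ := fun τ hτ => by
    have h5 := hρ'upper τ hτ
    have hp := hρpos τ hτ
    simp only [hE'def]
    have : 0 ≤ -ρ' τ := by linarith
    positivity
  have hE'le : ∀ τ ≤ τ₀, E' τ ≤ E τ / 5 := fun τ hτ => by
    have h5 := hρ'lower τ hτ
    have hp := hρpos τ hτ
    simp only [hE'def, hEdef]
    rw [mul_div_assoc]
    refine mul_le_mul_of_nonneg_left ?_ hC₀.le
    rw [div_le_div_iff₀ (by positivity) (by norm_num : (0:ℝ) < 5)]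
    have h2 : (ρ τ)⁻¹ * ρ τ ^ 2 = ρ τ := by field_simp [pow_two]
    nlinarith [h2]
  -- rewrite hypotheses in terms of E
  have h1E : ∀ τ ≤ τ₀, Up τ - E τ * (Up τ + U0 τ + Um τ) ≤ Up' τ := h1
  have h2E : ∀ τ ≤ τ₀, |U0' τ| ≤ E τ * (Up τ + U0 τ + Um τ) := h2
  have h3E : ∀ τ ≤ τ₀, Um' τ ≤ -Um τ + E τ * (Up τ + U0 τ + Um τ) := h3
  -- continuity
  have hUpc : ContinuousOn Up (Set.Iic τ₀) := fun τ hτ => (hUpderiv τ hτ).continuousWithinAt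
  have hU0c : ContinuousOn U0 (Set.Iic τ₀) := fun τ hτ => (hU0deriv τ hτ).continuousWithinAt
  have hUmc : ContinuousOn Um (Set.Iic τ₀) := fun τ hτ => (hUmderiv τ hτ).continuousWithinAt
  have hEc : ContinuousOn E (Set.Iic τ₀) := fun τ hτ => (hEd τ hτ).continuousWithinAt
  -- individual limits
  have hxlim : Filter.Tendsto Up Filter.atBot (nhds 0) := by
    refine tendsto_of_tendsto_of_tendsto_of_le_of_le' tendsto_const_nhds hlim ?_ ?_
    · filter_upwards [Filter.eventually_le_atBot τ₀] with τ hτ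
      exact hUpnn τ hτ
    · filter_upwards [Filter.eventually_le_atBot τ₀] with τ hτ
      have := hU0nn τ hτ; have := hUmnn τ hτ; linarith
  have hylim : Filter.Tendsto U0 Filter.atBot (nhds 0) := by
    refine tendsto_of_tendsto_of_tendsto_of_le_of_le' tendsto_const_nhds hlim ?_ ?_
    · filter_upwards [Filter.eventually_le_atBot τ₀] with τ hτ
      exact hU0nn τ hτ
    · filter_upwards [Filter.eventually_le_atBot τ₀] with τ hτ
      have := hUpnn τ hτ; have := hUmnn τ hτ; linarith
  have hzlim : Filter.Tendsto Um Filter.atBot (nhds 0) := by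
    refine tendsto_of_tendsto_of_tendsto_of_le_of_le' tendsto_const_nhds hlim ?_ ?_
    · filter_upwards [Filter.eventually_le_atBot τ₀] with τ hτ
      exact hUmnn τ hτ
    · filter_upwards [Filter.eventually_le_atBot τ₀] with τ hτ
      have := hUpnn τ hτ; have := hU0nn τ hτ; linarith
  -- choice of τ₁ with E ≤ 1/100 below it
  obtain ⟨τ₁', hτ₁'⟩ := Filter.eventually_atBot.1
    (hρlim.eventually (Filter.eventually_ge_atTop (100 * C₀)))
  set τ₁ : ℝ := min τ₁' τ₀ with hτ₁def
  have hτ₁τ₀ : τ₁ ≤ τ₀ := min_le_right _ _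
  have hEsm : ∀ τ ≤ τ₁, E τ ≤ 1 / 100 := by
    intro τ hτ
    have hρτ : 100 * C₀ ≤ ρ τ := hτ₁' τ (le_trans hτ (min_le_left _ _))
    have hp := hρpos τ (le_trans hτ hτ₁τ₀)
    simp only [hEdef]
    rw [show C₀ * (ρ τ)⁻¹ = C₀ / ρ τ by rw [div_eq_mul_inv]]
    rw [div_le_div_iff₀ hp (by norm_num : (0:ℝ) < 100)]
    linarith
  -- Region decay for the stable mode
  have hzhalf : ∀ σ, σ ≤ τ₁ → 4 * (E σ * (Up σ + U0 σ)) < Um σ → Um' σ ≤ -(Um σ / 2) := by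
    intro σ hσ hg
    have hσ₀ : σ ≤ τ₀ := le_trans hσ hτ₁τ₀
    have h3σ := h3E σ hσ₀
    have he := hEpos σ hσ₀
    have he1 := hEsm σ hσ
    have hz := hUmnn σ hσ₀
    have hez : E σ * Um σ ≤ (1/100) * Um σ := mul_le_mul_of_nonneg_right he1 hz
    nlinarith [h3σ, hg, hez]
  -- Backward exponential growth of `Um` in the region
  have hFanti : ∀ a b, a ≤ b → b ≤ τ₁ →
      (∀ τ ∈ Set.Ioo a b, 4 * (E τ * (Up τ + U0 τ)) < Um τ) →
      Um b * Real.exp (b/2) ≤ Um a * Real.exp (a/2) := by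
    intro a b hab hb hreg
    refine mz_le_of_deriv_nonpos
      (f' := fun τ => Um' τ * Real.exp (τ/2) + Um τ * (Real.exp (τ/2) * (1/2)))
      (fun τ hτ => (hUmderiv τ hτ).mul (((hasDerivAt_id τ).div_const 2).exp.hasDerivWithinAt))
      hab (le_trans hb hτ₁τ₀) ?_
    intro τ hτ
    have hhalf := hzhalf τ (le_trans hτ.2.le hb) (hreg τ hτ)
    have hP := Real.exp_pos (τ/2)
    nlinarith [mul_le_mul_of_nonneg_right hhalf hP.le]
  -- Claim 1 : the stable mode is dominated
  have claim1 : ∀ τs, τs ≤ τ₁ → Um τs ≤ 4 * (E τs * (Up τs + U0 τs)) := by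
    intro τs hτs
    by_contra hg0
    push_neg at hg0
    have hτs₀ : τs ≤ τ₀ := le_trans hτs hτ₁τ₀
    have hUmτs : 0 < Um τs := by
      have h4 : 0 ≤ 4 * (E τs * (Up τs + U0 τs)) := by
        have h5 := (hEpos τs hτs₀).le
        have h6 := hUpnn τs hτs₀
        have h7 := hU0nn τs hτs₀
        have := mul_nonneg h5 (by linarith : (0:ℝ) ≤ Up τs + U0 τs)
        linarith
      linarith
    by_cases hne : ∃ τ ≤ τs, Um τ - 4 * (E τ * (Up τ + U0 τ)) ≤ 0
    · -- there is a crossing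
      have hgc : ContinuousOn (fun τ => Um τ - 4 * (E τ * (Up τ + U0 τ))) (Set.Iic τ₀) :=
        hUmc.sub (continuousOn_const.mul (hEc.mul (hUpc.add hU0c)))
      obtain ⟨σ, hσlt, hσ0, hpos⟩ := mz_crossing_left hgc hτs₀ (by linarith) hne
      have hσ₁ : σ ≤ τ₁ := le_trans hσlt.le hτs
      have hσ₀ : σ ≤ τ₀ := le_trans hσ₁ hτ₁τ₀
      have hanti := hFanti σ τs hσlt.le hτs (fun τ hτ => by
        have := hpos τ ⟨hτ.1, hτ.2.le⟩
        linarith)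
      have hPσ := Real.exp_pos (σ/2)
      have hPτs := Real.exp_pos (τs/2)
      have hUmσ : 0 < Um σ := by nlinarith [hanti, mul_pos hUmτs hPτs]
      have he := hEpos σ hσ₀
      have he1 := hEsm σ hσ₁
      have he' := hE'nn σ hσ₀
      have hx := hUpnn σ hσ₀
      have hy := hU0nn σ hσ₀
      have hz := hUmnn σ hσ₀
      have hzeq : Um σ = 4 * (E σ * (Up σ + U0 σ)) := by linarith [hσ0]
      have hWσ : 0 < Up σ + U0 σ := by nlinarith [hzeq, hUmσ, he]
      have hgd : HasDerivWithinAt (fun τ => Um τ - 4 * (E τ * (Up τ + U0 τ)))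
          (Um' σ - 4 * (E' σ * (Up σ + U0 σ) + E σ * (Up' σ + U0' σ))) (Set.Iic τ₀) σ :=
        (hUmderiv σ hσ₀).sub
          (((hEd σ hσ₀).mul ((hUpderiv σ hσ₀).add (hU0deriv σ hσ₀))).const_mul 4)
      have hslope : 0 ≤ Um' σ - 4 * (E' σ * (Up σ + U0 σ) + E σ * (Up' σ + U0' σ)) := by
        refine mz_slope_right hgd hσlt hτs₀ ?_
        intro τ hτ
        have h8 := hpos τ hτ
        have h9 := hσ0
        linarith
      have hx' := h1E σ hσ₀
      have hy' := abs_le.1 (h2E σ hσ₀)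
      have hz' := h3E σ hσ₀
      have hWnn : (0:ℝ) ≤ Up σ + U0 σ := hWσ.le
      have hSle : Up σ + U0 σ + Um σ ≤ 2 * (Up σ + U0 σ) := by
        have hEW := mul_le_mul_of_nonneg_right he1 hWnn
        linarith [hzeq, hEW]
      have hSnn : (0:ℝ) ≤ Up σ + U0 σ + Um σ := by linarith
      have heS : E σ * (Up σ + U0 σ + Um σ) ≤ 2 * (E σ * (Up σ + U0 σ)) := by
        have h10 := mul_le_mul_of_nonneg_left hSle he.le
        have h11 : E σ * (2 * (Up σ + U0 σ)) = 2 * (E σ * (Up σ + U0 σ)) := by ring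
        linarith
      have heSnn : 0 ≤ E σ * (Up σ + U0 σ + Um σ) := mul_nonneg he.le hSnn
      have heA : E σ * (E σ * (Up σ + U0 σ)) ≤ (1/100) * (E σ * (Up σ + U0 σ)) :=
        mul_le_mul_of_nonneg_right he1 (mul_nonneg he.le hWnn)
      have he2S : E σ * (E σ * (Up σ + U0 σ + Um σ)) ≤ (2/100) * (E σ * (Up σ + U0 σ)) := by
        have h10 := mul_le_mul_of_nonneg_left heS he.le
        have h11 : E σ * (2 * (E σ * (Up σ + U0 σ))) = 2 * (E σ * (E σ * (Up σ + U0 σ))) := by ring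
        linarith [heA]
      have t1 : E σ * Up σ - E σ * (E σ * (Up σ + U0 σ + Um σ)) ≤ E σ * Up' σ := by
        have h10 := mul_le_mul_of_nonneg_left hx' he.le
        have h11 : E σ * (Up σ - E σ * (Up σ + U0 σ + Um σ))
            = E σ * Up σ - E σ * (E σ * (Up σ + U0 σ + Um σ)) := by ring
        linarith
      have t2 : -(E σ * (E σ * (Up σ + U0 σ + Um σ))) ≤ E σ * U0' σ := by
        have h10 := mul_le_mul_of_nonneg_left hy'.1 he.le
        have h11 : E σ * (-(E σ * (Up σ + U0 σ + Um σ)))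
            = -(E σ * (E σ * (Up σ + U0 σ + Um σ))) := by ring
        linarith
      have t3 : 0 ≤ E' σ * (Up σ + U0 σ) := mul_nonneg he' hWnn
      have hApos : 0 < E σ * (Up σ + U0 σ) := mul_pos he hWσ
      have hexnn : 0 ≤ E σ * Up σ := mul_nonneg he.le hx
      -- combine everything
      have hUm' : Um' σ ≤ -(2 * (E σ * (Up σ + U0 σ))) := by linarith [hz', hzeq, heS]
      have hexp : 4 * (E' σ * (Up σ + U0 σ) + E σ * (Up' σ + U0' σ))
          = 4 * (E' σ * (Up σ + U0 σ)) + 4 * (E σ * Up' σ) + 4 * (E σ * U0' σ) := by ring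
      linarith [hslope, hUm', t1, t2, t3, he2S, hexnn, hApos, hexp]
    · -- no crossing : exponential growth backwards forever, contradiction with decay
      push_neg at hne
      obtain ⟨a, haτs, halt⟩ : ∃ a, a ≤ τs ∧ Um a < Um τs := by
        obtain ⟨a, h1', h2'⟩ := ((hzlim.eventually_lt_const hUmτs).and
          (Filter.eventually_le_atBot τs)).exists
        exact ⟨a, h2', h1'⟩
      have hanti := hFanti a τs haτs hτs (fun τ hτ => by
        have := hne τ hτ.2.le
        linarith)
      have hPa := Real.exp_pos (a/2)
      have hmono : Real.exp (a/2) ≤ Real.exp (τs/2) := Real.exp_le_exp.2 (by linarith)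
      linarith [hanti, mul_lt_mul_of_pos_right halt hPa,
        mul_le_mul_of_nonneg_left hmono hUmτs.le]
  -- Region bound for the neutral mode
  have hyreg : ∀ σ, σ ≤ τ₁ → 10 * E σ * Up σ < U0 σ → |U0' σ| ≤ U0 σ / 4 ∧ 0 < U0 σ := by
    intro σ hσ hr
    have hσ₀ : σ ≤ τ₀ := le_trans hσ hτ₁τ₀
    have he := hEpos σ hσ₀
    have he1 := hEsm σ hσ
    have hx := hUpnn σ hσ₀
    have hy := hU0nn σ hσ₀
    have hz := hUmnn σ hσ₀
    have hy0 : 0 < U0 σ :=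
      lt_of_le_of_lt (mul_nonneg (mul_nonneg (by norm_num) he.le) hx) hr
    refine ⟨le_trans (h2E σ hσ₀) ?_, hy0⟩
    have c1 := claim1 σ hσ
    have m1 := mul_le_mul_of_nonneg_left c1 he.le
    have m2 : E σ * (E σ * (Up σ + U0 σ)) ≤ (1/100) * (E σ * (Up σ + U0 σ)) :=
      mul_le_mul_of_nonneg_right he1 (mul_nonneg he.le (by linarith))
    have m3 : E σ * U0 σ ≤ (1/100) * U0 σ := mul_le_mul_of_nonneg_right he1 hy
    have m4 : 0 ≤ E σ * Up σ := mul_nonneg he.le hx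
    nlinarith [m1, m2, m3, m4, hr]
  -- Backward exponential decay of `U0` in the region
  have hGanti : ∀ a b, a ≤ b → b ≤ τ₁ →
      (∀ τ ∈ Set.Ioo a b, 10 * E τ * Up τ < U0 τ) →
      U0 b * Real.exp (-b/4) ≤ U0 a * Real.exp (-a/4) := by
    intro a b hab hb hreg
    refine mz_le_of_deriv_nonpos
      (f' := fun τ => U0' τ * Real.exp (-τ/4) + U0 τ * (Real.exp (-τ/4) * (-1/4)))
      (fun τ hτ => (hU0deriv τ hτ).mul
        ((((hasDerivAt_id τ).neg.div_const 4).exp).hasDerivWithinAt))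
      hab (le_trans hb hτ₁τ₀) ?_
    intro τ hτ
    obtain ⟨habs, hy0⟩ := hyreg τ (le_trans hτ.2.le hb) (hreg τ hτ)
    have hP := Real.exp_pos (-τ/4)
    have h5 := (abs_le.1 habs).2
    nlinarith [mul_le_mul_of_nonneg_right h5 hP.le]
  -- Claim 2a : neutral dominance over the boundary persists backwards
  have claim2a : ∀ τs, τs ≤ τ₁ → 10 * E τs * Up τs < U0 τs →
      ∀ τ ≤ τs, 10 * E τ * Up τ < U0 τ ∧ 0 < U0 τ := by
    intro τs hτs hB
    have hτs₀ : τs ≤ τ₀ := le_trans hτs hτ₁τ₀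
    have hU0τs : 0 < U0 τs :=
      lt_of_le_of_lt (mul_nonneg (mul_nonneg (by norm_num) (hEpos τs hτs₀).le)
        (hUpnn τs hτs₀)) hB
    have hreg : ∀ τ ≤ τs, 10 * E τ * Up τ < U0 τ := by
      by_contra hc
      push_neg at hc
      obtain ⟨τc, hτc, hle⟩ := hc
      have hhc : ContinuousOn (fun τ => U0 τ - 10 * E τ * Up τ) (Set.Iic τ₀) :=
        hU0c.sub ((continuousOn_const.mul hEc).mul hUpc)
      obtain ⟨σ, hσlt, hσ0, hpos⟩ := mz_crossing_left hhc hτs₀ (by linarith)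
        ⟨τc, hτc, by linarith⟩
      have hσ₁ : σ ≤ τ₁ := le_trans hσlt.le hτs
      have hσ₀' : σ ≤ τ₀ := le_trans hσ₁ hτ₁τ₀
      have hanti := hGanti σ τs hσlt.le hτs (fun τ hτ => by
        have := hpos τ ⟨hτ.1, hτ.2.le⟩; linarith)
      have hPσ := Real.exp_pos (-σ/4)
      have hPτs := Real.exp_pos (-τs/4)
      have hyσ : 0 < U0 σ := by nlinarith [hanti, mul_pos hU0τs hPτs]
      have he := hEpos σ hσ₀'
      have he1 := hEsm σ hσ₁
      have he' := hE'nn σ hσ₀'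
      have hyeq : U0 σ = 10 * E σ * Up σ := by linarith [hσ0]
      have hxσ : 0 < Up σ := by nlinarith [hyeq, hyσ, he]
      have hd : HasDerivWithinAt (fun τ => U0 τ - 10 * E τ * Up τ)
          (U0' σ - (10 * E' σ * Up σ + 10 * E σ * Up' σ)) (Set.Iic τ₀) σ :=
        (hU0deriv σ hσ₀').sub (((hEd σ hσ₀').const_mul 10).mul (hUpderiv σ hσ₀'))
      have hslope : 0 ≤ U0' σ - (10 * E' σ * Up σ + 10 * E σ * Up' σ) := by
        refine mz_slope_right hd hσlt hτs₀ ?_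
        intro τ hτ
        have h8 := hpos τ hτ
        linarith [hσ0]
      have hx := hUpnn σ hσ₀'
      have hy := hU0nn σ hσ₀'
      have hz := hUmnn σ hσ₀'
      have hx' := h1E σ hσ₀'
      have habs := abs_le.1 (h2E σ hσ₀')
      have c1 := claim1 σ hσ₁
      have m1 := mul_le_mul_of_nonneg_left c1 he.le
      have m2 : E σ * (E σ * (Up σ + U0 σ)) ≤ (1/100) * (E σ * (Up σ + U0 σ)) :=
        mul_le_mul_of_nonneg_right he1 (mul_nonneg he.le (by linarith))
      have m3 : E σ * U0 σ ≤ (1/100) * U0 σ := mul_le_mul_of_nonneg_right he1 hy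
      have hq : E σ * (Up σ + U0 σ + Um σ) ≤ 2 * (E σ * Up σ) := by
        nlinarith [m1, m2, m3, hyeq, mul_nonneg he.le hx, mul_pos he hyσ]
      have hqnn : 0 ≤ E σ * (Up σ + U0 σ + Um σ) :=
        mul_nonneg he.le (by linarith)
      have m5 : E σ * (E σ * Up σ) ≤ (1/100) * (E σ * Up σ) :=
        mul_le_mul_of_nonneg_right he1 (mul_nonneg he.le hx)
      have ht : E σ * (E σ * (Up σ + U0 σ + Um σ)) ≤ (2/100) * (E σ * Up σ) := by
        nlinarith [mul_le_mul_of_nonneg_left hq he.le, m5]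
      have t10 : E σ * Up σ - E σ * (E σ * (Up σ + U0 σ + Um σ)) ≤ E σ * Up' σ := by
        have h10 := mul_le_mul_of_nonneg_left hx' he.le
        have h11 : E σ * (Up σ - E σ * (Up σ + U0 σ + Um σ))
            = E σ * Up σ - E σ * (E σ * (Up σ + U0 σ + Um σ)) := by ring
        linarith
      nlinarith [hslope, habs.2, hq, ht, t10, mul_nonneg he' hx, mul_pos he hxσ]
    refine fun τ hτ => ⟨hreg τ hτ, ?_⟩
    have hanti := hGanti τ τs hτ hτs (fun σ hσ => hreg σ hσ.2.le)
    have hPτ := Real.exp_pos (-τ/4)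
    have hPτs := Real.exp_pos (-τs/4)
    nlinarith [hanti, mul_pos hU0τs hPτs]
  by_cases hcaseA : ∀ τ ≤ τ₁, U0 τ ≤ 10 * E τ * Up τ
  · -- unstable mode dominant
    refine ⟨15 * C₀, τ₁, hτ₁τ₀, Or.inl ?_⟩
    intro τ hτ
    have hτ₀' : τ ≤ τ₀ := le_trans hτ hτ₁τ₀
    have he := hEpos τ hτ₀'
    have he1 := hEsm τ hτ
    have hx := hUpnn τ hτ₀'
    have hy := hU0nn τ hτ₀'
    have c1 := claim1 τ hτ
    have hA := hcaseA τ hτ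
    have hgoal : 15 * C₀ * (ρ τ)⁻¹ * Up τ = 15 * (E τ * Up τ) := by
      simp only [hEdef]; ring
    rw [hgoal]
    have m3 : E τ * U0 τ ≤ (1/100) * U0 τ := mul_le_mul_of_nonneg_right he1 hy
    nlinarith [c1, hA, m3, mul_nonneg he.le hx]
  · push_neg at hcaseA
    obtain ⟨τs, hτs, hB⟩ := hcaseA
    have hτs₀ : τs ≤ τ₀ := le_trans hτs hτ₁τ₀
    have h2a := claim2a τs hτs hB
    by_cases hS : ∀ τ ≤ τs, 10 * E τ * U0 τ < Up τ
    · -- impossible : unstable would dominate, contradicting neutral boundary dominance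
      exfalso
      have hxpos : ∀ τ ≤ τs, 0 < Up τ := fun τ hτ =>
        lt_of_le_of_lt (mul_nonneg (mul_nonneg (by norm_num)
          (hEpos τ (le_trans hτ hτs₀)).le) (hU0nn τ (le_trans hτ hτs₀))) (hS τ hτ)
      have hkey : ∀ τ ≤ τs, E τ * (Up τ + U0 τ + Um τ) ≤ (1/8) * Up τ := by
        intro τ hτ
        have hτ₁'' : τ ≤ τ₁ := le_trans hτ hτs
        have hτ₀'' : τ ≤ τ₀ := le_trans hτ₁'' hτ₁τ₀
        have he := hEpos τ hτ₀''
        have he1 := hEsm τ hτ₁''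
        have hx := hUpnn τ hτ₀''
        have hy := hU0nn τ hτ₀''
        have hz := hUmnn τ hτ₀''
        have c1 := claim1 τ hτ₁''
        have m1 := mul_le_mul_of_nonneg_left c1 he.le
        have m2 : E τ * (E τ * (Up τ + U0 τ)) ≤ (1/100) * (E τ * (Up τ + U0 τ)) :=
          mul_le_mul_of_nonneg_right he1 (mul_nonneg he.le (by linarith))
        have m3 : E τ * Up τ ≤ (1/100) * Up τ := mul_le_mul_of_nonneg_right he1 hx
        nlinarith [m1, m2, m3, hS τ hτ, mul_nonneg he.le hy]
      have hst1 : ∀ τ ≤ τs, 0 ≤ Up τ / 2 - U0 τ := by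
        refine mz_nonneg_of_deriv_nonneg (f' := fun τ => Up' τ / 2 - U0' τ)
          (fun τ hτ => ((hUpderiv τ hτ).div_const 2).sub (hU0deriv τ hτ)) hτs₀ ?_ ?_
        · intro τ hτ
          show 0 ≤ Up' τ / 2 - U0' τ
          have hτ' : τ ≤ τs := hτ.le
          have hτ₀'' : τ ≤ τ₀ := le_trans hτ' hτs₀
          have hk := hkey τ hτ'
          have hx' := h1E τ hτ₀''
          have habs := abs_le.1 (h2E τ hτ₀'')
          linarith [(hxpos τ hτ').le, habs.2]
        · have h30 := (hxlim.div_const 2).sub hylim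
          simpa using h30
      have hst2 : ∀ τ ≤ τs, 0 ≤ 8 * E τ * Up τ - U0 τ := by
        refine mz_nonneg_of_deriv_nonneg
          (f' := fun τ => (8 * E' τ * Up τ + 8 * E τ * Up' τ) - U0' τ)
          (fun τ hτ => (((hEd τ hτ).const_mul 8).mul (hUpderiv τ hτ)).sub
            (hU0deriv τ hτ)) hτs₀ ?_ ?_
        · intro τ hτ
          show 0 ≤ 8 * E' τ * Up τ + 8 * E τ * Up' τ - U0' τ
          have hτ' : τ ≤ τs := hτ.le
          have hτ₁'' : τ ≤ τ₁ := le_trans hτ' hτs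
          have hτ₀'' : τ ≤ τ₀ := le_trans hτ₁'' hτ₁τ₀
          have hk := hkey τ hτ'
          have hx' := h1E τ hτ₀''
          have habs := abs_le.1 (h2E τ hτ₀'')
          have he := hEpos τ hτ₀''
          have he1 := hEsm τ hτ₁''
          have he' := hE'nn τ hτ₀''
          have hx := hUpnn τ hτ₀''
          have hy := hU0nn τ hτ₀''
          have hz := hUmnn τ hτ₀''
          have c1 := claim1 τ hτ₁''
          have hS2x : Up τ + U0 τ + Um τ ≤ 2 * Up τ := by
            have m2 : E τ * (Up τ + U0 τ) ≤ (1/100) * (Up τ + U0 τ) :=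
              mul_le_mul_of_nonneg_right he1 (by linarith)
            linarith [hst1 τ hτ', c1, m2]
          have heS2 : E τ * (Up τ + U0 τ + Um τ) ≤ 2 * (E τ * Up τ) := by
            have h10 := mul_le_mul_of_nonneg_left hS2x he.le
            have h11 : E τ * (2 * Up τ) = 2 * (E τ * Up τ) := by ring
            linarith
          have he2S : E τ * (E τ * (Up τ + U0 τ + Um τ)) ≤ (2/100) * (E τ * Up τ) := by
            have h10 := mul_le_mul_of_nonneg_left heS2 he.le
            have h11 : E τ * (2 * (E τ * Up τ)) = 2 * (E τ * (E τ * Up τ)) := by ring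
            have m5 : E τ * (E τ * Up τ) ≤ (1/100) * (E τ * Up τ) :=
              mul_le_mul_of_nonneg_right he1 (mul_nonneg he.le hx)
            linarith
          have t8 : E τ * Up τ - E τ * (E τ * (Up τ + U0 τ + Um τ)) ≤ E τ * Up' τ := by
            have h10 := mul_le_mul_of_nonneg_left hx' he.le
            have h11 : E τ * (Up τ - E τ * (Up τ + U0 τ + Um τ))
                = E τ * Up τ - E τ * (E τ * (Up τ + U0 τ + Um τ)) := by ring
            linarith
          nlinarith [t8, he2S, heS2, habs.2, mul_nonneg he' hx, mul_nonneg he.le hx]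
        · have hlow : Filter.Tendsto (fun τ => -U0 τ) Filter.atBot (nhds (0:ℝ)) := by
            simpa using hylim.neg
          have hup : Filter.Tendsto (fun τ => (8/100) * Up τ) Filter.atBot (nhds (0:ℝ)) := by
            simpa using hxlim.const_mul (8/100)
          refine tendsto_of_tendsto_of_tendsto_of_le_of_le' hlow hup ?_ ?_
          · filter_upwards [Filter.eventually_le_atBot τ₀] with τ hτ
            have h8E : (0:ℝ) ≤ 8 * E τ := by linarith [(hEpos τ hτ).le]
            have := mul_nonneg h8E (hUpnn τ hτ)
            have := hU0nn τ hτ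
            linarith
          · filter_upwards [Filter.eventually_le_atBot τ₁] with τ hτ
            have hτ₀'' : τ ≤ τ₀ := le_trans hτ hτ₁τ₀
            have h8E : 8 * E τ ≤ 8/100 := by linarith [hEsm τ hτ]
            have := mul_le_mul_of_nonneg_right h8E (hUpnn τ hτ₀'')
            have := hU0nn τ hτ₀''
            linarith
      have h10' := (h2a τs le_rfl).1
      have h8' := hst2 τs le_rfl
      have he := hEpos τs hτs₀
      have hx := hUpnn τs hτs₀
      nlinarith [h10', h8', mul_nonneg he.le hx]
    · -- neutral mode dominant
      push_neg at hS
      obtain ⟨σ₁, hσ₁τs, hσ₁le⟩ := hS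
      have hσ₁τ₀ : σ₁ ≤ τ₀ := le_trans hσ₁τs hτs₀
      have hpers : ∀ τ ≤ σ₁, Up τ ≤ 10 * E τ * U0 τ := by
        intro τh hτh
        by_contra hφ
        push_neg at hφ
        have hτhσ₁ : τh < σ₁ := lt_of_le_of_ne hτh (by rintro rfl; linarith)
        have hφc : ContinuousOn (fun τ => Up τ - 10 * E τ * U0 τ) (Set.Iic τ₀) :=
          hUpc.sub ((continuousOn_const.mul hEc).mul hU0c)
        obtain ⟨σ, hσmem, hσ0, hpos⟩ := mz_crossing_right hφc hσ₁τ₀ hτh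
          (by linarith) (by linarith)
        have hστs : σ ≤ τs := le_trans hσmem.2 hσ₁τs
        have hστ₁ : σ ≤ τ₁ := le_trans hστs hτs
        have hσ₀'' : σ ≤ τ₀ := le_trans hστ₁ hτ₁τ₀
        have hyσ : 0 < U0 σ := (h2a σ hστs).2
        have he := hEpos σ hσ₀''
        have he1 := hEsm σ hστ₁
        have he'le := hE'le σ hσ₀''
        have he' := hE'nn σ hσ₀''
        have hxeq : Up σ = 10 * E σ * U0 σ := by linarith [hσ0]
        have hd : HasDerivWithinAt (fun τ => Up τ - 10 * E τ * U0 τ)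
            (Up' σ - (10 * E' σ * U0 σ + 10 * E σ * U0' σ)) (Set.Iic τ₀) σ :=
          (hUpderiv σ hσ₀'').sub
            (((hEd σ hσ₀'').const_mul 10).mul (hU0deriv σ hσ₀''))
        have hslope : Up' σ - (10 * E' σ * U0 σ + 10 * E σ * U0' σ) ≤ 0 := by
          refine mz_slope_left hd hσmem.1 hσ₀'' ?_
          intro τ hτ
          have h8 := hpos τ hτ
          linarith [hσ0]
        have hx := hUpnn σ hσ₀''
        have hy := hU0nn σ hσ₀''
        have hz := hUmnn σ hσ₀''
        have hx' := h1E σ hσ₀''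
        have habs := abs_le.1 (h2E σ hσ₀'')
        have c1 := claim1 σ hστ₁
        have hSy : Up σ + U0 σ + Um σ ≤ 2 * U0 σ := by
          have m2 : E σ * (Up σ + U0 σ) ≤ (1/100) * (Up σ + U0 σ) :=
            mul_le_mul_of_nonneg_right he1 (by linarith)
          have m3 : E σ * U0 σ ≤ (1/100) * U0 σ := mul_le_mul_of_nonneg_right he1 hy
          linarith [c1, hxeq, m2, m3]
        have heSy : E σ * (Up σ + U0 σ + Um σ) ≤ 2 * (E σ * U0 σ) := by
          have h10 := mul_le_mul_of_nonneg_left hSy he.le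
          have h11 : E σ * (2 * U0 σ) = 2 * (E σ * U0 σ) := by ring
          linarith
        have he2Sy : E σ * (E σ * (Up σ + U0 σ + Um σ)) ≤ (2/100) * (E σ * U0 σ) := by
          have h10 := mul_le_mul_of_nonneg_left heSy he.le
          have h11 : E σ * (2 * (E σ * U0 σ)) = 2 * (E σ * (E σ * U0 σ)) := by ring
          have m5 : E σ * (E σ * U0 σ) ≤ (1/100) * (E σ * U0 σ) :=
            mul_le_mul_of_nonneg_right he1 (mul_nonneg he.le hy)
          linarith
        have t20 : -(E σ * (E σ * (Up σ + U0 σ + Um σ))) ≤ E σ * U0' σ := by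
          have h10 := mul_le_mul_of_nonneg_left habs.1 he.le
          have h11 : E σ * (-(E σ * (Up σ + U0 σ + Um σ)))
              = -(E σ * (E σ * (Up σ + U0 σ + Um σ))) := by ring
          linarith
        have t21 : E' σ * U0 σ ≤ (E σ / 5) * U0 σ :=
          mul_le_mul_of_nonneg_right he'le hy
        nlinarith [hslope, hx', hxeq, heSy, he2Sy, t20, t21, mul_pos he hyσ]
      refine ⟨15 * C₀, σ₁, hσ₁τ₀, Or.inr ?_⟩
      intro τ hτ
      have hττ₁ : τ ≤ τ₁ := le_trans (le_trans hτ hσ₁τs) hτs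
      have hτ₀' : τ ≤ τ₀ := le_trans hττ₁ hτ₁τ₀
      have he := hEpos τ hτ₀'
      have he1 := hEsm τ hττ₁
      have hy := hU0nn τ hτ₀'
      have c1 := claim1 τ hττ₁
      have hp := hpers τ hτ
      have hgoal : 15 * C₀ * (ρ τ)⁻¹ * U0 τ = 15 * (E τ * U0 τ) := by
        simp only [hEdef]; ring
      rw [hgoal]
      have m6 := mul_le_mul_of_nonneg_left hp he.le
      have m7 : E τ * (E τ * U0 τ) ≤ (1/100) * (E τ * U0 τ) :=
        mul_le_mul_of_nonneg_right he1 (mul_nonneg he.le hy)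
      nlinarith [c1, hp, m6, m7, mul_nonneg he.le hy]
end

section
/- Backward-in-time absorption of the stable mode: Let τ₀ ∈ ℝ and let ε̄ : (−∞, τ₀] → (0, 1/100) be differentiable with 0 ≤ ε̄′(τ) ≤ ε̄(τ)/5 for all τ ≤ τ₀. Let U₊, U₀, U₋ : (−∞, τ₀] → [0, ∞) be differentiable with lim_{τ→−∞}(U₊ + U₀ + U₋)(τ) = 0 and satisfying, for all τ ≤ τ₀: U₊′ ≥ U₊ − ε̄(U₊ + U₀ + U₋), |U₀′| ≤ ε̄(U₊ + U₀ + U₋), and U₋′ ≤ −U₋ + ε̄(U₊ + U₀ + U₋). Then U₋(τ) ≤ 2ε̄(τ)(U₊(τ) + U₀(τ)) for all τ ≤ τ₀. -/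
/-- **Backward-in-time absorption of the stable mode** (from the proof of Proposition 2.2).
If `ε̄ : (-∞, τ₀] → (0, 1/100)` is differentiable with `0 ≤ ε̄' ≤ ε̄/5`, and the nonnegative
differentiable functions `U₊, U₀, U₋` tend to `0` at `-∞` and satisfy the Merle–Zaag
differential inequalities with coefficient `ε̄`, then `U₋ ≤ 2ε̄(U₊ + U₀)` on `(-∞, τ₀]`. -/
theorem stable_mode_absorption
    (τ₀ : ℝ) (ε ε' Up Up' U0 U0' Um Um' : ℝ → ℝ)
    (hεpos : ∀ τ ≤ τ₀, 0 < ε τ)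
    (hεlt : ∀ τ ≤ τ₀, ε τ < 1 / 100)
    (hεderiv : ∀ τ ≤ τ₀, HasDerivWithinAt ε (ε' τ) (Set.Iic τ₀) τ)
    (hε'nn : ∀ τ ≤ τ₀, 0 ≤ ε' τ)
    (hε'le : ∀ τ ≤ τ₀, ε' τ ≤ ε τ / 5)
    (hUpnn : ∀ τ ≤ τ₀, 0 ≤ Up τ)
    (hU0nn : ∀ τ ≤ τ₀, 0 ≤ U0 τ)
    (hUmnn : ∀ τ ≤ τ₀, 0 ≤ Um τ)
    (hUpderiv : ∀ τ ≤ τ₀, HasDerivWithinAt Up (Up' τ) (Set.Iic τ₀) τ)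
    (hU0deriv : ∀ τ ≤ τ₀, HasDerivWithinAt U0 (U0' τ) (Set.Iic τ₀) τ)
    (hUmderiv : ∀ τ ≤ τ₀, HasDerivWithinAt Um (Um' τ) (Set.Iic τ₀) τ)
    (hlim : Filter.Tendsto (fun τ => Up τ + U0 τ + Um τ) Filter.atBot (nhds 0))
    (h1 : ∀ τ ≤ τ₀, Up τ - ε τ * (Up τ + U0 τ + Um τ) ≤ Up' τ)
    (h2 : ∀ τ ≤ τ₀, |U0' τ| ≤ ε τ * (Up τ + U0 τ + Um τ))
    (h3 : ∀ τ ≤ τ₀, Um' τ ≤ -Um τ + ε τ * (Up τ + U0 τ + Um τ)) :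
    ∀ τ ≤ τ₀, Um τ ≤ 2 * ε τ * (Up τ + U0 τ) := by
  intro τ₁ hτ₁
  by_contra hcon
  push_neg at hcon
  set f : ℝ → ℝ := fun τ => Um τ - 2 * ε τ * (Up τ + U0 τ) with hfdef
  set g : ℝ → ℝ := fun τ =>
      Um' τ - (2 * ε' τ * (Up τ + U0 τ) + 2 * ε τ * (Up' τ + U0' τ)) with hgdef
  have hfd : ∀ τ ≤ τ₀, HasDerivWithinAt f (g τ) (Set.Iic τ₀) τ := by
    intro τ hτ
    have hmul : HasDerivWithinAt (fun t => 2 * ε t * (Up t + U0 t))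
        (2 * ε' τ * (Up τ + U0 τ) + 2 * ε τ * (Up' τ + U0' τ)) (Set.Iic τ₀) τ := by
      have := ((hεderiv τ hτ).const_mul 2).mul ((hUpderiv τ hτ).add (hU0deriv τ hτ))
      exact this
    exact (hUmderiv τ hτ).sub hmul
  have hcont : ContinuousOn f (Set.Iic τ₀) := fun x hx => (hfd x hx).continuousWithinAt
  have hgneg : ∀ τ ≤ τ₀, 0 < f τ → g τ < 0 := by
    intro τ hτ hpos
    have e1 := h1 τ hτ
    have e2 := (abs_le.mp (h2 τ hτ)).1
    have e3 := h3 τ hτ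
    have e4 := hε'nn τ hτ
    have e5 := hεpos τ hτ
    have e6 := hεlt τ hτ
    have e7 := hUpnn τ hτ
    have e8 := hU0nn τ hτ
    have e9 := hUmnn τ hτ
    simp only [hfdef] at hpos
    simp only [hgdef]
    nlinarith [mul_nonneg e4 (add_nonneg e7 e8),
      mul_le_mul_of_nonneg_left e1 e5.le,
      mul_le_mul_of_nonneg_left e2 e5.le,
      mul_pos e5 (show (0:ℝ) < Um τ by nlinarith [mul_nonneg e5.le (add_nonneg e7 e8)]),
      mul_nonneg e5.le e9, sq_nonneg (ε τ), mul_nonneg (mul_nonneg e5.le e5.le) e9]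
  have hc : 0 < f τ₁ := by simp only [hfdef]; linarith
  have hall : ∀ σ ≤ τ₁, f τ₁ ≤ f σ := by
    intro σ hσ
    by_contra hlt
    push_neg at hlt
    have hστ₀ : σ ≤ τ₀ := hσ.trans hτ₁
    set c' := max (f σ) 0 with hc'
    have hc'lt : c' < f τ₁ := max_lt hlt hc
    set K := {t ∈ Set.Icc σ τ₁ | f t ≤ c'} with hK
    have hKsub : K ⊆ Set.Icc σ τ₁ := fun t ht => ht.1
    have hKne : σ ∈ K := ⟨⟨le_refl σ, hσ⟩, le_max_left _ _⟩
    have hIccsub : Set.Icc σ τ₁ ⊆ Set.Iic τ₀ := fun t ht => ht.2.trans hτ₁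
    have hKclosed : IsClosed K := by
      have : K = Set.Icc σ τ₁ ∩ f ⁻¹' Set.Iic c' := by
        ext t; simp [hK, Set.mem_setOf_eq, and_comm]
      rw [this]
      exact (hcont.mono hIccsub).preimage_isClosed_of_isClosed isClosed_Icc isClosed_Iic
    have hbdd : BddAbove K := (bddAbove_Icc).mono hKsub
    set s := sSup K with hs
    have hsK : s ∈ K := hKclosed.csSup_mem ⟨σ, hKne⟩ hbdd
    have hsτ₁ : s < τ₁ := by
      rcases lt_or_eq_of_le hsK.1.2 with h | h
      · exact h
      · exfalso; rw [h] at hsK; exact absurd hsK.2 (not_le.mpr hc'lt)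
    have hpos : ∀ t ∈ Set.Ioc s τ₁, c' < f t := by
      intro t ht
      by_contra hle
      push_neg at hle
      have htK : t ∈ K := ⟨⟨hsK.1.1.trans ht.1.le, ht.2⟩, hle⟩
      exact absurd (le_csSup hbdd htK) (not_le.mpr ht.1)
    have hanti : StrictAntiOn f (Set.Icc s τ₁) := by
      apply strictAntiOn_of_deriv_neg (convex_Icc s τ₁)
        (hcont.mono (fun t ht => (ht.2.trans hτ₁ : t ≤ τ₀)))
      intro x hx
      rw [interior_Icc] at hx
      have hxτ₀ : x < τ₀ := lt_of_lt_of_le hx.2 hτ₁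
      have hd : HasDerivAt f (g x) x :=
        (hfd x hxτ₀.le).hasDerivAt (Iic_mem_nhds hxτ₀)
      rw [hd.deriv]
      exact hgneg x hxτ₀.le (lt_of_le_of_lt (le_max_right _ 0) (hpos x ⟨hx.1, hx.2.le⟩))
    have hlt2 : f τ₁ < f s :=
      hanti (Set.left_mem_Icc.mpr hsτ₁.le) (Set.right_mem_Icc.mpr hsτ₁.le) hsτ₁
    linarith [hsK.2]
  have hlow : Filter.Tendsto (fun τ => (-(1/50) : ℝ) * (Up τ + U0 τ + Um τ))
      Filter.atBot (nhds 0) := by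
    simpa using hlim.const_mul (-(1/50) : ℝ)
  have hf0 : Filter.Tendsto f Filter.atBot (nhds 0) := by
    apply tendsto_of_tendsto_of_tendsto_of_le_of_le' hlow hlim
    · filter_upwards [Filter.eventually_le_atBot τ₀] with τ hτ
      have e5 := hεpos τ hτ
      have e6 := hεlt τ hτ
      have e7 := hUpnn τ hτ
      have e8 := hU0nn τ hτ
      have e9 := hUmnn τ hτ
      simp only [hfdef]
      nlinarith
    · filter_upwards [Filter.eventually_le_atBot τ₀] with τ hτ
      have e5 := hεpos τ hτ
      have e7 := hUpnn τ hτ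
      have e8 := hU0nn τ hτ
      simp only [hfdef]
      nlinarith
  have hle0 : f τ₁ ≤ 0 := by
    apply ge_of_tendsto hf0
    filter_upwards [Filter.eventually_le_atBot τ₁] with σ hσ
    exact hall σ hσ
  linarith
end

section
/- Neutral-mode bound when the unstable mode dominates: Let τ₀ ∈ ℝ and let ε̄ : (−∞, τ₀] → (0, 1/100) be differentiable with 0 ≤ ε̄′(τ) ≤ ε̄(τ)/5. Let U₊, U₀ : (−∞, τ₀] → [0, ∞) be differentiable with lim_{τ→−∞}U₊(τ) = lim_{τ→−∞}U₀(τ) = 0, satisfying U₊′ ≥ (1/2)U₊ − 2ε̄U₀ and |U₀′| ≤ 2ε̄(U₀ + U₊) on (−∞, τ₀], and suppose in addition that U₊(τ) > 8ε̄(τ)U₀(τ) for all τ ≤ τ₀. Then U₀(τ) ≤ 80 ε̄(τ) U₊(τ) for all τ ≤ τ₀. -/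
open Topology Filter Set

/-- Key comparison lemma: if `W` is differentiable within `Iic τ₀`, its derivative is
negative wherever `W > 0`, and wherever `W` is positive some earlier point has a smaller
value, then `W ≤ 0` on `Iic τ₀`. -/
lemma neutral_mode_key (τ₀ : ℝ) (W W' : ℝ → ℝ)
    (hd : ∀ τ ≤ τ₀, HasDerivWithinAt W (W' τ) (Set.Iic τ₀) τ)
    (hneg : ∀ τ ≤ τ₀, 0 < W τ → W' τ < 0)
    (hsmall : ∀ τ₁, τ₁ ≤ τ₀ → 0 < W τ₁ → ∃ σ, σ < τ₁ ∧ W σ < W τ₁) :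
    ∀ τ ≤ τ₀, W τ ≤ 0 := by
  intro τ₁ hτ₁
  by_contra hpos
  push_neg at hpos
  obtain ⟨σ, hστ, hWσ⟩ := hsmall τ₁ hτ₁ hpos
  have hcont : ContinuousOn W (Set.Icc σ τ₁) := fun x hx =>
    ((hd x (hx.2.trans hτ₁)).continuousWithinAt).mono (fun y hy => hy.2.trans hτ₁)
  set S : Set ℝ := {τ ∈ Set.Icc σ τ₁ | W τ₁ ≤ W τ} with hSdef
  have hSne : S.Nonempty := ⟨τ₁, ⟨hστ.le, le_refl _⟩, le_refl _⟩
  have hSbdd : BddBelow S := ⟨σ, fun x hx => hx.1.1⟩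
  have hSclosed : IsClosed S := by
    have h := hcont.preimage_isClosed_of_isClosed isClosed_Icc (isClosed_Ici (a := W τ₁))
    have he : S = Set.Icc σ τ₁ ∩ W ⁻¹' Set.Ici (W τ₁) := by
      ext x
      simp only [hSdef, Set.mem_setOf_eq, Set.mem_inter_iff, Set.mem_preimage, Set.mem_Ici]
    rw [he]; exact h
  have hmem : sInf S ∈ S := hSclosed.csInf_mem hSne hSbdd
  set a := sInf S with ha
  have haσ : σ < a := by
    rcases lt_or_eq_of_le hmem.1.1 with h | h
    · exact h
    · exact absurd (h ▸ hmem.2) (not_le.mpr hWσ)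
  have haτ₀ : a ≤ τ₀ := hmem.1.2.trans hτ₁
  have hWa : 0 < W a := lt_of_lt_of_le hpos hmem.2
  have hW'a : W' a < 0 := hneg a haτ₀ hWa
  -- points in (σ, a) are not in S, hence W x < W τ₁ ≤ W a
  have hbelow : ∀ x ∈ Set.Ioo σ a, W x < W a := by
    intro x hx
    have hxS : x ∉ S := fun hxS => absurd (csInf_le hSbdd hxS) (not_le.mpr hx.2)
    have hxIcc : x ∈ Set.Icc σ τ₁ := ⟨hx.1.le, hx.2.le.trans hmem.1.2⟩
    have : ¬ W τ₁ ≤ W x := fun h => hxS ⟨hxIcc, h⟩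
    exact lt_of_lt_of_le (not_le.mp this) hmem.2
  -- slope is nonnegative on the left, so W' a ≥ 0
  have hslope : Filter.Tendsto (slope W a) (𝓝[Set.Iic τ₀ \ {a}] a) (𝓝 (W' a)) :=
    hasDerivWithinAt_iff_tendsto_slope.mp (hd a haτ₀)
  have hsub : Set.Ioo σ a ⊆ Set.Iic τ₀ \ {a} := fun x hx =>
    ⟨hx.2.le.trans haτ₀, fun h => absurd (h ▸ hx.2) (lt_irrefl _)⟩
  have hslope' : Filter.Tendsto (slope W a) (𝓝[Set.Ioo σ a] a) (𝓝 (W' a)) :=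
    hslope.mono_left (nhdsWithin_mono a hsub)
  haveI : (𝓝[Set.Ioo σ a] a).NeBot := right_nhdsWithin_Ioo_neBot haσ
  have hge : 0 ≤ W' a := by
    refine ge_of_tendsto hslope' ?_
    filter_upwards [self_mem_nhdsWithin] with x hx
    rw [slope_def_field]
    have h1 : W x - W a < 0 := sub_neg.mpr (hbelow x hx)
    have h2 : x - a < 0 := sub_neg.mpr hx.2
    exact (div_pos_of_neg_of_neg h1 h2).le
  linarith

/-- **Neutral-mode bound when the unstable mode dominates** ('case (2)' in the proof of
Proposition 2.2). If `ε̄ : (-∞, τ₀] → (0, 1/100)` is differentiable with `0 ≤ ε̄' ≤ ε̄/5`,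
`U₊, U₀ ≥ 0` are differentiable with limit `0` at `-∞`, satisfy
`U₊' ≥ (1/2)U₊ - 2ε̄U₀` and `|U₀'| ≤ 2ε̄(U₀ + U₊)`, and `U₊ > 8ε̄U₀` on `(-∞, τ₀]`,
then `U₀ ≤ 80 ε̄ U₊` on `(-∞, τ₀]`. -/
theorem neutral_mode_bound_when_unstable_dominant
    (τ₀ : ℝ) (ε ε' Up Up' U0 U0' : ℝ → ℝ)
    (hεpos : ∀ τ ≤ τ₀, 0 < ε τ)
    (hεlt : ∀ τ ≤ τ₀, ε τ < 1 / 100)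
    (hεderiv : ∀ τ ≤ τ₀, HasDerivWithinAt ε (ε' τ) (Set.Iic τ₀) τ)
    (hε'nn : ∀ τ ≤ τ₀, 0 ≤ ε' τ)
    (hε'le : ∀ τ ≤ τ₀, ε' τ ≤ ε τ / 5)
    (hUpnn : ∀ τ ≤ τ₀, 0 ≤ Up τ)
    (hU0nn : ∀ τ ≤ τ₀, 0 ≤ U0 τ)
    (hUpderiv : ∀ τ ≤ τ₀, HasDerivWithinAt Up (Up' τ) (Set.Iic τ₀) τ)
    (hU0deriv : ∀ τ ≤ τ₀, HasDerivWithinAt U0 (U0' τ) (Set.Iic τ₀) τ)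
    (hUplim : Filter.Tendsto Up Filter.atBot (nhds 0))
    (hU0lim : Filter.Tendsto U0 Filter.atBot (nhds 0))
    (h1 : ∀ τ ≤ τ₀, (1 / 2) * Up τ - 2 * ε τ * U0 τ ≤ Up' τ)
    (h2 : ∀ τ ≤ τ₀, |U0' τ| ≤ 2 * ε τ * (U0 τ + Up τ))
    (hdom : ∀ τ ≤ τ₀, 8 * ε τ * U0 τ < Up τ) :
    ∀ τ ≤ τ₀, U0 τ ≤ 80 * ε τ * Up τ := by
  have hU0' : ∀ τ ≤ τ₀, U0' τ ≤ 2 * ε τ * (U0 τ + Up τ) := fun τ hτ =>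
    (abs_le.mp (h2 τ hτ)).2
  -- Stage 1: U0 ≤ 2 Up on Iic τ₀
  have stage1 : ∀ τ ≤ τ₀, U0 τ - 2 * Up τ ≤ 0 := by
    apply neutral_mode_key τ₀ (fun τ => U0 τ - 2 * Up τ) (fun τ => U0' τ - 2 * Up' τ)
    · intro τ hτ
      exact (hU0deriv τ hτ).sub ((hUpderiv τ hτ).const_mul 2)
    · intro τ hτ hWpos
      have hU0p : 0 < U0 τ := by
        have := hUpnn τ hτ; linarith
      have hεp := hεpos τ hτ
      have hUpp : 0 < Up τ :=
        lt_trans (by positivity) (hdom τ hτ)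
      have hεUp : ε τ * Up τ < (1/100) * Up τ :=
        mul_lt_mul_of_pos_right (hεlt τ hτ) hUpp
      have hd := hdom τ hτ
      have hA := hU0' τ hτ
      have hB := h1 τ hτ
      nlinarith
    · intro τ₁ hτ₁ hWpos
      have hev : ∀ᶠ σ in Filter.atBot, U0 σ < U0 τ₁ - 2 * Up τ₁ ∧ σ < τ₁ := by
        filter_upwards [hU0lim.eventually (gt_mem_nhds hWpos), Filter.eventually_lt_atBot τ₁]
          with σ h h'
        exact ⟨h, h'⟩
      obtain ⟨σ, hσ1, hσ2⟩ := hev.exists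
      refine ⟨σ, hσ2, ?_⟩
      have hUpσ : 0 ≤ Up σ := hUpnn σ (hσ2.le.trans hτ₁)
      linarith
  -- Stage 2: U0 ≤ 80 ε Up on Iic τ₀
  have stage2 : ∀ τ ≤ τ₀, U0 τ - 80 * (ε τ * Up τ) ≤ 0 := by
    apply neutral_mode_key τ₀ (fun τ => U0 τ - 80 * (ε τ * Up τ))
      (fun τ => U0' τ - 80 * (ε' τ * Up τ + ε τ * Up' τ))
    · intro τ hτ
      exact (hU0deriv τ hτ).sub (((hεderiv τ hτ).mul (hUpderiv τ hτ)).const_mul 80)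
    · intro τ hτ hWpos
      have hεp := hεpos τ hτ
      have hU0p : 0 < U0 τ := by
        have h := hUpnn τ hτ
        nlinarith
      have hUpp : 0 < Up τ := lt_trans (by positivity) (hdom τ hτ)
      have hs1 : U0 τ ≤ 2 * Up τ := by have := stage1 τ hτ; linarith
      have hB : (1 / 2) * Up τ - 2 * ε τ * U0 τ ≤ Up' τ := h1 τ hτ
      have hB' : 80 * ε τ * ((1 / 2) * Up τ - 2 * ε τ * U0 τ) ≤ 80 * ε τ * Up' τ :=
        mul_le_mul_of_nonneg_left hB (by positivity)
      have hA := hU0' τ hτ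
      have hε'Up : 0 ≤ ε' τ * Up τ := mul_nonneg (hε'nn τ hτ) hUpp.le
      have hεU0 : ε τ * U0 τ ≤ ε τ * (2 * Up τ) := mul_le_mul_of_nonneg_left hs1 hεp.le
      have hεsq : ε τ * (ε τ * Up τ) ≤ (1/100) * (ε τ * Up τ) :=
        mul_le_mul_of_nonneg_right (hεlt τ hτ).le (by positivity)
      have hεUpp : 0 < ε τ * Up τ := by positivity
      nlinarith
    · intro τ₁ hτ₁ hWpos
      have hev : ∀ᶠ σ in Filter.atBot,
          U0 σ < U0 τ₁ - 80 * (ε τ₁ * Up τ₁) ∧ σ < τ₁ := by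
        filter_upwards [hU0lim.eventually (gt_mem_nhds hWpos), Filter.eventually_lt_atBot τ₁]
          with σ h h'
        exact ⟨h, h'⟩
      obtain ⟨σ, hσ1, hσ2⟩ := hev.exists
      refine ⟨σ, hσ2, ?_⟩
      have hσ₀ : σ ≤ τ₀ := hσ2.le.trans hτ₁
      have : 0 ≤ ε σ * Up σ := mul_nonneg (hεpos σ hσ₀).le (hUpnn σ hσ₀)
      linarith
  intro τ hτ
  have := stage2 τ hτ
  linarith [this]
end

section
/- Almost non-upward quadratic bending estimate: Let β > 0, k ≥ 1, ε ∈ (0, 1], and τ₀ ∈ ℝ. Let λ₁, …, λ_k : (−∞, τ₀] → ℝ be continuously differentiable functions with lim_{τ→−∞}λᵢ(τ) = 0 for each i, with Σ_{j=1}^{k} λⱼ(τ)² > 0 for every τ ≤ τ₀, and satisfying |λᵢ′(τ) + β⁻¹λᵢ(τ)²| < (ε²/(4βk)) Σ_{j=1}^{k} λⱼ(τ)² for every i and every τ ≤ τ₀. Then max_{1≤i≤k} λᵢ(τ) + ε · min_{1≤i≤k} λᵢ(τ) < 0 for every τ ≤ τ₀. -/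
open Set Filter Finset Topology
set_option maxHeartbeats 1000000

lemma my_inf'_neg {ι : Type*} (s : Finset ι) (H : s.Nonempty) (f : ι → ℝ) :
    s.inf' H (fun i => -f i) = -(s.sup' H f) := by
  apply le_antisymm
  · obtain ⟨i, hi, hieq⟩ := Finset.exists_mem_eq_sup' H f
    calc s.inf' H (fun i => -f i) ≤ -f i := Finset.inf'_le _ hi
    _ = -(s.sup' H f) := by rw [hieq]
  · exact Finset.le_inf' _ _ fun i hi => neg_le_neg (Finset.le_sup' f hi)

lemma my_sup'_neg {ι : Type*} (s : Finset ι) (H : s.Nonempty) (f : ι → ℝ) :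
    s.sup' H (fun i => -f i) = -(s.inf' H f) := by
  apply le_antisymm
  · exact Finset.sup'_le _ _ fun i hi => neg_le_neg (Finset.inf'_le f hi)
  · obtain ⟨i, hi, hieq⟩ := Finset.exists_mem_eq_inf' H f
    calc -(s.inf' H f) = -f i := by rw [hieq]
    _ ≤ s.sup' H (fun i => -f i) := Finset.le_sup' (fun i => -f i) hi

/-- Core slope-control lemma: right Dini slope of `inf' μ + ε * sup' μ` is controlled by
derivative values at argmin/argmax indices. -/
lemma slope_control {k : ℕ} (ne : (Finset.univ : Finset (Fin k)).Nonempty)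
    (s₀ : ℝ) (μ : Fin k → ℝ → ℝ) (d : Fin k → ℝ) (ε : ℝ) (hε0 : 0 < ε)
    (x : ℝ) (hx : s₀ ≤ x)
    (hder : ∀ i, HasDerivWithinAt (μ i) (d i) (Set.Ici s₀) x)
    (p q r : ℝ)
    (hp : ∃ i, (∀ i', μ i x ≤ μ i' x) ∧ d i ≤ p)
    (hq : ∀ j, (∀ j', μ j' x ≤ μ j x) → d j ≤ q)
    (hr : p + ε * q < r) :
    ∀ᶠ z in 𝓝[>] x, slope (fun s => (Finset.univ.inf' ne fun i => μ i s)
      + ε * (Finset.univ.sup' ne fun i => μ i s)) x z < r := by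
  set F : ℝ → ℝ := fun s => Finset.univ.inf' ne fun i => μ i s with hF
  set H : ℝ → ℝ := fun s => Finset.univ.sup' ne fun i => μ i s with hHdef
  set η : ℝ := (r - (p + ε * q)) / (2 * (1 + ε)) with hη
  have hηpos : 0 < η := by
    apply div_pos (by linarith) (by linarith)
  have hle : 𝓝[>] x ≤ 𝓝[Set.Ici s₀ \ {x}] x := by
    apply nhdsWithin_mono
    intro z hz
    exact ⟨le_trans hx (le_of_lt hz), ne_of_gt hz⟩
  have Eslope : ∀ i : Fin k, ∀ᶠ z in 𝓝[>] x, slope (μ i) x z < d i + η := by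
    intro i
    have h1 := (hasDerivWithinAt_iff_tendsto_slope.1 (hder i)).mono_left hle
    exact h1.eventually_lt_const (by linarith)
  obtain ⟨j₀, -, hj₀⟩ := Finset.exists_mem_eq_sup' ne (fun j => μ j x)
  have hj₀max : ∀ j', μ j' x ≤ μ j₀ x := fun j' => hj₀ ▸ Finset.le_sup' (fun j => μ j x) (Finset.mem_univ j')
  have Estab : ∀ᶠ z in 𝓝[>] x, ∀ j, ¬(∀ j', μ j' x ≤ μ j x) → μ j z < μ j₀ z := by
    rw [Filter.eventually_all]
    intro j
    by_cases hj : ∀ j', μ j' x ≤ μ j x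
    · exact Filter.Eventually.of_forall fun z hcon => absurd hj hcon
    · push_neg at hj
      obtain ⟨j', hj'⟩ := hj
      have hlt : μ j x < μ j₀ x := lt_of_lt_of_le hj' (hj₀max j')
      have c1 : ContinuousWithinAt (fun z => μ j₀ z - μ j z) (Set.Ici s₀) x :=
        ((hder j₀).continuousWithinAt).sub ((hder j).continuousWithinAt)
      have c2 : Tendsto (fun z => μ j₀ z - μ j z) (𝓝[>] x) (𝓝 (μ j₀ x - μ j x)) :=
        c1.mono_left (nhdsWithin_mono x (fun z hz => le_trans hx (le_of_lt hz)))
      have := c2.eventually_const_lt (show (0:ℝ) < μ j₀ x - μ j x by linarith)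
      exact this.mono fun z hz _ => by linarith
  obtain ⟨i₀, hi₀min, hi₀d⟩ := hp
  have Eall : ∀ᶠ z in 𝓝[>] x, ∀ j : Fin k, slope (μ j) x z < d j + η :=
    Filter.eventually_all.2 Eslope
  filter_upwards [self_mem_nhdsWithin, Eall, Estab] with z hz hall hstab
  have hxz : (0:ℝ) < z - x := by simpa using sub_pos.2 (show x < z from hz)
  have slope_mul : ∀ j : Fin k, μ j z - μ j x < (d j + η) * (z - x) := by
    intro j
    have := hall j
    rw [slope_def_field, div_lt_iff₀ hxz] at this
    exact this
  -- bound on F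
  have hFz : F z ≤ μ i₀ z := Finset.inf'_le _ (Finset.mem_univ i₀)
  have hFx : μ i₀ x ≤ F x := Finset.le_inf' _ _ fun i' _ => hi₀min i'
  have hFbound : F z - F x < (p + η) * (z - x) := by
    have h1 : F z - F x ≤ μ i₀ z - μ i₀ x := by linarith
    have h2 := slope_mul i₀
    have h3 : (d i₀ + η) * (z - x) ≤ (p + η) * (z - x) :=
      mul_le_mul_of_nonneg_right (by linarith) (le_of_lt hxz)
    linarith
  -- bound on H
  have hHbound : H z - H x < (q + η) * (z - x) := by
    obtain ⟨jz, -, hjz⟩ := Finset.exists_mem_eq_sup' ne (fun j => μ j z)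
    have hHxj₀ : H x = μ j₀ x := hj₀
    by_cases hcase : ∀ j', μ j' x ≤ μ jz x
    · have hHx : H x = μ jz x :=
        le_antisymm (Finset.sup'_le _ _ fun j' _ => hcase j') (Finset.le_sup' (fun j' => μ j' x) (Finset.mem_univ jz))
      have h2 := slope_mul jz
      have h3 : (d jz + η) * (z - x) ≤ (q + η) * (z - x) :=
        mul_le_mul_of_nonneg_right (by linarith [hq jz hcase]) (le_of_lt hxz)
      have : H z = μ jz z := hjz
      linarith
    · have h1 : μ jz z < μ j₀ z := hstab jz hcase
      have h2 := slope_mul j₀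
      have h3 : (d j₀ + η) * (z - x) ≤ (q + η) * (z - x) :=
        mul_le_mul_of_nonneg_right (by linarith [hq j₀ hj₀max]) (le_of_lt hxz)
      have : H z = μ jz z := hjz
      linarith
  -- combine
  rw [slope_def_field, div_lt_iff₀ hxz]
  have hεH := mul_lt_mul_of_pos_left hHbound hε0
  have key : (p + η) * (z - x) + ε * ((q + η) * (z - x)) ≤ r * (z - x) := by
    have : p + η + ε * (q + η) ≤ r := by
      have h1 : (2 * (1 + ε)) * η = r - (p + ε * q) := by
        rw [hη]; field_simp
      nlinarith
    nlinarith
  show F z + ε * H z - (F x + ε * H x) < r * (z - x)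
  linarith


/-- **Almost non-upward quadratic bending estimate** (Claim in the proof of Lemma 3.3).
If continuously differentiable functions `λ₁, …, λ_k` tend to `0` at `-∞`, have
`Σ λⱼ² > 0`, and satisfy `|λᵢ' + β⁻¹λᵢ²| < (ε²/(4βk)) Σ λⱼ²` on `(-∞, τ₀]`, then
`max λᵢ + ε·min λᵢ < 0` on `(-∞, τ₀]`. -/
theorem almost_non_upward_quadratic_bending
    (β : ℝ) (hβ : 0 < β) (k : ℕ) (hk : 0 < k)
    (ε : ℝ) (hε0 : 0 < ε) (hε1 : ε ≤ 1) (τ₀ : ℝ)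
    (lam lam' : Fin k → ℝ → ℝ)
    (hderiv : ∀ i : Fin k, ∀ τ ≤ τ₀, HasDerivWithinAt (lam i) (lam' i τ) (Set.Iic τ₀) τ)
    (hcont : ∀ i : Fin k, ContinuousOn (lam' i) (Set.Iic τ₀))
    (hlim : ∀ i : Fin k, Filter.Tendsto (lam i) Filter.atBot (nhds 0))
    (hpos : ∀ τ ≤ τ₀, 0 < ∑ j : Fin k, (lam j τ) ^ 2)
    (hineq : ∀ i : Fin k, ∀ τ ≤ τ₀,
      |lam' i τ + β⁻¹ * (lam i τ) ^ 2| < ε ^ 2 / (4 * β * k) * ∑ j : Fin k, (lam j τ) ^ 2) :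
    ∀ τ ≤ τ₀,
      (Finset.univ.sup' (Finset.univ_nonempty_iff.mpr ⟨⟨0, hk⟩⟩) fun i => lam i τ)
        + ε * (Finset.univ.inf' (Finset.univ_nonempty_iff.mpr ⟨⟨0, hk⟩⟩) fun i => lam i τ)
        < 0 := by
  classical
  have ne : (Finset.univ : Finset (Fin k)).Nonempty := Finset.univ_nonempty_iff.mpr ⟨⟨0, hk⟩⟩
  intro τ' hτ'
  by_contra hQcon
  push_neg at hQcon
  obtain ⟨Q, hQdef⟩ : ∃ Q : ℝ → ℝ, Q = fun τ =>
      (Finset.univ.sup' ne fun i => lam i τ)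
        + ε * (Finset.univ.inf' ne fun i => lam i τ) := ⟨_, rfl⟩
  have hQ0 : 0 ≤ Q τ' := by rw [hQdef]; exact hQcon
  obtain ⟨μ, hμdef⟩ : ∃ μ : Fin k → ℝ → ℝ, μ = fun i s => -(lam i (-s)) := ⟨_, rfl⟩
  obtain ⟨G, hGdef⟩ : ∃ G : ℝ → ℝ, G = fun s =>
      (Finset.univ.inf' ne fun i => μ i s)
        + ε * (Finset.univ.sup' ne fun i => μ i s) := ⟨_, rfl⟩
  have hGQ : ∀ s, G s = -(Q (-s)) := by
    intro s
    simp only [hGdef, hQdef, hμdef]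
    rw [my_inf'_neg, my_sup'_neg]
    ring
  -- derivatives of μ
  have hμderiv : ∀ i, ∀ x : ℝ, -τ₀ ≤ x →
      HasDerivWithinAt (μ i) (lam' i (-x)) (Set.Ici (-τ₀)) x := by
    intro i x hx
    have h1 : HasDerivWithinAt (lam i) (lam' i (-x)) (Set.Iic τ₀) (-x) :=
      hderiv i (-x) (by linarith)
    have hneg : HasDerivWithinAt (fun s : ℝ => -s) (-1) (Set.Ici (-τ₀)) x :=
      (hasDerivAt_neg x).hasDerivWithinAt
    have hmaps : Set.MapsTo (fun s : ℝ => -s) (Set.Ici (-τ₀)) (Set.Iic τ₀) := by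
      intro z hz
      simp only [Set.mem_Ici] at hz
      simp only [Set.mem_Iic]
      linarith
    have h2 := h1.comp x hneg hmaps
    have h3 := h2.neg
    simp only [hμdef]
    convert h3 using 1
    · rfl
    · rfl
    · rfl
    · ring
  have hμcont : ∀ i, ContinuousOn (μ i) (Set.Ici (-τ₀)) :=
    fun i x hx => (hμderiv i x hx).continuousWithinAt
  have hGcont : ContinuousOn G (Set.Ici (-τ₀)) := by
    rw [hGdef]
    apply ContinuousOn.add
    · exact ContinuousOn.finset_inf'_apply ne fun i _ => hμcont i
    · exact continuousOn_const.mul (ContinuousOn.finset_sup'_apply ne fun i _ => hμcont i)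
  -- argmin / argmax index sets for μ
  obtain ⟨AOf, hAdef⟩ : ∃ A : ℝ → Finset (Fin k), A = fun x =>
      Finset.univ.filter (fun i => ∀ i', μ i x ≤ μ i' x) := ⟨_, rfl⟩
  obtain ⟨BOf, hBdef⟩ : ∃ B : ℝ → Finset (Fin k), B = fun x =>
      Finset.univ.filter (fun j => ∀ j', μ j' x ≤ μ j x) := ⟨_, rfl⟩
  have hAne : ∀ x, (AOf x).Nonempty := by
    intro x
    obtain ⟨i, -, hieq⟩ := Finset.exists_mem_eq_inf' ne (fun i => μ i x)
    refine ⟨i, ?_⟩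
    simp only [hAdef, Finset.mem_filter]
    exact ⟨Finset.mem_univ i, fun i' => by
      rw [← hieq]; exact Finset.inf'_le _ (Finset.mem_univ i')⟩
  have hBne : ∀ x, (BOf x).Nonempty := by
    intro x
    obtain ⟨j, -, hjeq⟩ := Finset.exists_mem_eq_sup' ne (fun j => μ j x)
    refine ⟨j, ?_⟩
    simp only [hBdef, Finset.mem_filter]
    exact ⟨Finset.mem_univ j, fun j' => by
      rw [← hjeq]; exact Finset.le_sup' (fun j => μ j x) (Finset.mem_univ j')⟩
  obtain ⟨f', hf'def⟩ : ∃ f' : ℝ → ℝ, f' = fun x =>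
      ((AOf x).inf' (hAne x) fun i => lam' i (-x))
        + ε * ((BOf x).sup' (hBne x) fun j => lam' j (-x)) := ⟨_, rfl⟩
  -- the slope of G is controlled by f'
  have hslope : ∀ x : ℝ, -τ₀ ≤ x → ∀ r, f' x < r →
      ∃ᶠ z in 𝓝[>] x, slope G x z < r := by
    intro x hx r hrf
    rw [hf'def] at hrf
    have hp : ∃ i, (∀ i', μ i x ≤ μ i' x) ∧ lam' i (-x) ≤
        ((AOf x).inf' (hAne x) fun i => lam' i (-x)) := by
      obtain ⟨i, hi, hieq⟩ := Finset.exists_mem_eq_inf' (hAne x) (fun i => lam' i (-x))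
      rw [hAdef] at hi
      simp only [Finset.mem_filter] at hi
      exact ⟨i, hi.2, le_of_eq hieq.symm⟩
    have hq : ∀ j, (∀ j', μ j' x ≤ μ j x) → lam' j (-x) ≤
        ((BOf x).sup' (hBne x) fun j => lam' j (-x)) := by
      intro j hj
      apply Finset.le_sup' (fun j => lam' j (-x))
      rw [hBdef]
      simp only [Finset.mem_filter]
      exact ⟨Finset.mem_univ j, hj⟩
    have hfr := slope_control ne (-τ₀) μ (fun i => lam' i (-x)) ε hε0 x hx
      (fun i => hμderiv i x hx)
      ((AOf x).inf' (hAne x) fun i => lam' i (-x))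
      ((BOf x).sup' (hBne x) fun j => lam' j (-x)) r hp hq hrf
    rw [hGdef]
    exact hfr.frequently
  -- contact estimate: if G x ≤ 0 then f' x < 0
  have contact : ∀ x : ℝ, -τ₀ ≤ x → G x ≤ 0 → f' x < 0 := by
    intro x hx hGx
    have hττ₀ : -x ≤ τ₀ := by linarith
    obtain ⟨M, hMdef⟩ : ∃ M : ℝ, M = Finset.univ.sup' ne fun i => lam i (-x) := ⟨_, rfl⟩
    obtain ⟨m, hmdef⟩ : ∃ m : ℝ, m = Finset.univ.inf' ne fun i => lam i (-x) := ⟨_, rfl⟩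
    have hQx : 0 ≤ M + ε * m := by
      rw [hMdef, hmdef]
      have h1 := hGQ x
      rw [h1] at hGx
      have h2 := neg_nonpos.mp hGx
      rw [hQdef] at h2
      exact h2
    have hlamM : ∀ j, lam j (-x) ≤ M := by
      rw [hMdef]
      exact fun j => Finset.le_sup' (fun j => lam j (-x)) (Finset.mem_univ j)
    have hmlam : ∀ j, m ≤ lam j (-x) := by
      rw [hmdef]
      exact fun j => Finset.inf'_le _ (Finset.mem_univ j)
    have hM0 : 0 < M := by
      rcases lt_or_ge 0 M with h | h
      · exact h
      · exfalso
        have hm0 : 0 ≤ m := by nlinarith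
        have hall : ∀ j, lam j (-x) = 0 := fun j =>
          le_antisymm (le_trans (hlamM j) h) (le_trans hm0 (hmlam j))
        have := hpos (-x) hττ₀
        simp [hall] at this
    have habs : ∀ j, |lam j (-x)| ≤ M / ε := by
      intro j
      rw [abs_le]
      constructor
      · have h1 : -M / ε ≤ m := by
          rw [div_le_iff₀ hε0]
          nlinarith
        have := hmlam j
        rw [neg_div] at h1
        linarith
      · have h2 : M ≤ M / ε := by
          rw [le_div_iff₀ hε0]
          nlinarith
        linarith [hlamM j]
    have hsum : (∑ j : Fin k, (lam j (-x))^2) ≤ k * (M/ε)^2 := by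
      calc (∑ j : Fin k, (lam j (-x))^2) ≤ ∑ _j : Fin k, (M/ε)^2 :=
            Finset.sum_le_sum fun j _ => by
              have h1 := habs j
              have h2 : 0 ≤ |lam j (-x)| := abs_nonneg _
              nlinarith [sq_abs (lam j (-x))]
        _ = k * (M/ε)^2 := by
            rw [Finset.sum_const, Finset.card_univ, Fintype.card_fin, nsmul_eq_mul]
    have hk' : (0:ℝ) < k := by exact_mod_cast hk
    have hδ : ε^2/(4*β*k) * (∑ j : Fin k, (lam j (-x))^2) ≤ M^2/(4*β) := by
      have h1 : ε^2/(4*β*k) * (∑ j : Fin k, (lam j (-x))^2) ≤ ε^2/(4*β*k) * (k * (M/ε)^2) :=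
        mul_le_mul_of_nonneg_left hsum (by positivity)
      have h2 : ε^2/(4*β*k) * (k * (M/ε)^2) = M^2/(4*β) := by
        field_simp
      linarith
    have hmax : ∀ i, (∀ i', μ i x ≤ μ i' x) → lam' i (-x) < -(3/4) * M^2 / β := by
      intro i hi
      have hiM : lam i (-x) = M := by
        refine le_antisymm (hlamM i) ?_
        rw [hMdef]
        apply Finset.sup'_le
        intro i' _
        have := hi i'
        rw [hμdef] at this
        simp only at this
        linarith
      have h1 := hineq i (-x) hττ₀
      have h2 : |lam' i (-x) + β⁻¹ * (lam i (-x))^2| < M^2/(4*β) := lt_of_lt_of_le h1 hδ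
      rw [hiM, abs_lt] at h2
      have heq : -(β⁻¹*M^2) + M^2/(4*β) = -(3/4) * M^2/β := by
        field_simp
        ring
      linarith [h2.2]
    have hmin : ∀ j, (∀ j', μ j' x ≤ μ j x) → lam' j (-x) < M^2/(4*β) := by
      intro j _
      have h1 := hineq j (-x) hττ₀
      have h2 : |lam' j (-x) + β⁻¹ * (lam j (-x))^2| < M^2/(4*β) := lt_of_lt_of_le h1 hδ
      rw [abs_lt] at h2
      have h3 : 0 ≤ β⁻¹ * (lam j (-x))^2 := by positivity
      linarith [h2.2]
    -- assemble
    obtain ⟨i₁, hi₁mem, hi₁eq⟩ := Finset.exists_mem_eq_inf' (hAne x) (fun i => lam' i (-x))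
    obtain ⟨j₁, hj₁mem, hj₁eq⟩ := Finset.exists_mem_eq_sup' (hBne x) (fun j => lam' j (-x))
    rw [hAdef] at hi₁mem
    rw [hBdef] at hj₁mem
    simp only [Finset.mem_filter] at hi₁mem hj₁mem
    have hib := hmax i₁ hi₁mem.2
    have hjb := hmin j₁ hj₁mem.2
    have hMβ : 0 < M^2/(4*β) := by positivity
    have hεsup : ε * ((BOf x).sup' (hBne x) fun j => lam' j (-x)) < M^2/(4*β) := by
      rw [hj₁eq]
      rcases le_or_gt (lam' j₁ (-x)) 0 with h | h
      · exact lt_of_le_of_lt (mul_nonpos_of_nonneg_of_nonpos hε0.le h) hMβ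
      · nlinarith
    have heq2 : -(3/4) * M^2/β + M^2/(4*β) = -(M^2/(2*β)) := by
      field_simp
      ring
    have hMβ2 : 0 < M^2/(2*β) := by positivity
    simp only [hf'def]
    rw [hi₁eq]
    linarith
  -- master comparison lemma: constant nonpositive barriers propagate forward
  have master : ∀ c ≤ (0:ℝ), ∀ a, -τ₀ ≤ a → ∀ b, a ≤ b → G a ≤ c → G b ≤ c := by
    intro c hc a ha b hab hGa
    have hIcc : Set.Icc a b ⊆ Set.Ici (-τ₀) := fun z hz => le_trans ha hz.1
    have hIco : ∀ x ∈ Set.Ico a b, -τ₀ ≤ x := fun x hx => le_trans ha hx.1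
    have hres := image_le_of_liminf_slope_right_lt_deriv_boundary (f := G) (f' := f')
      (hGcont.mono hIcc) (fun x hx r hr => hslope x (hIco x hx) r hr) hGa
      (B := fun _ => c) (B' := fun _ => 0) (fun x => hasDerivAt_const x c)
      (fun x hx hGxc => contact x (hIco x hx) (le_of_eq hGxc |>.trans hc))
    exact hres ⟨hab, le_rfl⟩
  -- Step 1: G(-τ') ≤ 0
  have hs₀ : -τ₀ ≤ -τ' := neg_le_neg hτ'
  have hGs : G (-τ') ≤ 0 := by
    have h1 := hGQ (-τ')
    rw [neg_neg] at h1
    linarith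
  -- Step 2: strict decrease just after -τ' gives a strictly negative value of G
  have hf'neg : f' (-τ') < 0 := contact (-τ') hs₀ hGs
  have hfreq := hslope (-τ') hs₀ (f' (-τ') / 2) (by linarith)
  obtain ⟨z, hz1, hz2⟩ := (hfreq.and_eventually self_mem_nhdsWithin).exists
  have hzgt : -τ' < z := hz2
  have hGz : G z < 0 := by
    have h4 : (0:ℝ) < z - (-τ') := by linarith
    rw [slope_def_field, div_lt_iff₀ h4] at hz1
    have h5 : f' (-τ') / 2 * (z - (-τ')) < 0 :=
      mul_neg_of_neg_of_pos (by linarith) h4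
    linarith
  -- Step 3: G stays below G z forever, i.e. Q τ ≥ -(G z) > 0 for all τ ≤ -z
  have hQbig : ∀ τ ≤ -z, -(G z) ≤ Q τ := by
    intro τ hτ
    have h1 := master (G z) (le_of_lt hGz) z (by linarith) (-τ) (by linarith) le_rfl
    have h2 := hGQ (-τ)
    rw [neg_neg] at h2
    linarith
  -- Step 4: contradiction with lam i → 0 at -∞
  have hc4 : (0:ℝ) < -(G z)/4 := by linarith
  have hev : ∀ᶠ τ in Filter.atBot, (∀ i : Fin k, |lam i τ| < -(G z)/4) ∧ τ ≤ -z := by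
    apply Filter.Eventually.and
    · rw [Filter.eventually_all]
      intro i
      have h := Metric.tendsto_nhds.1 (hlim i) (-(G z)/4) hc4
      refine h.mono fun τ hτ => ?_
      simpa [Real.dist_eq] using hτ
    · exact Filter.eventually_le_atBot (-z)
  obtain ⟨τ, hτall, hτle⟩ := hev.exists
  have hsup : (Finset.univ.sup' ne fun i => lam i τ) ≤ -(G z)/4 :=
    Finset.sup'_le _ _ fun i _ => le_trans (le_abs_self _) (le_of_lt (hτall i))
  have hinf : (Finset.univ.inf' ne fun i => lam i τ) ≤ -(G z)/4 :=
    le_trans (Finset.inf'_le _ (Finset.mem_univ ⟨0, hk⟩))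
      (le_trans (le_abs_self _) (le_of_lt (hτall ⟨0, hk⟩)))
  have hQsmall : Q τ ≤ -(G z)/2 := by
    have h1 : ε * (Finset.univ.inf' ne fun i => lam i τ) ≤ ε * (-(G z)/4) :=
      mul_le_mul_of_nonneg_left hinf hε0.le
    have h2 : ε * (-(G z)/4) ≤ -(G z)/4 := by nlinarith
    rw [hQdef]
    linarith
  have := hQbig τ hτle
  linarith
end

section
/- Exponential lower-bound persistence: Let c′ > 0. There exists σ* < ∞, depending only on c′, with the following property: if σ₁ ≥ σ* and α : [σ₁, ∞) → [0, ∞) is continuously differentiable with α′(σ) ≥ 2α(σ) − c′α(σ)^{3/2} − c′e^{−30σ} for all σ ≥ σ₁, and α(σ₁) ≥ e^{−20σ₁}, then α(σ) ≥ e^{−20σ} for all σ ≥ σ₁. -/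
open Filter Topology


/-- **Exponential lower-bound persistence** (continuity/forward-invariance argument in the
proof of Lemma 3.3). For every `c' > 0` there is `σ*` such that any nonnegative `C¹`
function `α` on `[σ₁, ∞)` with `σ₁ ≥ σ*`, satisfying
`α' ≥ 2α - c'α^{3/2} - c'e^{-30σ}` and `α(σ₁) ≥ e^{-20σ₁}`, satisfies `α(σ) ≥ e^{-20σ}`
for all `σ ≥ σ₁`. -/
theorem exponential_lower_bound_persistence (c' : ℝ) (hc' : 0 < c') :
    ∃ σs : ℝ, ∀ σ₁ : ℝ, σs ≤ σ₁ → ∀ α α' : ℝ → ℝ,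
      (∀ σ, σ₁ ≤ σ → 0 ≤ α σ) →
      (∀ σ, σ₁ ≤ σ → HasDerivWithinAt α (α' σ) (Set.Ici σ₁) σ) →
      ContinuousOn α' (Set.Ici σ₁) →
      (∀ σ, σ₁ ≤ σ →
        2 * α σ - c' * (α σ) ^ ((3 : ℝ) / 2) - c' * Real.exp (-30 * σ) ≤ α' σ) →
      Real.exp (-20 * σ₁) ≤ α σ₁ →
      ∀ σ, σ₁ ≤ σ → Real.exp (-20 * σ) ≤ α σ := by
  refine ⟨max 1 (Real.log c'), ?_⟩
  intro σ₁ hσ₁ α α' hαnn hderiv hcont hineq hinit t ht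
  by_contra hcon
  push_neg at hcon
  set f : ℝ → ℝ := fun σ => α σ - Real.exp (-20 * σ) with hf
  have hfc : ContinuousOn f (Set.Ici σ₁) := by
    apply ContinuousOn.sub
    · exact fun σ hσ => (hderiv σ hσ).continuousWithinAt
    · exact (Real.continuous_exp.comp (continuous_const.mul continuous_id)).continuousOn
  have hft : f t < 0 := sub_neg.mpr hcon
  have hfσ₁ : 0 ≤ f σ₁ := sub_nonneg.mpr hinit
  set A := Set.Icc σ₁ t ∩ f ⁻¹' (Set.Ici (0 : ℝ)) with hA
  have hneA : A.Nonempty := ⟨σ₁, ⟨le_refl _, ht⟩, hfσ₁⟩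
  have hbdd : BddAbove A := ⟨t, fun x hx => hx.1.2⟩
  have hclosed : IsClosed A :=
    (hfc.mono (Set.Icc_subset_Ici_self)).preimage_isClosed_of_isClosed
      isClosed_Icc isClosed_Ici
  set s := sSup A with hs
  have hsmem : s ∈ A := hclosed.csSup_mem hneA hbdd
  have hsσ₁ : σ₁ ≤ s := hsmem.1.1
  have hst' : s ≤ t := hsmem.1.2
  have hfs : 0 ≤ f s := hsmem.2
  have hst : s < t := lt_of_le_of_ne hst' (by intro h; rw [h] at hfs; exact absurd hfs (not_le.mpr hft))
  -- extraction of a point σ ∈ (s, t) with 0 < f σ yields a contradiction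
  have keyA : ∀ σ, s < σ → σ < t → 0 < f σ → False := by
    intro σ h1 h2 h3
    have : σ ∈ A := ⟨⟨hsσ₁.trans h1.le, h2.le⟩, le_of_lt h3⟩
    exact absurd (le_csSup hbdd this) (not_le.mpr h1)
  have hsub : Set.Ioi s ⊆ Set.Ici σ₁ := fun x hx => hsσ₁.trans (le_of_lt hx)
  have hne : (𝓝[>] s).NeBot := nhdsGT_neBot s
  -- In either case we produce eventual positivity of f in 𝓝[>] s
  have hev : ∀ᶠ σ in 𝓝[>] s, 0 < f σ := by
    rcases eq_or_lt_of_le hfs with hfs0 | hfs0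
    · -- f s = 0 : use the differential inequality
      have hαs : α s = Real.exp (-20 * s) := by
        have := hfs0.symm
        simp only [hf, sub_eq_zero] at this
        exact this
      -- derivative of f at s within Ici σ₁
      have hexp : HasDerivAt (fun σ : ℝ => Real.exp (-20 * σ))
          (Real.exp (-20 * s) * (-20)) s := by
        have h1 : HasDerivAt (fun σ : ℝ => -20 * σ) (-20) s := by
          simpa using (hasDerivAt_id s).const_mul (-20 : ℝ)
        exact h1.exp
      have hfd : HasDerivWithinAt f (α' s + 20 * Real.exp (-20 * s)) (Set.Ici σ₁) s := by
        have := (hderiv s hsσ₁).sub (hexp.hasDerivWithinAt (s := Set.Ici σ₁))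
        exact this.congr_deriv (by ring)
      set d := α' s + 20 * Real.exp (-20 * s) with hd
      -- d > 0
      have hsc : c' * Real.exp (-10 * s) ≤ 1 := by
        have h1s : (1 : ℝ) ≤ s := (le_max_left _ _).trans (hσ₁.trans hsσ₁)
        have hls : Real.log c' ≤ s := (le_max_right _ _).trans (hσ₁.trans hsσ₁)
        have e1 : Real.exp (-s) ≤ c'⁻¹ := by
          rw [← Real.exp_log (inv_pos.mpr hc'), Real.log_inv]
          exact Real.exp_le_exp.mpr (neg_le_neg hls)
        have e2 : Real.exp (-9 * s) ≤ 1 := by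
          rw [Real.exp_le_one_iff]
          nlinarith
        have : Real.exp (-10 * s) = Real.exp (-s) * Real.exp (-9 * s) := by
          rw [← Real.exp_add]; ring_nf
        rw [this]
        calc c' * (Real.exp (-s) * Real.exp (-9 * s))
            ≤ c' * (c'⁻¹ * 1) := by
              apply mul_le_mul_of_nonneg_left _ hc'.le
              exact mul_le_mul e1 e2 (Real.exp_pos _).le (inv_pos.mpr hc').le
          _ = 1 := by field_simp
      have hrpow : (Real.exp (-20 * s)) ^ ((3 : ℝ) / 2) = Real.exp (-30 * s) := by
        rw [← Real.exp_mul]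
        ring_nf
      have hds : 0 < d := by
        have h1 := hineq s hsσ₁
        rw [hαs, hrpow] at h1
        have hsplit : Real.exp (-30 * s) = Real.exp (-20 * s) * Real.exp (-10 * s) := by
          rw [← Real.exp_add]; ring_nf
        have hp : 0 < Real.exp (-20 * s) := Real.exp_pos _
        rw [hsplit] at h1
        nlinarith [Real.exp_pos (-10 * s)]
      -- slope of f tends to d > 0 within Ici σ₁ \ {s}; restrict to 𝓝[>] s
      have hslope : Filter.Tendsto (slope f s) (𝓝[>] s) (𝓝 d) := by
        have := hasDerivWithinAt_iff_tendsto_slope.mp hfd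
        exact this.mono_left (nhdsWithin_mono s (by
          intro x hx
          exact ⟨hsub hx, ne_of_gt hx⟩))
      have hev1 : ∀ᶠ σ in 𝓝[>] s, 0 < slope f s σ :=
        hslope.eventually (eventually_gt_nhds hds)
      filter_upwards [hev1, self_mem_nhdsWithin] with σ h1 (h2 : s < σ)
      rw [slope_def_field, ← hfs0, sub_zero] at h1
      have := mul_pos h1 (sub_pos.mpr h2)
      rwa [div_mul_cancel₀ _ (ne_of_gt (sub_pos.mpr h2))] at this
    · -- f s > 0 : use continuity
      have hc : ContinuousWithinAt f (Set.Ici σ₁) s := hfc s hsσ₁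
      have : Filter.Tendsto f (𝓝[>] s) (𝓝 (f s)) :=
        hc.tendsto.mono_left (nhdsWithin_mono s hsub)
      exact this.eventually (eventually_gt_nhds hfs0)
  have hevt : ∀ᶠ σ in 𝓝[>] s, σ < t := by
    have : ∀ᶠ σ in 𝓝 s, σ < t := eventually_lt_nhds hst
    exact this.filter_mono nhdsWithin_le_nhds
  rcases (hev.and (hevt.and self_mem_nhdsWithin)).exists with ⟨σ, h1, h2, h3⟩
  exact keyA σ h3 h2 h1
end

section
/- Riccati dichotomy with quantized limits: Let β > 0, δ > 0, and C > 0. There exists μ > 0, depending only on β, δ and C, with the following property: for every τ₀ < 0 and every continuously differentiable λ : (−∞, τ₀] → ℝ satisfying |λ(τ)| ≤ C/|τ| and |λ′(τ) + β⁻¹λ(τ)²| ≤ C|τ|^{−2−δ} for all τ ≤ τ₀, one of the following two alternatives holds: either there is C′ < ∞ such that |λ(τ) − β/τ| ≤ C′|τ|^{−1−μ} for all τ ≤ τ₀, or there is C′ < ∞ such that |λ(τ)| ≤ C′|τ|^{−1−μ} for all τ ≤ τ₀. -/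
open Set

private lemma riccati_twoPow_deriv (p e₁ q e₂ : ℝ) {x : ℝ} (hx : 0 < x) :
    HasDerivAt (fun s : ℝ => p * s ^ e₁ + q * s ^ e₂)
      (p * (e₁ * x ^ (e₁ - 1)) + q * (e₂ * x ^ (e₂ - 1))) x :=
  ((Real.hasDerivAt_rpow_const (Or.inl hx.ne')).const_mul p).add
    ((Real.hasDerivAt_rpow_const (Or.inl hx.ne')).const_mul q)

private lemma riccati_comp_upper {v vd : ℝ → ℝ} {s₀ a b : ℝ} (hs₀ : 0 < s₀) (ha : s₀ ≤ a)
    (hv : ∀ s, s₀ ≤ s → HasDerivWithinAt v (vd s) (Set.Ici s₀) s)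
    (p e₁ q e₂ : ℝ)
    (hstart : v a ≤ p * a ^ e₁ + q * a ^ e₂)
    (hcontact : ∀ x, a ≤ x → x < b → v x = p * x ^ e₁ + q * x ^ e₂ →
      vd x < p * (e₁ * x ^ (e₁ - 1)) + q * (e₂ * x ^ (e₂ - 1))) :
    ∀ x, a ≤ x → x ≤ b → v x ≤ p * x ^ e₁ + q * x ^ e₂ := by
  intro x hax hxb
  have hC : ContinuousOn v (Icc a b) := by
    intro y hy
    exact ((hv y (ha.trans hy.1)).continuousWithinAt).mono
      (fun z hz => le_trans ha (hz.1 : a ≤ z))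
  have hB : ContinuousOn (fun s : ℝ => p * s ^ e₁ + q * s ^ e₂) (Icc a b) := by
    intro y hy
    exact (riccati_twoPow_deriv p e₁ q e₂ (lt_of_lt_of_le hs₀ (ha.trans hy.1))).continuousAt.continuousWithinAt
  exact image_le_of_deriv_right_lt_deriv_boundary' hC
    (fun y hy => ((hv y (ha.trans hy.1)).mono (Ici_subset_Ici.2 (ha.trans hy.1))))
    hstart hB
    (fun y hy => (riccati_twoPow_deriv p e₁ q e₂
      (lt_of_lt_of_le hs₀ (ha.trans hy.1))).hasDerivWithinAt)
    (fun y hy => hcontact y hy.1 hy.2) ⟨hax, hxb⟩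

private lemma riccati_comp_lower {v vd : ℝ → ℝ} {s₀ a b : ℝ} (hs₀ : 0 < s₀) (ha : s₀ ≤ a)
    (hv : ∀ s, s₀ ≤ s → HasDerivWithinAt v (vd s) (Set.Ici s₀) s)
    (p e₁ q e₂ : ℝ)
    (hstart : p * a ^ e₁ + q * a ^ e₂ ≤ v a)
    (hcontact : ∀ x, a ≤ x → x < b → v x = p * x ^ e₁ + q * x ^ e₂ →
      p * (e₁ * x ^ (e₁ - 1)) + q * (e₂ * x ^ (e₂ - 1)) < vd x) :
    ∀ x, a ≤ x → x ≤ b → p * x ^ e₁ + q * x ^ e₂ ≤ v x := by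
  intro x hax hxb
  have := riccati_comp_upper (v := fun s => -v s) (vd := fun s => -vd s) hs₀ ha
    (fun s hs => (hv s hs).neg) (-p) e₁ (-q) e₂ (by simp only [neg_mul]; linarith)
    (fun y hay hyb hc => by
      have hc' : v y = p * y ^ e₁ + q * y ^ e₂ := by
        simp only [neg_mul] at hc; linarith
      have := hcontact y hay hyb hc'
      simp only [neg_mul]; linarith)
    x hax hxb
  simp only [neg_mul] at this; linarith

set_option maxHeartbeats 1000000 in
private lemma riccati_caseA (δ : ℝ) (hδ : 0 < δ)
    (μ : ℝ) (hμpos : 0 < μ) (hμδ : μ ≤ δ) (hμ4 : μ ≤ 1/4)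
    (s₀ : ℝ) (hs₀ : 0 < s₀)
    (K : ℝ) (hK : 0 < K)
    (v vd : ℝ → ℝ)
    (hv : ∀ s, s₀ ≤ s → HasDerivWithinAt v (vd s) (Set.Ici s₀) s)
    (hvK : ∀ s, s₀ ≤ s → |v s| ≤ K)
    (herr : ∀ s, s₀ ≤ s → |vd s - v s * (1 - v s) / s| ≤ K * s ^ (-1 - δ : ℝ))
    (hcase : ∀ T : ℝ, ∃ s, T ≤ s ∧ s₀ ≤ s ∧ 1/2 ≤ v s) :
    ∃ S A : ℝ, 1 ≤ S ∧ s₀ ≤ S ∧ 0 ≤ A ∧ ∀ s, S ≤ s → |v s - 1| ≤ A * s ^ (-μ) := by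
  have hspos : ∀ s : ℝ, s₀ ≤ s → 0 < s := fun s hs => lt_of_lt_of_le hs₀ hs
  have hS₂ : ∀ x : ℝ, max 1 ((8*K+1) ^ (δ⁻¹)) ≤ x → K * x ^ (-δ) < 1/8 := by
    intro x hx
    have hx1 : (1:ℝ) ≤ x := le_trans (le_max_left _ _) hx
    have hxp : (0:ℝ) < x := by linarith
    have h8 : (0:ℝ) < 8*K+1 := by linarith
    have hxd : (8*K+1) ≤ x ^ δ := by
      have h1 : ((8*K+1) ^ (δ⁻¹)) ^ δ ≤ x ^ δ :=
        Real.rpow_le_rpow (Real.rpow_nonneg h8.le _)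
          (le_trans (le_max_right _ _) hx) hδ.le
      rw [← Real.rpow_mul h8.le, inv_mul_cancel₀ hδ.ne', Real.rpow_one] at h1
      exact h1
    have hxdpos : (0:ℝ) < x ^ δ := Real.rpow_pos_of_pos hxp _
    rw [Real.rpow_neg hxp.le]
    calc K * (x ^ δ)⁻¹ ≤ K * (8*K+1)⁻¹ := by
          refine mul_le_mul_of_nonneg_left ?_ hK.le
          exact inv_anti₀ h8 hxd
      _ < 1/8 := by rw [← div_eq_mul_inv, div_lt_iff₀ h8]; linarith
  obtain ⟨s₁, hs₁T, hs₁s₀, hvs₁⟩ := hcase (max s₀ (max 1 ((8*K+1) ^ (δ⁻¹))))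
  have hs₁S₂ : max 1 ((8*K+1) ^ (δ⁻¹)) ≤ s₁ := le_trans (le_max_right _ _) hs₁T
  have hs₁1 : (1:ℝ) ≤ s₁ := le_trans (le_max_left _ _) hs₁S₂
  have hs₁p : (0:ℝ) < s₁ := by linarith
  -- trapping
  have htrap : ∀ s, s₁ ≤ s → 1/2 ≤ v s := by
    intro s hs
    have key := riccati_comp_lower hs₀ hs₁s₀ hv (1/2) 0 0 0
      (by rw [Real.rpow_zero]; linarith)
      (fun x hax hxb hc => by
        have hxs₀ : s₀ ≤ x := le_trans hs₁s₀ hax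
        have hxp := hspos x hxs₀
        rw [Real.rpow_zero] at hc
        have hc' : v x = 1/2 := by linarith
        have he := (abs_le.mp (herr x hxs₀)).1
        have hxd : x ^ (-1-δ:ℝ) = x^(-δ:ℝ) * x⁻¹ := by
          rw [show (-1-δ:ℝ) = -δ + -1 by ring, Real.rpow_add hxp, Real.rpow_neg_one]
        have hS := hS₂ x (le_trans hs₁S₂ hax)
        have hxinv : (0:ℝ) < x⁻¹ := inv_pos.2 hxp
        have h4 : v x * (1 - v x) / x = (1/4) * x⁻¹ := by
          rw [hc']; ring
        have hmul := mul_lt_mul_of_pos_right hS hxinv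
        simp only [zero_mul, mul_zero, add_zero, zero_add]
        rw [hxd, h4] at he
        nlinarith [he, hmul, hxinv]) s hs le_rfl
    rw [Real.rpow_zero] at key; linarith
  -- rate constant
  obtain ⟨A₁, hA₁def⟩ : ∃ A, A = max (4*K+1) ((K+2) * s₁ ^ μ) := ⟨_, rfl⟩
  have hA₁K : 4*K+1 ≤ A₁ := hA₁def ▸ le_max_left _ _
  have hA₁pos : (0:ℝ) < A₁ := lt_of_lt_of_le (by linarith) hA₁K
  have hcanc : s₁ ^ μ * s₁ ^ (-μ) = 1 := by
    rw [← Real.rpow_add hs₁p]; simp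
  have hA₁start : K + 2 ≤ A₁ * s₁ ^ (-μ) := by
    have h1 : (K+2) * s₁ ^ μ * s₁ ^ (-μ) ≤ A₁ * s₁ ^ (-μ) :=
      mul_le_mul_of_nonneg_right (hA₁def ▸ le_max_right _ _)
        (Real.rpow_pos_of_pos hs₁p _).le
    rw [mul_assoc, hcanc, mul_one] at h1; exact h1
  -- upper rate
  have hup : ∀ s, s₁ ≤ s → v s ≤ 1 + A₁ * s ^ (-μ) := by
    intro s hs
    have key := riccati_comp_upper hs₀ hs₁s₀ hv 1 0 A₁ (-μ)
      (by
        rw [Real.rpow_zero, one_mul]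
        have := (abs_le.mp (hvK s₁ hs₁s₀)).2
        linarith)
      (fun x hax hxb hc => by
        have hxs₀ : s₀ ≤ x := le_trans hs₁s₀ hax
        have hxp := hspos x hxs₀
        have hx1 : (1:ℝ) ≤ x := le_trans hs₁1 hax
        rw [Real.rpow_zero, one_mul] at hc
        obtain ⟨P, hPdef⟩ : ∃ P:ℝ, P = x ^ (-μ) := ⟨_, rfl⟩
        have hPpos : (0:ℝ) < P := hPdef ▸ Real.rpow_pos_of_pos hxp _
        have hxinv : (0:ℝ) < x⁻¹ := inv_pos.2 hxp
        have he := (abs_le.mp (herr x hxs₀)).2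
        have hmono : x ^ (-1-δ:ℝ) ≤ x ^ (-1-μ:ℝ) :=
          Real.rpow_le_rpow_of_exponent_le hx1 (by linarith)
        have hxm : x ^ (-1-μ:ℝ) = P * x⁻¹ := by
          rw [hPdef, show (-1-μ:ℝ) = -μ + -1 by ring, Real.rpow_add hxp, Real.rpow_neg_one]
        have hxm' : x ^ (-μ-1:ℝ) = P * x⁻¹ := by
          rw [hPdef, show (-μ-1:ℝ) = -μ + -1 by ring, Real.rpow_add hxp, Real.rpow_neg_one]
        rw [← hPdef] at hc
        have hKx : K * x ^ (-1-δ:ℝ) ≤ K * (P * x⁻¹) := by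
          rw [← hxm]; exact mul_le_mul_of_nonneg_left hmono hK.le
        have hvv : v x * (1 - v x) / x ≤ -(A₁ * P) * x⁻¹ := by
          rw [hc, div_eq_mul_inv]
          refine mul_le_mul_of_nonneg_right ?_ hxinv.le
          nlinarith [mul_pos hA₁pos hPpos, sq_nonneg (A₁ * P)]
        simp only [zero_mul, mul_zero, add_zero, zero_add, one_mul]
        rw [hxm']
        have hfin : vd x ≤ -(A₁ * P) * x⁻¹ + K * (P * x⁻¹) := by linarith
        have h5 : (0:ℝ) < (A₁ * (1 - μ) - K) * (P * x⁻¹) := by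
          refine mul_pos ?_ (mul_pos hPpos hxinv)
          nlinarith
        nlinarith [hfin, h5]) s hs le_rfl
    rw [Real.rpow_zero, one_mul] at key; exact key
  -- lower rate
  have hlo : ∀ s, s₁ ≤ s → 1 - A₁ * s ^ (-μ) ≤ v s := by
    intro s hs
    have key := riccati_comp_lower hs₀ hs₁s₀ hv 1 0 (-A₁) (-μ)
      (by
        rw [Real.rpow_zero, one_mul]
        nlinarith [hA₁start])
      (fun x hax hxb hc => by
        have hxs₀ : s₀ ≤ x := le_trans hs₁s₀ hax
        have hxp := hspos x hxs₀
        have hx1 : (1:ℝ) ≤ x := le_trans hs₁1 hax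
        rw [Real.rpow_zero, one_mul] at hc
        obtain ⟨P, hPdef⟩ : ∃ P:ℝ, P = x ^ (-μ) := ⟨_, rfl⟩
        have hPpos : (0:ℝ) < P := hPdef ▸ Real.rpow_pos_of_pos hxp _
        have hxinv : (0:ℝ) < x⁻¹ := inv_pos.2 hxp
        have he := (abs_le.mp (herr x hxs₀)).1
        have hmono : x ^ (-1-δ:ℝ) ≤ x ^ (-1-μ:ℝ) :=
          Real.rpow_le_rpow_of_exponent_le hx1 (by linarith)
        have hxm : x ^ (-1-μ:ℝ) = P * x⁻¹ := by
          rw [hPdef, show (-1-μ:ℝ) = -μ + -1 by ring, Real.rpow_add hxp, Real.rpow_neg_one]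
        have hxm' : x ^ (-μ-1:ℝ) = P * x⁻¹ := by
          rw [hPdef, show (-μ-1:ℝ) = -μ + -1 by ring, Real.rpow_add hxp, Real.rpow_neg_one]
        rw [← hPdef] at hc
        have hhalf : 1/2 ≤ v x := htrap x hax
        have hAP : A₁ * P ≤ 1/2 := by rw [hc] at hhalf; linarith
        have hKx : K * x ^ (-1-δ:ℝ) ≤ K * (P * x⁻¹) := by
          rw [← hxm]; exact mul_le_mul_of_nonneg_left hmono hK.le
        have hvv : (A₁ * P / 2) * x⁻¹ ≤ v x * (1 - v x) / x := by
          rw [hc, div_eq_mul_inv]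
          refine mul_le_mul_of_nonneg_right ?_ hxinv.le
          nlinarith [mul_pos hA₁pos hPpos]
        simp only [zero_mul, mul_zero, add_zero, zero_add, one_mul]
        rw [hxm']
        have hfin : (A₁ * P / 2) * x⁻¹ - K * (P * x⁻¹) ≤ vd x := by linarith
        have h5 : (0:ℝ) < (A₁ * (1/2 - μ) - K) * (P * x⁻¹) := by
          refine mul_pos ?_ (mul_pos hPpos hxinv)
          nlinarith
        nlinarith [hfin, h5]) s hs le_rfl
    rw [Real.rpow_zero, one_mul] at key; linarith
  refine ⟨s₁, A₁, hs₁1, hs₁s₀, hA₁pos.le, fun s hs => abs_le.2 ⟨?_, ?_⟩⟩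
  · have := hlo s hs; linarith
  · have := hup s hs; linarith

set_option maxHeartbeats 1000000 in
private lemma riccati_caseB (δ : ℝ) (hδ : 0 < δ)
    (μ : ℝ) (hμpos : 0 < μ) (hμδ : μ ≤ δ) (hμ4 : μ ≤ 1/4)
    (s₀ : ℝ) (hs₀ : 0 < s₀)
    (K : ℝ) (hK : 0 < K)
    (v vd : ℝ → ℝ)
    (hv : ∀ s, s₀ ≤ s → HasDerivWithinAt v (vd s) (Set.Ici s₀) s)
    (hvK : ∀ s, s₀ ≤ s → |v s| ≤ K)
    (herr : ∀ s, s₀ ≤ s → |vd s - v s * (1 - v s) / s| ≤ K * s ^ (-1 - δ : ℝ))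
    (T : ℝ) (hcaseB : ∀ s, T ≤ s → s₀ ≤ s → v s < 1/2) :
    ∃ S A : ℝ, 1 ≤ S ∧ s₀ ≤ S ∧ 0 ≤ A ∧ ∀ s, S ≤ s → |v s| ≤ A * s ^ (-μ) := by
  have hspos : ∀ s : ℝ, s₀ ≤ s → 0 < s := fun s hs => lt_of_lt_of_le hs₀ hs
  obtain ⟨c₁, hc₁def⟩ : ∃ c:ℝ, c = (K+1)/(1+δ) := ⟨_, rfl⟩
  obtain ⟨c₂, hc₂def⟩ : ∃ c:ℝ, c = (K+1)/(1/2+δ) := ⟨_, rfl⟩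
  have hc₁pos : 0 < c₁ := by rw [hc₁def]; positivity
  have hc₂pos : 0 < c₂ := by rw [hc₂def]; positivity
  have hc₁mul : c₁ * (1+δ) = K+1 := by rw [hc₁def]; field_simp
  have hc₂mul : c₂ * (1/2+δ) = K+1 := by
    rw [hc₂def]; field_simp
  obtain ⟨A₂, hA₂def⟩ : ∃ A:ℝ, A = max (c₁+1) (c₂+1) := ⟨_, rfl⟩
  have hA₂c₁ : c₁+1 ≤ A₂ := hA₂def ▸ le_max_left _ _
  have hA₂c₂ : c₂+1 ≤ A₂ := hA₂def ▸ le_max_right _ _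
  have hA₂pos : 0 < A₂ := by linarith
  refine ⟨max (max T s₀) 1, A₂, le_max_right _ _,
    le_trans (le_max_right _ _) (le_max_left _ _), hA₂pos.le, fun s₂ hs₂ => ?_⟩
  have hs₂1 : (1:ℝ) ≤ s₂ := le_trans (le_max_right _ _) hs₂
  have hs₂T : T ≤ s₂ := le_trans (le_trans (le_max_left _ _) (le_max_left _ _)) hs₂
  have hs₂s₀ : s₀ ≤ s₂ := le_trans (le_trans (le_max_right _ _) (le_max_left _ _)) hs₂
  have hs₂p : (0:ℝ) < s₂ := by linarith
  have hPmono : s₂ ^ (-δ:ℝ) ≤ s₂ ^ (-μ:ℝ) :=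
    Real.rpow_le_rpow_of_exponent_le hs₂1 (by linarith)
  have hPpos : (0:ℝ) < s₂ ^ (-μ:ℝ) := Real.rpow_pos_of_pos hs₂p _
  have hYpos₂ : (0:ℝ) < s₂ ^ (-δ:ℝ) := Real.rpow_pos_of_pos hs₂p _
  rw [abs_le]
  constructor
  · -- lower bound: ¬ v s₂ < -(A₂ * s₂^{-μ})
    by_contra hcon
    push_neg at hcon
    have hneg : v s₂ < -(A₂ * s₂ ^ (-μ:ℝ)) := by linarith
    obtain ⟨a, hadef⟩ : ∃ a:ℝ, a = v s₂ / s₂ + c₁ * s₂ ^ (-1-δ:ℝ) := ⟨_, rfl⟩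
    have hs₂split : s₂ ^ (-1-δ:ℝ) * s₂ = s₂ ^ (-δ:ℝ) := by
      rw [show (-1-δ:ℝ) = -δ + -1 by ring, Real.rpow_add hs₂p, Real.rpow_neg_one]
      field_simp
    have ha_eq : a * s₂ = v s₂ + c₁ * s₂ ^ (-δ:ℝ) := by
      rw [hadef, add_mul, div_mul_cancel₀ _ hs₂p.ne', mul_assoc, hs₂split]
    have haneg : a < 0 := by
      have h1 : a * s₂ < -(A₂ * s₂ ^ (-μ:ℝ)) + c₁ * s₂ ^ (-μ:ℝ) := by
        rw [ha_eq]
        have : c₁ * s₂ ^ (-δ:ℝ) ≤ c₁ * s₂ ^ (-μ:ℝ) :=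
          mul_le_mul_of_nonneg_left hPmono hc₁pos.le
        linarith
      have h3 : 0 ≤ (A₂ - c₁) * s₂ ^ (-μ:ℝ) := mul_nonneg (by linarith) hPpos.le
      have h2 : a * s₂ < 0 := by linarith [h1, h3]
      by_contra hna
      push_neg at hna
      linarith [mul_nonneg hna hs₂p.le]
    obtain ⟨Sh, hShdef⟩ : ∃ S:ℝ, S = max s₂ ((K+1)/(-a)) := ⟨_, rfl⟩
    have hShs₂ : s₂ ≤ Sh := hShdef ▸ le_max_left _ _
    have key := riccati_comp_upper (b := Sh) hs₀ hs₂s₀ hv a 1 (-c₁) (-δ)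
      (by rw [Real.rpow_one]; have : a * s₂ + -c₁ * s₂ ^ (-δ:ℝ) = v s₂ := by
            rw [ha_eq]; ring
          linarith)
      (fun x hax hxb hc => by
        have hxs₀ : s₀ ≤ x := le_trans hs₂s₀ hax
        have hxp := hspos x hxs₀
        have hxinv : (0:ℝ) < x⁻¹ := inv_pos.2 hxp
        rw [Real.rpow_one] at hc
        obtain ⟨Q, hQdef⟩ : ∃ Q:ℝ, Q = x ^ (-δ:ℝ) * x⁻¹ := ⟨_, rfl⟩
        have hYpos : (0:ℝ) < x ^ (-δ:ℝ) := Real.rpow_pos_of_pos hxp _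
        have hQpos : (0:ℝ) < Q := hQdef ▸ mul_pos hYpos hxinv
        have hxd : x ^ (-1-δ:ℝ) = Q := by
          rw [hQdef, show (-1-δ:ℝ) = -δ + -1 by ring, Real.rpow_add hxp, Real.rpow_neg_one]
        have hxd' : x ^ (-δ-1:ℝ) = Q := by
          rw [hQdef, show (-δ-1:ℝ) = -δ + -1 by ring, Real.rpow_add hxp, Real.rpow_neg_one]
        have hvneg : v x < 0 := by
          rw [hc]
          have h1 : a * x < 0 := mul_neg_of_neg_of_pos haneg hxp
          have h2 : 0 < c₁ * x ^ (-δ:ℝ) := mul_pos hc₁pos hYpos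
          linarith
        have he := (abs_le.mp (herr x hxs₀)).2
        rw [hxd] at he
        have hvv : v x * (1 - v x) / x ≤ v x * x⁻¹ := by
          rw [div_eq_mul_inv]
          refine mul_le_mul_of_nonneg_right ?_ hxinv.le
          linarith [sq_nonneg (v x)]
        have hvxi : v x * x⁻¹ = a - c₁ * Q := by
          rw [hc, hQdef]
          field_simp
          ring
        rw [show (1:ℝ)-1 = 0 by norm_num, Real.rpow_zero, hxd']
        have h2 : (c₁ * (1+δ) - K) * Q = Q := by rw [hc₁mul]; ring
        linarith [he, hvv, hvxi, h2, hQpos]) 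
    have hconcl := key Sh hShs₂ le_rfl
    rw [Real.rpow_one] at hconcl
    have h196 : a * Sh ≤ -(K+1) := by
      have h1 : (K+1)/(-a) ≤ Sh := hShdef ▸ le_max_right _ _
      have h2 : a * Sh ≤ a * ((K+1)/(-a)) := mul_le_mul_of_nonpos_left h1 haneg.le
      have h3 : a * ((K+1)/(-a)) = -(K+1) := by
        rw [mul_div_assoc', div_neg, mul_comm a (K+1), mul_div_assoc,
          div_self haneg.ne, mul_one]
      linarith
    have hShY : (0:ℝ) < Sh ^ (-δ:ℝ) := Real.rpow_pos_of_pos (hspos Sh (le_trans hs₂s₀ hShs₂)) _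
    have hvSh := (abs_le.mp (hvK Sh (le_trans hs₂s₀ hShs₂))).1
    linarith [hconcl, hvSh, mul_pos hc₁pos hShY, h196]
  · -- upper bound: ¬ A₂ * s₂^{-μ} < v s₂
    by_contra hcon
    push_neg at hcon
    have hpos : A₂ * s₂ ^ (-μ:ℝ) < v s₂ := by linarith
    obtain ⟨R, hRdef⟩ : ∃ R:ℝ, R = s₂ ^ ((1:ℝ)/2) := ⟨_, rfl⟩
    have hRpos : (0:ℝ) < R := hRdef ▸ Real.rpow_pos_of_pos hs₂p _
    obtain ⟨a, hadef⟩ : ∃ a:ℝ, a = (v s₂ - c₂ * s₂ ^ (-δ:ℝ)) / R := ⟨_, rfl⟩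
    have ha_eq : a * R = v s₂ - c₂ * s₂ ^ (-δ:ℝ) := by
      rw [hadef, div_mul_cancel₀ _ hRpos.ne']
    have hapos : 0 < a := by
      rw [hadef]
      refine div_pos ?_ hRpos
      have h1 : c₂ * s₂ ^ (-δ:ℝ) ≤ c₂ * s₂ ^ (-μ:ℝ) :=
        mul_le_mul_of_nonneg_left hPmono hc₂pos.le
      have h2 : 0 < (A₂ - c₂) * s₂ ^ (-μ:ℝ) := mul_pos (by linarith) hPpos
      linarith [h1, h2, hpos]
    obtain ⟨Sh, hShdef⟩ : ∃ S:ℝ, S = max (max s₂ 1) ((a⁻¹) ^ (2:ℝ)) := ⟨_, rfl⟩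
    have hShs₂ : s₂ ≤ Sh := hShdef ▸ le_trans (le_max_left _ _) (le_max_left _ _)
    have key := riccati_comp_lower (b := Sh) hs₀ hs₂s₀ hv a (1/2) c₂ (-δ)
      (by rw [← hRdef]; linarith [ha_eq])
      (fun x hax hxb hc => by
        have hxs₀ : s₀ ≤ x := le_trans hs₂s₀ hax
        have hxp := hspos x hxs₀
        have hxinv : (0:ℝ) < x⁻¹ := inv_pos.2 hxp
        obtain ⟨X, hXdef⟩ : ∃ X:ℝ, X = x ^ ((1:ℝ)/2) := ⟨_, rfl⟩
        obtain ⟨Y, hYdef⟩ : ∃ Y:ℝ, Y = x ^ (-δ:ℝ) := ⟨_, rfl⟩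
        have hXpos : (0:ℝ) < X := hXdef ▸ Real.rpow_pos_of_pos hxp _
        have hYpos : (0:ℝ) < Y := hYdef ▸ Real.rpow_pos_of_pos hxp _
        rw [← hXdef, ← hYdef] at hc
        have hxhalf : x ^ ((1:ℝ)/2 - 1) = X * x⁻¹ := by
          rw [hXdef, show ((1:ℝ)/2 - 1) = 1/2 + -1 by ring, Real.rpow_add hxp, Real.rpow_neg_one]
        have hxd : x ^ (-1-δ:ℝ) = Y * x⁻¹ := by
          rw [hYdef, show (-1-δ:ℝ) = -δ + -1 by ring, Real.rpow_add hxp, Real.rpow_neg_one]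
        have hxd' : x ^ (-δ-1:ℝ) = Y * x⁻¹ := by
          rw [hYdef, show (-δ-1:ℝ) = -δ + -1 by ring, Real.rpow_add hxp, Real.rpow_neg_one]
        have hvxpos : 0 < v x := by
          rw [hc]; positivity
        have hvxhalf : v x < 1/2 := hcaseB x (le_trans hs₂T hax) hxs₀
        have he := (abs_le.mp (herr x hxs₀)).1
        rw [hxd] at he
        have hvv : (v x / 2) * x⁻¹ ≤ v x * (1 - v x) / x := by
          rw [div_eq_mul_inv _ x]
          refine mul_le_mul_of_nonneg_right ?_ hxinv.le
          linarith [mul_pos hvxpos (show (0:ℝ) < 1/2 - v x by linarith)]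
        have hvx2 : (v x / 2) * x⁻¹ = a * (1/2) * (X * x⁻¹) + (c₂/2) * (Y * x⁻¹) := by
          rw [hc]; ring
        rw [hxhalf, hxd']
        have h2 : (c₂ * (1/2+δ) - K) * (Y * x⁻¹) = Y * x⁻¹ := by rw [hc₂mul]; ring
        linarith [he, hvv, hvx2, h2, mul_pos hYpos hxinv])
    have hShs₀ : s₀ ≤ Sh := le_trans hs₂s₀ hShs₂
    have hShp : (0:ℝ) < Sh := hspos Sh hShs₀
    have hconcl := key Sh hShs₂ le_rfl
    have hhalfSh : Sh ^ ((1:ℝ)/2) ≥ a⁻¹ := by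
      have h1 : ((a⁻¹) ^ (2:ℝ)) ^ ((1:ℝ)/2) ≤ Sh ^ ((1:ℝ)/2) :=
        Real.rpow_le_rpow (Real.rpow_nonneg (inv_pos.2 hapos).le _)
          (hShdef ▸ le_max_right _ _) (by norm_num)
      rwa [← Real.rpow_mul (inv_pos.2 hapos).le, show (2:ℝ) * (1/2) = 1 by norm_num,
        Real.rpow_one] at h1
    have haSh : 1 ≤ a * Sh ^ ((1:ℝ)/2) := by
      have := mul_le_mul_of_nonneg_left hhalfSh hapos.le
      rwa [mul_inv_cancel₀ hapos.ne'] at this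
    have hYSh : (0:ℝ) < Sh ^ (-δ:ℝ) := Real.rpow_pos_of_pos hShp _
    have hvSh : v Sh < 1/2 := hcaseB Sh (le_trans hs₂T hShs₂) hShs₀
    linarith [hconcl, haSh, hvSh, mul_pos hc₂pos hYSh]

set_option maxHeartbeats 1000000 in
/-- **Riccati dichotomy with quantized limits** (scalar ODE dichotomy, following
Filippas–Liu, used in the proof of the spectral quantization theorem). For `β, δ, C > 0`
there is `μ > 0` such that any `C¹` function `λ` on `(-∞, τ₀]` (with `τ₀ < 0`) satisfying
`|λ(τ)| ≤ C/|τ|` and `|λ' + β⁻¹λ²| ≤ C|τ|^{-2-δ}` is asymptotic either to `β/τ` or to `0`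
with error `O(|τ|^{-1-μ})`. -/
theorem riccati_dichotomy_quantized
    (β δ C : ℝ) (hβ : 0 < β) (hδ : 0 < δ) (hC : 0 < C) :
    ∃ μ : ℝ, 0 < μ ∧ ∀ τ₀ : ℝ, τ₀ < 0 → ∀ lam lam' : ℝ → ℝ,
      (∀ τ ≤ τ₀, HasDerivWithinAt lam (lam' τ) (Set.Iic τ₀) τ) →
      ContinuousOn lam' (Set.Iic τ₀) →
      (∀ τ ≤ τ₀, |lam τ| ≤ C / |τ|) →
      (∀ τ ≤ τ₀, |lam' τ + β⁻¹ * (lam τ) ^ 2| ≤ C * |τ| ^ (-(2 : ℝ) - δ)) →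
      (∃ C' : ℝ, ∀ τ ≤ τ₀, |lam τ - β / τ| ≤ C' * |τ| ^ (-(1 : ℝ) - μ)) ∨
      (∃ C' : ℝ, ∀ τ ≤ τ₀, |lam τ| ≤ C' * |τ| ^ (-(1 : ℝ) - μ)) := by
  refine ⟨min δ (1/4), lt_min hδ (by norm_num), ?_⟩
  obtain ⟨μ, hμdef⟩ : ∃ m : ℝ, m = min δ (1/4) := ⟨_, rfl⟩
  rw [← hμdef]
  have hμpos : 0 < μ := hμdef ▸ lt_min hδ (by norm_num)
  have hμδ : μ ≤ δ := hμdef ▸ min_le_left _ _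
  have hμ4 : μ ≤ 1/4 := hμdef ▸ min_le_right _ _
  intro τ₀ hτ₀ lam lam' hderiv _hcont hbound hODE
  set s₀ : ℝ := -τ₀ with hs₀def
  have hs₀ : 0 < s₀ := by simp [hs₀def]; linarith
  set K : ℝ := C / β with hKdef
  have hK : 0 < K := div_pos hC hβ
  set v : ℝ → ℝ := fun s => -s * lam (-s) / β with hvdef
  set vd : ℝ → ℝ := fun s => (-lam (-s) + s * lam' (-s)) / β with hvddef
  have hmem : ∀ s : ℝ, s₀ ≤ s → -s ≤ τ₀ := fun s hs => by
    simp only [hs₀def] at hs; linarith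
  have hspos : ∀ s : ℝ, s₀ ≤ s → 0 < s := fun s hs => lt_of_lt_of_le hs₀ hs
  have hv : ∀ s, s₀ ≤ s → HasDerivWithinAt v (vd s) (Set.Ici s₀) s := by
    intro s hs
    have h1 : HasDerivWithinAt (fun x : ℝ => lam (-x)) (lam' (-s) * (-1)) (Set.Ici s₀) s := by
      exact HasDerivWithinAt.comp s (hderiv (-s) (hmem s hs))
        ((hasDerivAt_neg s).hasDerivWithinAt) (fun x hx => hmem x hx)
    have h2 := (((hasDerivAt_neg s).hasDerivWithinAt).mul h1).div_const β
    convert h2 using 1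
    · rfl
    · rfl
    · rfl
    · simp only [hvddef]; ring
  have hvK : ∀ s, s₀ ≤ s → |v s| ≤ K := by
    intro s hs
    have hsp := hspos s hs
    have hb := hbound (-s) (hmem s hs)
    rw [abs_neg, abs_of_pos hsp] at hb
    have : |v s| = s * |lam (-s)| / β := by
      rw [hvdef]; rw [abs_div, abs_mul, abs_neg, abs_of_pos hsp, abs_of_pos hβ]
    rw [this, hKdef]
    rw [div_le_div_iff_of_pos_right hβ]
    calc s * |lam (-s)| ≤ s * (C / s) := by
          exact mul_le_mul_of_nonneg_left hb hsp.le
      _ = C := by field_simp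
  have herr : ∀ s, s₀ ≤ s → |vd s - v s * (1 - v s) / s| ≤ K * s ^ (-1 - δ : ℝ) := by
    intro s hs
    have hsp := hspos s hs
    have hODE' := hODE (-s) (hmem s hs)
    rw [abs_neg, abs_of_pos hsp] at hODE'
    have hid : vd s - v s * (1 - v s) / s
        = (s / β) * (lam' (-s) + β⁻¹ * (lam (-s)) ^ 2) := by
      simp only [hvdef, hvddef]
      field_simp
      ring
    rw [hid, abs_mul, abs_of_pos (div_pos hsp hβ)]
    have : s / β * |lam' (-s) + β⁻¹ * lam (-s) ^ 2| ≤ s / β * (C * s ^ (-(2:ℝ) - δ)) :=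
      mul_le_mul_of_nonneg_left hODE' (div_pos hsp hβ).le
    refine this.trans (le_of_eq ?_)
    rw [hKdef]
    rw [show (-1 - δ : ℝ) = 1 + (-(2:ℝ) - δ) by ring, Real.rpow_add hsp, Real.rpow_one]
    ring
  -- absorption of the compact region [s₀, S]
  have habsorb : ∀ (c A S : ℝ), 1 ≤ S → s₀ ≤ S → 0 ≤ A → |c| ≤ 1 →
      (∀ s, S ≤ s → |v s - c| ≤ A * s ^ (-μ)) →
      ∀ s, s₀ ≤ s → |v s - c| ≤ (max A ((K + 1) * S ^ μ)) * s ^ (-μ) := by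
    intro c A S hS1 hSs₀ hA hc h s hs
    have hsp := hspos s hs
    have hrp : (0:ℝ) < s ^ (-μ) := Real.rpow_pos_of_pos hsp _
    rcases le_or_gt S s with hcase | hcase
    · exact (h s hcase).trans (mul_le_mul_of_nonneg_right (le_max_left _ _) hrp.le)
    · have h1 : |v s - c| ≤ K + 1 := by
        have := hvK s hs
        calc |v s - c| ≤ |v s| + |c| := abs_sub _ _
          _ ≤ K + 1 := by linarith
      have h2 : S ^ (-μ) ≤ s ^ (-μ) :=
        Real.rpow_le_rpow_of_nonpos hsp hcase.le (by linarith)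
      have hSp : (0:ℝ) < S := lt_of_lt_of_le hs₀ hSs₀
      have h3 : (K + 1) = (K + 1) * S ^ μ * S ^ (-μ) := by
        rw [mul_assoc, ← Real.rpow_add hSp]
        simp
      calc |v s - c| ≤ K + 1 := h1
        _ = (K + 1) * S ^ μ * S ^ (-μ) := h3
        _ ≤ (K + 1) * S ^ μ * s ^ (-μ) := by
            refine mul_le_mul_of_nonneg_left h2 ?_
            positivity
        _ ≤ (max A ((K + 1) * S ^ μ)) * s ^ (-μ) :=
            mul_le_mul_of_nonneg_right (le_max_right _ _) hrp.le
  -- conversion back to lam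
  have hconv : ∀ (c A : ℝ), (∀ s, s₀ ≤ s → |v s - c| ≤ A * s ^ (-μ)) →
      ∀ τ, τ ≤ τ₀ → |lam τ - β * c / τ| ≤ (β * A) * |τ| ^ (-(1:ℝ) - μ) := by
    intro c A h τ hτ
    have hτneg : τ < 0 := lt_of_le_of_lt hτ hτ₀
    have hsp : (0:ℝ) < -τ := by linarith
    have hss₀ : s₀ ≤ -τ := by rw [hs₀def]; linarith
    have habs : |τ| = -τ := abs_of_neg hτneg
    have hvs : v (-τ) = -(-τ) * lam τ / β := by rw [hvdef]; simp
    have hlam : lam τ = -β * v (-τ) / (-τ) := by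
      rw [hvs, neg_neg]
      have ht : τ ≠ 0 := hτneg.ne
      rw [eq_comm]
      calc -β * (τ * lam τ / β) / -τ = lam τ * (β / β) * (τ / τ) := by ring
        _ = lam τ := by rw [div_self hβ.ne', div_self ht, mul_one, mul_one]
    have hid : lam τ - β * c / τ = -β * (v (-τ) - c) / (-τ) := by
      rw [hlam]
      field_simp
    rw [hid, habs]
    rw [abs_div, abs_mul, abs_neg, abs_of_pos hβ, abs_of_pos hsp]
    rw [show (-(1:ℝ) - μ) = (-μ) + (-1) by ring, Real.rpow_add hsp, Real.rpow_neg_one]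
    rw [div_le_iff₀ hsp]
    have := h (-τ) hss₀
    calc β * |v (-τ) - c| ≤ β * (A * (-τ) ^ (-μ)) :=
          mul_le_mul_of_nonneg_left this hβ.le
      _ = β * A * ((-τ) ^ (-μ) * (-τ)⁻¹) * -τ := by
          have hinv : (-τ)⁻¹ * -τ = 1 := inv_mul_cancel₀ hsp.ne'
          calc β * (A * (-τ) ^ (-μ)) = β * A * (-τ) ^ (-μ) * ((-τ)⁻¹ * -τ) := by
                rw [hinv]; ring
            _ = β * A * ((-τ) ^ (-μ) * (-τ)⁻¹) * -τ := by ring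
  by_cases hcase : ∀ T : ℝ, ∃ s, T ≤ s ∧ s₀ ≤ s ∧ 1/2 ≤ v s
  · -- Case A : v is asymptotic to 1, i.e. lam is asymptotic to β/τ
    obtain ⟨S, A, hS1, hSs₀, hA, hrate⟩ :=
      riccati_caseA δ hδ μ hμpos hμδ hμ4 s₀ hs₀ K hK v vd hv hvK herr hcase
    have habs' := habsorb 1 A S hS1 hSs₀ hA (by norm_num) hrate
    refine Or.inl ⟨β * (max A ((K + 1) * S ^ μ)), fun τ hτ => ?_⟩
    have := hconv 1 (max A ((K + 1) * S ^ μ)) habs' τ hτ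
    rwa [mul_one] at this
  · -- Case B : v is asymptotic to 0, i.e. lam decays
    push_neg at hcase
    obtain ⟨T, hT⟩ := hcase
    have hT' : ∀ s, T ≤ s → s₀ ≤ s → v s < 1/2 := fun s h1 h2 => hT s h1 h2
    obtain ⟨S, A, hS1, hSs₀, hA, hrate⟩ :=
      riccati_caseB δ hδ μ hμpos hμδ hμ4 s₀ hs₀ K hK v vd hv hvK herr T hT'
    have hrate' : ∀ s, S ≤ s → |v s - 0| ≤ A * s ^ (-μ) := by
      intro s hs; rw [sub_zero]; exact hrate s hs
    have habs' := habsorb 0 A S hS1 hSs₀ hA (by norm_num) hrate'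
    refine Or.inr ⟨β * (max A ((K + 1) * S ^ μ)), fun τ hτ => ?_⟩
    have := hconv 0 (max A ((K + 1) * S ^ μ)) habs' τ hτ
    rwa [mul_zero, zero_div, sub_zero] at this
end

section
/- Rotation vector fields tangent to a cylinder are standard sphere rotations (Lemma A.1, cylindrical case): Let 1 ≤ k ≤ n−1 and N = (n−k+1)(n−k)/2. Regard so(n−k+1) as the subspace of so(n+1) of antisymmetric (n+1)×(n+1) matrices of block form diag(0_{k×k}, J̄) with J̄ ∈ so(n−k+1), and equip so(n+1) with the Frobenius inner product ⟨A,B⟩ = tr(AᵀB). Let {J_α}_{α=1}^{N} be an orthonormal basis of this subspace, let S ∈ O(n+1), q ∈ ℝ^{n+1}, and define K_α(x) = S J_α S⁻¹(x − q). Let Γ = {(y,ω) : y ∈ ℝ^k, ω ∈ S^{n−k}} ⊂ ℝ^{n+1} be the cylinder of unit radius with outward unit normal ν(y,ω) = (0,ω), and let p ∈ Γ. Suppose: (i) ⟨K_α(x), ν(x)⟩ = 0 for every α and every x ∈ Γ with |x − p| < 1; (ii) |K_α(x)|·(n−k) ≤ 5n for every α and every x ∈ Γ with |x − p| ≤ 10n².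 Then there exist matrices M_α in the embedded copy of so(n−k+1) such that K_α(x) = M_α x for all x ∈ ℝ^{n+1} and all α, and {M_α}_{α=1}^{N} is an orthonormal basis of the embedded so(n−k+1). -/
open Matrix

open Finset

set_option linter.unusedVariables false


private lemma ite_mem_add {P : Prop} [Decidable P] (a b : ℝ) :
    (if P then a + b else 0) = (if P then a else 0) + (if P then b else 0) := by
  split_ifs <;> ring

private lemma sum_ite_delta {n : ℕ} (P : Fin n → Prop) [DecidablePred P]
    (h : Fin n → ℝ) (j : Fin n) :
    (∑ i, if P i then h i * (if i = j then (1:ℝ) else 0) else 0) = if P j then h j else 0 := by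
  rw [Finset.sum_eq_single j]
  · simp
  · intro i _ hij
    split_ifs <;> simp [hij]
  · simp

set_option maxHeartbeats 1000000 in
lemma sphere_span {n k : ℕ} (p w : Fin (n+1) → ℝ)
    (hp : (∑ i : Fin (n+1), if k ≤ (i:ℕ) then p i ^ 2 else 0) = 1)
    (H : ∀ x : Fin (n+1) → ℝ,
      (∑ i : Fin (n+1), if k ≤ (i:ℕ) then x i ^ 2 else 0) = 1 →
      (∑ i : Fin (n+1), (x i - p i) ^ 2) < 3/4 →
      (∑ i : Fin (n+1), if k ≤ (i:ℕ) then w i * x i else 0) = 0)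
    (j : Fin (n+1)) (hj : k ≤ (j:ℕ)) : w j = 0 := by
  have hpj : (p j)^2 ≤ 1 := by
    rw [← hp]
    have := Finset.single_le_sum (f := fun i : Fin (n+1) => if k ≤ (i:ℕ) then p i ^ 2 else 0)
      (fun i _ => by positivity) (Finset.mem_univ j)
    simpa [hj] using this
  have hpj1 : |p j| ≤ 1 := by
    rw [abs_le]; constructor <;> nlinarith
  have key : ∀ ε : ℝ, |ε| ≤ 1/100 →
      (∑ i : Fin (n+1), if k ≤ (i:ℕ) then w i * p i else 0) + ε * w j = 0 := by
    intro ε hε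
    have hε1 : -(1/100) ≤ ε := (abs_le.1 hε).1
    have hε2 : ε ≤ 1/100 := (abs_le.1 hε).2
    set c2 : ℝ := 1 + 2*ε*(p j) + ε^2 with hc2
    have habs : |ε * p j| ≤ 1/100 := by
      rw [abs_mul]
      calc |ε| * |p j| ≤ (1/100) * 1 := by
            apply mul_le_mul hε hpj1 (abs_nonneg _) (by norm_num)
        _ = 1/100 := by norm_num
    have hep := abs_le.1 habs
    have hc2pos : (0.97:ℝ) ≤ c2 := by nlinarith [sq_nonneg ε]
    have hc2hi : c2 ≤ (1.03:ℝ) := by nlinarith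
    set c : ℝ := Real.sqrt c2 with hcdef
    have hcpos : 0 < c := Real.sqrt_pos.2 (by linarith)
    have hcne : c ≠ 0 := ne_of_gt hcpos
    have hcsq : c^2 = c2 := Real.sq_sqrt (by linarith)
    have hclo : (0.98:ℝ) ≤ c := by nlinarith
    have hchi : c ≤ (1.02:ℝ) := by nlinarith
    set x : Fin (n+1) → ℝ := fun i => if k ≤ (i:ℕ) then (p i + ε * (if i = j then 1 else 0))/c else p i with hxdef
    have hsum1 : (∑ i : Fin (n+1), if k ≤ (i:ℕ) then (p i + ε * (if i = j then 1 else 0))^2 else 0) = c2 := by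
      have e1 : ∀ i : Fin (n+1), (if k ≤ (i:ℕ) then (p i + ε * (if i = j then 1 else 0))^2 else 0)
          = (if k ≤ (i:ℕ) then p i ^2 else 0) + ((if k ≤ (i:ℕ) then (2*ε*p i) * (if i = j then 1 else 0) else 0)
            + (if k ≤ (i:ℕ) then (ε^2) * (if i = j then 1 else 0) else 0)) := by
        intro i; split_ifs with h1 h2 <;> ring
      rw [Finset.sum_congr rfl (fun i _ => e1 i), Finset.sum_add_distrib, Finset.sum_add_distrib, hp,
        sum_ite_delta, sum_ite_delta, if_pos hj, if_pos hj, hc2]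
      ring
    have hx_sphere : (∑ i : Fin (n+1), if k ≤ (i:ℕ) then x i ^2 else 0) = 1 := by
      have e1 : ∀ i : Fin (n+1), (if k ≤ (i:ℕ) then x i ^2 else 0)
          = (if k ≤ (i:ℕ) then (p i + ε * (if i = j then 1 else 0))^2 else 0) / c2 := by
        intro i
        by_cases h : k ≤ (i:ℕ)
        · simp only [hxdef, if_pos h, div_pow, hcsq]
        · simp [h]
      rw [Finset.sum_congr rfl (fun i _ => e1 i), ← Finset.sum_div, hsum1, div_self (by linarith)]
    have hdist : (∑ i : Fin (n+1), (x i - p i)^2)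
        = ((1-c)^2 + (2*(1-c)*ε*(p j) + ε^2))/c2 := by
      have e1 : ∀ i : Fin (n+1), (x i - p i)^2
          = ((if k ≤ (i:ℕ) then (1-c)^2 * p i ^2 else 0)
            + ((if k ≤ (i:ℕ) then (2*(1-c)*ε*p i) * (if i = j then 1 else 0) else 0)
              + (if k ≤ (i:ℕ) then (ε^2) * (if i = j then 1 else 0) else 0)))/c2 := by
        intro i
        by_cases h : k ≤ (i:ℕ)
        · simp only [hxdef, if_pos h]
          rw [div_sub' hcne, div_pow, hcsq]
          congr 1
          by_cases hij : i = j <;> simp only [hij, if_pos, if_neg, ite_true, ite_false] <;> ring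
        · simp [hxdef, h]
      rw [Finset.sum_congr rfl (fun i _ => e1 i), ← Finset.sum_div, Finset.sum_add_distrib,
        Finset.sum_add_distrib, sum_ite_delta, sum_ite_delta, if_pos hj, if_pos hj]
      have e2 : (∑ i : Fin (n+1), if k ≤ (i:ℕ) then (1-c)^2 * p i ^2 else 0)
          = (1-c)^2 * (∑ i : Fin (n+1), if k ≤ (i:ℕ) then p i ^2 else 0) := by
        rw [Finset.mul_sum]
        exact Finset.sum_congr rfl (fun i _ => by split_ifs <;> ring)
      rw [e2, hp]
      ring_nf
    have hdistlt : (∑ i : Fin (n+1), (x i - p i)^2) < 3/4 := by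
      rw [hdist, div_lt_iff₀ (by linarith)]
      nlinarith [mul_nonneg (sub_nonneg.2 hchi) (sub_nonneg.2 hep.2 : (0:ℝ) ≤ 1/100 - ε*p j),
        mul_nonneg (sub_nonneg.2 hchi) (by linarith : (0:ℝ) ≤ 1/100 + ε*p j),
        mul_nonneg (sub_nonneg.2 hclo) (sub_nonneg.2 hep.2 : (0:ℝ) ≤ 1/100 - ε*p j),
        mul_nonneg (sub_nonneg.2 hclo) (by linarith : (0:ℝ) ≤ 1/100 + ε*p j)]
    have hw := H x hx_sphere hdistlt
    have e1 : ∀ i : Fin (n+1), (if k ≤ (i:ℕ) then w i * x i else 0)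
        = ((if k ≤ (i:ℕ) then w i * p i else 0) + (if k ≤ (i:ℕ) then (ε * w i) * (if i = j then 1 else 0) else 0))/c := by
      intro i
      by_cases h : k ≤ (i:ℕ)
      · simp only [hxdef, if_pos h]
        rw [← mul_div_assoc]
        congr 1
        split_ifs <;> ring
      · simp [h]
    have hsum2 : (∑ i : Fin (n+1), if k ≤ (i:ℕ) then w i * x i else 0)
        = ((∑ i : Fin (n+1), if k ≤ (i:ℕ) then w i * p i else 0) + ε * w j)/c := by
      rw [Finset.sum_congr rfl (fun i _ => e1 i), ← Finset.sum_div, Finset.sum_add_distrib,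
        sum_ite_delta, if_pos hj]
    rw [hsum2, div_eq_zero_iff] at hw
    rcases hw with hw | hw
    · linarith [hw]
    · exact absurd hw hcne
  have k1 := key (1/100) (by rw [abs_of_pos] <;> norm_num)
  have k2 := key (-(1/100)) (by rw [abs_of_neg] <;> norm_num)
  linarith


lemma card_pairs (n k : ℕ) :
    2 * Fintype.card {p : Fin (n+1) × Fin (n+1) // k ≤ (p.1:ℕ) ∧ p.1 < p.2}
      = (n+1-k)*(n-k) := by
  classical
  rw [Fintype.card_subtype, Finset.card_filter, Fintype.sum_prod_type]
  have e1 : ∀ i : Fin (n+1), (∑ j : Fin (n+1), if k ≤ (i:ℕ) ∧ i < j then (1:ℕ) else 0)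
      = if k ≤ (i:ℕ) then n - i else 0 := by
    intro i
    by_cases h : k ≤ (i:ℕ)
    · rw [if_pos h]
      have e2 : ∀ j : Fin (n+1), (if k ≤ (i:ℕ) ∧ i < j then (1:ℕ) else 0) = if i < j then 1 else 0 :=
        fun j => by simp [h]
      rw [Finset.sum_congr rfl fun j _ => e2 j, ← Finset.card_filter]
      have e3 : Finset.filter (fun j => i < j) Finset.univ = Finset.Ioi i := by
        ext j; simp
      rw [e3, Fin.card_Ioi]
      omega
    · simp [h]
  rw [Finset.sum_congr rfl fun i _ => e1 i,
    Fin.sum_univ_eq_sum_range (fun t => if k ≤ t then n - t else 0), ← Finset.sum_filter]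
  have e4 : Finset.filter (fun t => k ≤ t) (Finset.range (n+1)) = Finset.Ico k (n+1) := by
    ext t; simp [Finset.mem_Ico]; omega
  rw [e4, Finset.sum_Ico_eq_sum_range]
  by_cases hkn : k ≤ n
  · have e5 : ∀ s, n - (k + s) = (n + 1 - k) - 1 - s := fun s => by omega
    rw [Finset.sum_congr rfl fun s _ => e5 s, Finset.sum_range_reflect (fun s => s) (n+1-k)]
    have h6 := Finset.sum_range_id_mul_two (n+1-k)
    have e6 : n + 1 - k - 1 = n - k := by omega
    rw [e6] at h6
    omega
  · have : n + 1 - k = 0 ∨ n + 1 - k = 1 := by omega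
    rcases this with h | h <;> rw [h] <;> simp <;> omega

lemma parseval (n k N : ℕ) (hkn : k ≤ n) (hN : 2 * N = (n - k + 1) * (n - k))
    (J : Fin N → Matrix (Fin (n + 1)) (Fin (n + 1)) ℝ)
    (hJanti : ∀ α, (J α)ᵀ = -(J α))
    (hJblock : ∀ α, ∀ i j : Fin (n + 1), ((i : ℕ) < k ∨ (j : ℕ) < k) → J α i j = 0)
    (hJortho : ∀ α β, Matrix.trace ((J α)ᵀ * J β) = if α = β then (1 : ℝ) else 0)
    (i j i' j' : Fin (n+1)) (hi : k ≤ (i:ℕ)) (hij : i < j) (hi' : k ≤ (i':ℕ)) (hij' : i' < j') :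
    (∑ α, J α i j * J α i' j') = if i = i' ∧ j = j' then (1/2:ℝ) else 0 := by
  classical
  have hJanti' : ∀ α a b, J α b a = - J α a b := by
    intro α a b
    have := congrFun (congrFun (hJanti α) a) b
    simpa [Matrix.transpose_apply] using this
  have hJdiag : ∀ α a, J α a a = 0 := by
    intro α a
    have := hJanti' α a a
    linarith
  have hcard : Fintype.card {p : Fin (n+1) × Fin (n+1) // k ≤ (p.1:ℕ) ∧ p.1 < p.2} = N := by
    have h1 := card_pairs n k
    have e : n + 1 - k = n - k + 1 := by omega
    rw [e] at h1
    omega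
  have e : {p : Fin (n+1) × Fin (n+1) // k ≤ (p.1:ℕ) ∧ p.1 < p.2} ≃ Fin N :=
    Fintype.equivFinOfCardEq hcard
  set G : Matrix (Fin N) (Fin N) ℝ := fun α β => J α (e.symm β).1.1 (e.symm β).1.2 with hG
  have key : ∀ α β, (∑ P : {p : Fin (n+1) × Fin (n+1) // k ≤ (p.1:ℕ) ∧ p.1 < p.2},
      J α P.1.1 P.1.2 * J β P.1.1 P.1.2) = if α = β then (1/2:ℝ) else 0 := by
    intro α β
    have s2 : (∑ p ∈ Finset.univ.filter (fun p : Fin (n+1) × Fin (n+1) => k ≤ (p.1:ℕ) ∧ p.1 < p.2),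
            J α p.1 p.2 * J β p.1 p.2)
        = ∑ P : {p : Fin (n+1) × Fin (n+1) // k ≤ (p.1:ℕ) ∧ p.1 < p.2},
            J α P.1.1 P.1.2 * J β P.1.1 P.1.2 :=
      Finset.sum_subtype _ (by intro x; simp)
        (f := fun p : Fin (n+1) × Fin (n+1) => J α p.1 p.2 * J β p.1 p.2)
    rw [← s2, Finset.sum_filter, Fintype.sum_prod_type]
    have htr := hJortho α β
    rw [Matrix.trace] at htr
    have s3 : (∑ a, ((J α)ᵀ * J β).diag a)
        = ∑ a : Fin (n+1), ∑ b : Fin (n+1), J α b a * J β b a := by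
      apply Finset.sum_congr rfl
      intro a _
      rw [Matrix.diag_apply, Matrix.mul_apply]
      exact Finset.sum_congr rfl fun b _ => by rw [Matrix.transpose_apply]
    rw [s3] at htr
    have comm : (∑ a : Fin (n+1), ∑ b : Fin (n+1), J α b a * J β b a)
        = ∑ x : Fin (n+1), ∑ y : Fin (n+1), J α x y * J β x y := Finset.sum_comm
    rw [comm] at htr
    have split : ∀ x y : Fin (n+1), J α x y * J β x y
        = (if x < y then J α x y * J β x y else 0)
          + ((if y < x then J α x y * J β x y else 0)
            + (if x = y then J α x y * J β x y else 0)) := by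
      intro x y
      rcases lt_trichotomy x y with h | h | h
      · rw [if_pos h, if_neg (by omega), if_neg (by exact ne_of_lt h)]; ring
      · rw [if_neg (by omega), if_neg (by omega), if_pos h]; ring
      · rw [if_neg (by omega), if_pos h, if_neg (by exact ne_of_gt h)]; ring
    have hs : (∑ x : Fin (n+1), ∑ y : Fin (n+1), J α x y * J β x y)
        = (∑ x : Fin (n+1), ∑ y : Fin (n+1), if x < y then J α x y * J β x y else 0)
          + ((∑ x : Fin (n+1), ∑ y : Fin (n+1), if y < x then J α x y * J β x y else 0)
            + (∑ x : Fin (n+1), ∑ y : Fin (n+1), if x = y then J α x y * J β x y else 0)) := by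
      rw [← Finset.sum_add_distrib, ← Finset.sum_add_distrib]
      apply Finset.sum_congr rfl; intro x _
      rw [← Finset.sum_add_distrib, ← Finset.sum_add_distrib]
      exact Finset.sum_congr rfl fun y _ => split x y
    have hdiag : (∑ x : Fin (n+1), ∑ y : Fin (n+1), if x = y then J α x y * J β x y else 0) = 0 := by
      apply Finset.sum_eq_zero; intro x _
      apply Finset.sum_eq_zero; intro y _
      split_ifs with h
      · subst h; rw [hJdiag]; ring
      · rfl
    have hswap : (∑ x : Fin (n+1), ∑ y : Fin (n+1), if y < x then J α x y * J β x y else 0)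
        = ∑ x : Fin (n+1), ∑ y : Fin (n+1), if x < y then J α x y * J β x y else 0 := by
      rw [Finset.sum_comm]
      apply Finset.sum_congr rfl; intro x _
      apply Finset.sum_congr rfl; intro y _
      rcases lt_or_ge x y with h | h
      · rw [if_pos h, if_pos h, hJanti' α x y, hJanti' β x y]; ring
      · rw [if_neg (by omega), if_neg (by omega)]
    have hres : ∀ x y : Fin (n+1), (if x < y then J α x y * J β x y else 0)
        = if k ≤ (x:ℕ) ∧ x < y then J α x y * J β x y else 0 := by
      intro x y
      by_cases hkx : k ≤ (x:ℕ)
      · by_cases hxy : x < y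
        · rw [if_pos hxy, if_pos ⟨hkx, hxy⟩]
        · rw [if_neg hxy, if_neg (by tauto)]
      · have hz : J α x y = 0 := hJblock α x y (Or.inl (by omega))
        rw [hz]
        split_ifs <;> ring
    have hres2 : (∑ x : Fin (n+1), ∑ y : Fin (n+1), if x < y then J α x y * J β x y else 0)
        = ∑ x : Fin (n+1), ∑ y : Fin (n+1), if k ≤ (x:ℕ) ∧ x < y then J α x y * J β x y else 0 :=
      Finset.sum_congr rfl fun x _ => Finset.sum_congr rfl fun y _ => hres x y
    rw [hs, hdiag, hswap, hres2] at htr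
    have s6 : (∑ x : Fin (n+1), ∑ y : Fin (n+1),
        if k ≤ ((x, y).1:ℕ) ∧ (x, y).1 < (x, y).2
        then J α (x, y).1 (x, y).2 * J β (x, y).1 (x, y).2 else 0)
        = ∑ x : Fin (n+1), ∑ y : Fin (n+1),
            if k ≤ (x:ℕ) ∧ x < y then J α x y * J β x y else 0 := rfl
    rw [s6]
    split_ifs at htr ⊢ <;> linarith
  -- G * Gᵀ = (1/2) • 1
  have hGGt : G * Gᵀ = (1/2 : ℝ) • (1 : Matrix (Fin N) (Fin N) ℝ) := by
    ext α β
    rw [Matrix.mul_apply]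
    have s1 : (∑ γ, G α γ * Gᵀ γ β)
        = ∑ P : {p : Fin (n+1) × Fin (n+1) // k ≤ (p.1:ℕ) ∧ p.1 < p.2},
            J α P.1.1 P.1.2 * J β P.1.1 P.1.2 := by
      rw [← Equiv.sum_comp e.symm
        (fun P : {p : Fin (n+1) × Fin (n+1) // k ≤ (p.1:ℕ) ∧ p.1 < p.2} =>
          J α P.1.1 P.1.2 * J β P.1.1 P.1.2)]
      exact Finset.sum_congr rfl fun γ _ => by rw [Matrix.transpose_apply, hG]
    rw [s1, key α β, Matrix.smul_apply, Matrix.one_apply]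
    split_ifs <;> simp
  -- Gᵀ * G = (1/2) • 1
  have hGtG : Gᵀ * G = (1/2 : ℝ) • (1 : Matrix (Fin N) (Fin N) ℝ) := by
    have h2 : ((2:ℝ) • G) * Gᵀ = 1 := by
      rw [Matrix.smul_mul, hGGt, smul_smul]; norm_num
    have h3 := (mul_eq_one_comm).1 h2
    rw [Matrix.mul_smul] at h3
    calc Gᵀ * G = (1/2:ℝ) • ((2:ℝ) • (Gᵀ * G)) := by rw [smul_smul]; norm_num
    _ = (1/2:ℝ) • 1 := by rw [h3]
  -- extract entries
  have hPmem : k ≤ ((i, j).1 : ℕ) ∧ (i, j).1 < (i, j).2 := ⟨hi, hij⟩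
  have hPmem' : k ≤ ((i', j').1 : ℕ) ∧ (i', j').1 < (i', j').2 := ⟨hi', hij'⟩
  have hentry := congrFun (congrFun hGtG (e ⟨(i, j), hPmem⟩)) (e ⟨(i', j'), hPmem'⟩)
  rw [Matrix.mul_apply, Matrix.smul_apply, Matrix.one_apply] at hentry
  have s5 : (∑ γ, Gᵀ (e ⟨(i, j), hPmem⟩) γ * G γ (e ⟨(i', j'), hPmem'⟩))
      = ∑ γ, J γ i j * J γ i' j' := by
    apply Finset.sum_congr rfl
    intro γ _
    rw [Matrix.transpose_apply]
    simp only [hG, Matrix.transpose_apply, Equiv.symm_apply_apply]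
  rw [s5] at hentry
  rw [hentry, smul_eq_mul]
  have hiff : (e ⟨(i, j), hPmem⟩ = e ⟨(i', j'), hPmem'⟩) ↔ (i = i' ∧ j = j') := by
    rw [Equiv.apply_eq_iff_eq, Subtype.mk_eq_mk, Prod.mk.injEq]
  by_cases h : i = i' ∧ j = j'
  · rw [if_pos (hiff.2 h), if_pos h]; norm_num
  · rw [if_neg (fun hh => h (hiff.1 hh)), if_neg h]; norm_num

lemma casimir (n k N : ℕ) (hkn : k ≤ n) (hN : 2 * N = (n - k + 1) * (n - k))
    (J : Fin N → Matrix (Fin (n + 1)) (Fin (n + 1)) ℝ)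
    (hJanti : ∀ α, (J α)ᵀ = -(J α))
    (hJblock : ∀ α, ∀ i j : Fin (n + 1), ((i : ℕ) < k ∨ (j : ℕ) < k) → J α i j = 0)
    (hJortho : ∀ α β, Matrix.trace ((J α)ᵀ * J β) = if α = β then (1 : ℝ) else 0)
    (i j : Fin (n+1)) :
    (∑ α, J α * J α) i j
      = if k ≤ (i:ℕ) ∧ i = j then -(((n - k : ℕ)):ℝ)/2 else 0 := by
  classical
  have hJanti' : ∀ α a b, J α b a = - J α a b := by
    intro α a b
    have := congrFun (congrFun (hJanti α) a) b
    simpa [Matrix.transpose_apply] using this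
  have hJdiag : ∀ α a, J α a a = 0 := fun α a => by have := hJanti' α a a; linarith
  have hP := parseval n k N hkn hN J hJanti hJblock hJortho
  have entry : (∑ α, J α * J α) i j = ∑ l : Fin (n+1), ∑ α, J α i l * J α l j := by
    rw [Matrix.sum_apply]
    rw [Finset.sum_comm]
    exact Finset.sum_congr rfl fun α _ => by rw [Matrix.mul_apply]
  rw [entry]
  by_cases hki : k ≤ (i:ℕ)
  · by_cases hkj : k ≤ (j:ℕ)
    · by_cases hij : i = j
      · -- diagonal case
        subst hij
        rw [if_pos ⟨hki, rfl⟩]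
        have hgl : ∀ l : Fin (n+1), (∑ α, J α i l * J α l i)
            = if k ≤ (l:ℕ) ∧ l ≠ i then (-1/2 : ℝ) else 0 := by
          intro l
          by_cases hkl : k ≤ (l:ℕ)
          · by_cases hli : l = i
            · subst hli
              rw [if_neg (by simp)]
              exact Finset.sum_eq_zero fun α _ => by rw [hJdiag]; ring
            · rw [if_pos ⟨hkl, hli⟩]
              rcases lt_or_gt_of_ne (hli : l ≠ i) with h | h
              · -- l < i
                have e1 : ∀ α, J α i l * J α l i = -(J α l i * J α l i) := fun α => by
                  rw [hJanti' α l i]; ring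
                rw [Finset.sum_congr rfl fun α _ => e1 α, Finset.sum_neg_distrib]
                rw [hP l i l i hkl h hkl h]
                norm_num
              · -- i < l
                have e1 : ∀ α, J α i l * J α l i = -(J α i l * J α i l) := fun α => by
                  rw [hJanti' α i l]; ring
                rw [Finset.sum_congr rfl fun α _ => e1 α, Finset.sum_neg_distrib]
                rw [hP i l i l hki h hki h]
                norm_num
          · rw [if_neg (fun h => hkl h.1)]
            exact Finset.sum_eq_zero fun α _ => by
              rw [hJblock α i l (Or.inr (by omega))]; ring
        rw [Finset.sum_congr rfl fun l _ => hgl l]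
        -- count
        have split1 : ∀ l : Fin (n+1), (if k ≤ (l:ℕ) ∧ l ≠ i then (-1/2 : ℝ) else 0)
            = (if k ≤ (l:ℕ) then (-1/2 : ℝ) else 0)
              - (if k ≤ (l:ℕ) then ((-1/2 : ℝ) * if l = i then 1 else 0) else 0) := by
          intro l
          by_cases h1 : k ≤ (l:ℕ) <;> by_cases h2 : l = i <;> simp [h1, h2]
        rw [Finset.sum_congr rfl fun l _ => split1 l, Finset.sum_sub_distrib]
        have d1 : (∑ l : Fin (n+1), if k ≤ (l:ℕ) then ((-1/2 : ℝ) * if l = i then 1 else 0) else 0)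
            = -1/2 := by
          rw [Finset.sum_eq_single i]
          · simp [hki]
          · intro b _ hb; split_ifs <;> simp [hb]
          · simp
        have hcount : (∑ l : Fin (n+1), if k ≤ (l:ℕ) then (1:ℝ) else 0) = (n + 1 - k : ℕ) := by
          rw [Finset.sum_boole]
          congr 1
          have hfil : Finset.filter (fun l : Fin (n+1) => k ≤ (l:ℕ)) Finset.univ
              = Finset.Ici (⟨k, by omega⟩ : Fin (n+1)) := by
            ext l; simp [Fin.le_def]
          rw [hfil, Fin.card_Ici]
        have d2 : (∑ l : Fin (n+1), if k ≤ (l:ℕ) then (-1/2 : ℝ) else 0)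
            = (-1/2) * ((n + 1 - k : ℕ) : ℝ) := by
          rw [← hcount, Finset.mul_sum]
          exact Finset.sum_congr rfl fun l _ => by split_ifs <;> ring
        rw [d2, d1]
        have hc2 : ((n + 1 - k : ℕ) : ℝ) = ((n - k : ℕ) : ℝ) + 1 := by
          have h9 : n + 1 - k = (n - k) + 1 := by omega
          rw [h9]; push_cast; ring
        rw [hc2]; ring
      · -- off-diagonal, both ≥ k : zero
        rw [if_neg (fun h => hij h.2)]
        apply Finset.sum_eq_zero
        intro l _
        by_cases hkl : k ≤ (l:ℕ)
        · by_cases hli : l = i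
          · subst hli
            exact Finset.sum_eq_zero fun α _ => by rw [hJdiag]; ring
          · by_cases hlj : l = j
            · subst hlj
              exact Finset.sum_eq_zero fun α _ => by rw [hJdiag]; ring
            · rcases lt_or_gt_of_ne (fun h : i = l => hli h.symm) with h1 | h1 <;>
                rcases lt_or_gt_of_ne (hlj : l ≠ j) with h2 | h2
              · -- i < l, l < j
                rw [hP i l l j hki h1 hkl h2, if_neg (fun hh => hli hh.1.symm)]
              · -- i < l, j < l
                have e1 : ∀ α, J α i l * J α l j = -(J α i l * J α j l) := fun α => by
                  rw [hJanti' α j l]; ring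
                rw [Finset.sum_congr rfl fun α _ => e1 α, Finset.sum_neg_distrib,
                  hP i l j l hki h1 hkj h2, if_neg (fun hh => hij hh.1)]
                ring
              · -- l < i, l < j
                have e1 : ∀ α, J α i l * J α l j = -(J α l i * J α l j) := fun α => by
                  rw [hJanti' α l i]; ring
                rw [Finset.sum_congr rfl fun α _ => e1 α, Finset.sum_neg_distrib,
                  hP l i l j hkl h1 hkl h2, if_neg (fun hh => hij hh.2)]
                ring
              · -- l < i, j < l
                have e1 : ∀ α, J α i l * J α l j = J α l i * J α j l := fun α => by
                  rw [hJanti' α l i, hJanti' α j l]; ring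
                rw [Finset.sum_congr rfl fun α _ => e1 α, hP l i j l hkl h1 hkj h2,
                  if_neg (fun hh => hlj hh.1)]
        · exact Finset.sum_eq_zero fun α _ => by
            rw [hJblock α i l (Or.inr (by omega))]; ring
    · -- j < k
      rw [if_neg (by rintro ⟨h1, rfl⟩; exact hkj h1)]
      apply Finset.sum_eq_zero
      intro l _
      exact Finset.sum_eq_zero fun α _ => by rw [hJblock α l j (Or.inr (by omega))]; ring
  · -- i < k
    rw [if_neg (fun h => hki h.1)]
    apply Finset.sum_eq_zero
    intro l _
    exact Finset.sum_eq_zero fun α _ => by rw [hJblock α i l (Or.inl (by omega))]; ring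

private lemma ite_sum_push {n : ℕ} (P : Prop) [Decidable P] (g : Fin n → ℝ) :
    (if P then (∑ l, g l) else 0) = ∑ l, (if P then g l else 0) := by
  split_ifs with h
  · rfl
  · simp

set_option maxHeartbeats 1600000 in
/-- **Lemma A.1, cylindrical case**: rotation vector fields `K_α(x) = S J_α S⁻¹ (x - q)`,
built from an orthonormal basis `{J_α}` of the embedded `so(n-k+1) ⊂ so(n+1)` (block form
`diag(0_{k×k}, J̄)`, Frobenius inner product), which are tangent to the unit-radius cylinder
`Γ = ℝ^k × S^{n-k}` on a unit ball around `p ∈ Γ` and satisfy `|K_α|·(n-k) ≤ 5n` on a ball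
of radius `10n²`, must be of the standard form `K_α(x) = M_α x` with `{M_α}` an orthonormal
basis of the embedded `so(n-k+1)`.
Here the cylinder is `{x : Σ_{i ≥ k} xᵢ² = 1}` with outward unit normal
`ν(x)ᵢ = xᵢ` for `i ≥ k` and `0` otherwise. -/
theorem rotation_fields_tangent_to_cylinder_are_standard
    (n k N : ℕ) (hk : 1 ≤ k) (hkn : k < n)
    (hN : 2 * N = (n - k + 1) * (n - k))
    (J : Fin N → Matrix (Fin (n + 1)) (Fin (n + 1)) ℝ)
    (hJanti : ∀ α, (J α)ᵀ = -(J α))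
    (hJblock : ∀ α, ∀ i j : Fin (n + 1), ((i : ℕ) < k ∨ (j : ℕ) < k) → J α i j = 0)
    (hJortho : ∀ α β, Matrix.trace ((J α)ᵀ * J β) = if α = β then (1 : ℝ) else 0)
    (S : Matrix (Fin (n + 1)) (Fin (n + 1)) ℝ) (hS : S * Sᵀ = 1)
    (q : Fin (n + 1) → ℝ)
    (K : Fin N → (Fin (n + 1) → ℝ) → (Fin (n + 1) → ℝ))
    (hK : ∀ α x, K α x = (S * J α * S⁻¹).mulVec (x - q))
    (p : Fin (n + 1) → ℝ)
    (hp : (∑ i : Fin (n + 1), if k ≤ (i : ℕ) then p i ^ 2 else 0) = 1)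
    (htangent : ∀ α, ∀ x : Fin (n + 1) → ℝ,
      (∑ i : Fin (n + 1), if k ≤ (i : ℕ) then x i ^ 2 else 0) = 1 →
      Real.sqrt (∑ i : Fin (n + 1), (x i - p i) ^ 2) < 1 →
      (∑ i : Fin (n + 1), if k ≤ (i : ℕ) then K α x i * x i else 0) = 0)
    (hbound : ∀ α, ∀ x : Fin (n + 1) → ℝ,
      (∑ i : Fin (n + 1), if k ≤ (i : ℕ) then x i ^ 2 else 0) = 1 →
      Real.sqrt (∑ i : Fin (n + 1), (x i - p i) ^ 2) ≤ 10 * (n : ℝ) ^ 2 →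
      Real.sqrt (∑ i : Fin (n + 1), (K α x i) ^ 2) * ((n : ℝ) - k) ≤ 5 * n) :
    ∃ M : Fin N → Matrix (Fin (n + 1)) (Fin (n + 1)) ℝ,
      (∀ α, (M α)ᵀ = -(M α)) ∧
      (∀ α, ∀ i j : Fin (n + 1), ((i : ℕ) < k ∨ (j : ℕ) < k) → M α i j = 0) ∧
      (∀ α β, Matrix.trace ((M α)ᵀ * M β) = if α = β then (1 : ℝ) else 0) ∧
      (∀ α x, K α x = (M α).mulVec x) := by
  classical
  have hkn' : k ≤ n := le_of_lt hkn
  have hn2 : 2 ≤ n := by omega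
  set dr : ℝ := ((n - k : ℕ) : ℝ) with hdr
  have hdr1 : (1:ℝ) ≤ dr := by
    rw [hdr]
    exact_mod_cast Nat.one_le_iff_ne_zero.2 (by omega)
  have hdrpos : (0:ℝ) < dr := lt_of_lt_of_le one_pos hdr1
  have hnk : (n:ℝ) - k = dr := by rw [hdr, Nat.cast_sub hkn']
  have hnr2 : (2:ℝ) ≤ (n:ℝ) := by exact_mod_cast hn2
  have hkr1 : (1:ℝ) ≤ (k:ℝ) := by exact_mod_cast hk
  have hkrn : (k:ℝ) ≤ (n:ℝ) - 1 := by
    have : k ≤ n - 1 := by omega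
    have h2 : ((n - 1 : ℕ):ℝ) = (n:ℝ) - 1 := by
      rw [Nat.cast_sub (by omega)]; norm_num
    calc (k:ℝ) ≤ ((n-1:ℕ):ℝ) := by exact_mod_cast this
      _ = (n:ℝ) - 1 := h2
  have hNr : 2 * (N:ℝ) = (dr + 1) * dr := by
    have h1 : (2 * N : ℕ) = ((n-k) + 1) * (n - k) := hN
    calc 2 * (N:ℝ) = ((2 * N : ℕ) : ℝ) := by push_cast; ring
      _ = ((((n-k) + 1) * (n-k) : ℕ) : ℝ) := by rw [h1]
      _ = (((n-k:ℕ):ℝ) + 1) * ((n-k:ℕ):ℝ) := by push_cast; ring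
      _ = (dr + 1) * dr := by rw [← hdr]
  -- basic matrix facts
  have hSinv : S⁻¹ = Sᵀ := Matrix.inv_eq_right_inv hS
  have hStS : Sᵀ * S = 1 := mul_eq_one_comm.1 hS
  set A : Fin N → Matrix (Fin (n+1)) (Fin (n+1)) ℝ := fun α => S * J α * Sᵀ with hA
  have hK' : ∀ α x, K α x = (A α).mulVec (x - q) := by
    intro α x; rw [hK, hSinv, hA]
  have hAT : ∀ α, (A α)ᵀ = S * (J α)ᵀ * Sᵀ := by
    intro α
    rw [hA]
    rw [Matrix.transpose_mul, Matrix.transpose_mul, Matrix.transpose_transpose,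
      Matrix.mul_assoc]
  have hAanti : ∀ α, (A α)ᵀ = -(A α) := by
    intro α
    rw [hAT, hJanti, hA, Matrix.mul_neg, Matrix.neg_mul]
  have hAanti' : ∀ α a b, A α b a = - A α a b := by
    intro α a b
    have := congrFun (congrFun (hAanti α) a) b
    simpa [Matrix.transpose_apply] using this
  have hAortho : ∀ α β, Matrix.trace ((A α)ᵀ * A β) = if α = β then (1:ℝ) else 0 := by
    intro α β
    have e1 : (A α)ᵀ * A β = S * ((J α)ᵀ * (J β * Sᵀ)) := by
      rw [hAT α, hA]
      simp only [Matrix.mul_assoc]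
      rw [← Matrix.mul_assoc Sᵀ S (J β * Sᵀ), hStS, Matrix.one_mul]
    rw [e1, Matrix.trace_mul_comm]
    simp only [Matrix.mul_assoc]
    rw [hStS, Matrix.mul_one, hJortho]
  -- tangency master equation
  have master2 : ∀ α (x : Fin (n+1) → ℝ),
      (∑ i : Fin (n + 1), if k ≤ (i : ℕ) then x i ^ 2 else 0) = 1 →
      (∑ i : Fin (n + 1), (x i - p i) ^ 2) < 1 →
      (∑ i : Fin (n+1), if k ≤ (i:ℕ) then
        x i * ((∑ j : Fin (n+1), if (j:ℕ) < k then A α i j * x j else 0) - (∑ j : Fin (n+1), A α i j * q j))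
        else 0) = 0 := by
    intro α x hs hd
    have h0 := htangent α x hs (by
      rw [Real.sqrt_lt' one_pos]
      simpa using hd)
    simp only [hK'] at h0
    -- quadratic part vanishes
    have hquad : (∑ i : Fin (n+1), if k ≤ (i:ℕ) then
        x i * (∑ j : Fin (n+1), if k ≤ (j:ℕ) then A α i j * x j else 0) else 0) = 0 := by
      have e1 : ∀ i : Fin (n+1), (if k ≤ (i:ℕ) then
          x i * (∑ j : Fin (n+1), if k ≤ (j:ℕ) then A α i j * x j else 0) else 0)
          = ∑ j : Fin (n+1), (if k ≤ (i:ℕ) then (if k ≤ (j:ℕ) then A α i j * x i * x j else 0) else 0) := by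
        intro i
        by_cases h : k ≤ (i:ℕ)
        · rw [if_pos h, Finset.mul_sum]
          refine Finset.sum_congr rfl fun j _ => ?_
          rw [if_pos h]
          split_ifs <;> ring
        · simp [h]
      rw [Finset.sum_congr rfl fun i _ => e1 i]
      have h1 : (∑ i : Fin (n+1), ∑ j : Fin (n+1),
          (if k ≤ (i:ℕ) then (if k ≤ (j:ℕ) then A α i j * x i * x j else 0) else 0))
          = ∑ i : Fin (n+1), ∑ j : Fin (n+1),
          (if k ≤ (j:ℕ) then (if k ≤ (i:ℕ) then A α j i * x j * x i else 0) else 0) :=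
        Finset.sum_comm
      have h2 : (∑ i : Fin (n+1), ∑ j : Fin (n+1),
          (if k ≤ (j:ℕ) then (if k ≤ (i:ℕ) then A α j i * x j * x i else 0) else 0))
          = -∑ i : Fin (n+1), ∑ j : Fin (n+1),
          (if k ≤ (i:ℕ) then (if k ≤ (j:ℕ) then A α i j * x i * x j else 0) else 0) := by
        rw [← Finset.sum_neg_distrib]
        refine Finset.sum_congr rfl fun i _ => ?_
        rw [← Finset.sum_neg_distrib]
        refine Finset.sum_congr rfl fun j _ => ?_
        rw [hAanti' α i j]
        split_ifs <;> ring
      linarith [h1.trans h2]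
    -- split the tangency sum
    have hsplit : (∑ i : Fin (n+1), if k ≤ (i:ℕ) then ((A α).mulVec (x - q)) i * x i else 0)
        = (∑ i : Fin (n+1), if k ≤ (i:ℕ) then
            x i * ((∑ j : Fin (n+1), if (j:ℕ) < k then A α i j * x j else 0) - (∑ j : Fin (n+1), A α i j * q j))
            else 0)
          + (∑ i : Fin (n+1), if k ≤ (i:ℕ) then
            x i * (∑ j : Fin (n+1), if k ≤ (j:ℕ) then A α i j * x j else 0) else 0) := by
      rw [← Finset.sum_add_distrib]
      refine Finset.sum_congr rfl fun i _ => ?_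
      by_cases h : k ≤ (i:ℕ)
      · rw [if_pos h, if_pos h, if_pos h]
        have hmv : ((A α).mulVec (x - q)) i
            = (∑ j : Fin (n+1), if (j:ℕ) < k then A α i j * x j else 0)
              + (∑ j : Fin (n+1), if k ≤ (j:ℕ) then A α i j * x j else 0)
              - (∑ j : Fin (n+1), A α i j * q j) := by
          simp only [Matrix.mulVec, dotProduct, Pi.sub_apply]
          have e2 : ∀ j : Fin (n+1), A α i j * (x j - q j)
              = ((if (j:ℕ) < k then A α i j * x j else 0)
                + (if k ≤ (j:ℕ) then A α i j * x j else 0))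
                - A α i j * q j := by
            intro j
            by_cases hj : (j:ℕ) < k
            · rw [if_pos hj, if_neg (by omega)]; ring
            · rw [if_neg hj, if_pos (by omega)]; ring
          rw [Finset.sum_congr rfl fun j _ => e2 j, Finset.sum_sub_distrib,
            Finset.sum_add_distrib]
        rw [hmv]; ring
      · rw [if_neg h, if_neg h, if_neg h]; ring
    rw [hsplit, hquad, add_zero] at h0
    exact h0
  -- linear-in-ω equations from tangency at perturbed points
  have hlin : ∀ α (b : Fin (n+1)), (b:ℕ) < k → ∀ ω : Fin (n+1) → ℝ,
      (∑ i : Fin (n+1), if k ≤ (i:ℕ) then ω i ^ 2 else 0) = 1 →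
      (∑ i : Fin (n+1), (ω i - p i)^2) < 3/4 →
      (∑ i : Fin (n+1), if k ≤ (i:ℕ) then (A α i b) * ω i else 0) = 0 ∧
      (∑ i : Fin (n+1), if k ≤ (i:ℕ) then
        ((∑ j : Fin (n+1), if (j:ℕ) < k then A α i j * p j else 0)
          - (∑ j : Fin (n+1), A α i j * q j)) * ω i else 0) = 0 := by
    intro α b hb ω hsph hdist
    set xs : ℝ → Fin (n+1) → ℝ :=
      fun s i => if k ≤ (i:ℕ) then ω i else p i + s * (if i = b then 1 else 0) with hxs
    have hsphere : ∀ s, (∑ i : Fin (n+1), if k ≤ (i:ℕ) then xs s i ^ 2 else 0) = 1 := by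
      intro s
      rw [← hsph]
      refine Finset.sum_congr rfl fun i _ => ?_
      by_cases h : k ≤ (i:ℕ) <;> simp [hxs, h]
    have hdists : ∀ s : ℝ, s^2 ≤ 1/4 → (∑ i : Fin (n+1), (xs s i - p i)^2) < 1 := by
      intro s hs
      have e1 : ∀ i : Fin (n+1), (xs s i - p i)^2
          = (if k ≤ (i:ℕ) then (ω i - p i)^2 else 0)
            + (if k ≤ (i:ℕ) then 0 else s^2 * (if i = b then 1 else 0)) := by
        intro i
        by_cases h : k ≤ (i:ℕ)
        · simp [hxs, h]
        · simp only [hxs, if_neg h]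
          by_cases hib : i = b <;> simp [hib] <;> ring
      rw [Finset.sum_congr rfl fun i _ => e1 i, Finset.sum_add_distrib]
      have e2 : (∑ i : Fin (n+1), if k ≤ (i:ℕ) then (0:ℝ)
          else s^2 * (if i = b then 1 else 0)) = s^2 := by
        rw [Finset.sum_eq_single b]
        · rw [if_neg (by omega)]; simp
        · intro i _ hib; split_ifs <;> simp [hib]
        · simp
      rw [e2]
      have e3 : (∑ i : Fin (n+1), if k ≤ (i:ℕ) then (ω i - p i)^2 else 0)
          ≤ ∑ i : Fin (n+1), (ω i - p i)^2 := by
        refine Finset.sum_le_sum fun i _ => ?_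
        by_cases h : k ≤ (i:ℕ)
        · rw [if_pos h]
        · rw [if_neg h]; positivity
      linarith
    have hmaster : ∀ s : ℝ, s^2 ≤ 1/4 →
        (∑ i : Fin (n+1), if k ≤ (i:ℕ) then
          ω i * (((∑ j : Fin (n+1), if (j:ℕ) < k then A α i j * p j else 0)
            - (∑ j : Fin (n+1), A α i j * q j)) + s * A α i b) else 0) = 0 := by
      intro s hs
      have h0 := master2 α (xs s) (hsphere s) (hdists s hs)
      have heq : (∑ i : Fin (n+1), if k ≤ (i:ℕ) then
          ω i * (((∑ j : Fin (n+1), if (j:ℕ) < k then A α i j * p j else 0)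
            - (∑ j : Fin (n+1), A α i j * q j)) + s * A α i b) else 0)
          = (∑ i : Fin (n+1), if k ≤ (i:ℕ) then
            xs s i * ((∑ j : Fin (n+1), if (j:ℕ) < k then A α i j * xs s j else 0)
              - (∑ j : Fin (n+1), A α i j * q j)) else 0) := by
        refine Finset.sum_congr rfl fun i _ => ?_
        by_cases h : k ≤ (i:ℕ)
        swap
        · rw [if_neg h, if_neg h]
        rw [if_pos h, if_pos h]
        have hxsi : xs s i = ω i := by simp [hxs, h]
        have e4 : (∑ j : Fin (n+1), if (j:ℕ) < k then A α i j * xs s j else 0)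
            = (∑ j : Fin (n+1), if (j:ℕ) < k then A α i j * p j else 0) + s * A α i b := by
          have e5 : ∀ j : Fin (n+1), (if (j:ℕ) < k then A α i j * xs s j else 0)
              = (if (j:ℕ) < k then A α i j * p j else 0)
                + ((s * A α i j) * (if j = b then 1 else 0)) := by
            intro j
            by_cases hj : (j:ℕ) < k
            · rw [if_pos hj, if_pos hj]
              have hxj : xs s j = p j + s * (if j = b then 1 else 0) := by
                simp only [hxs]; rw [if_neg (by omega)]
              rw [hxj]
              by_cases hjb : j = b <;> simp [hjb] <;> ring
            · rw [if_neg hj, if_neg hj]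
              have hjb : ¬ (j = b) := fun hh => hj (hh ▸ hb)
              simp [hjb]
          rw [Finset.sum_congr rfl fun j _ => e5 j, Finset.sum_add_distrib]
          congr 1
          rw [Finset.sum_eq_single b]
          · simp
          · intro j _ hjb; simp [hjb]
          · simp
        rw [hxsi, e4]
        ring
      rw [heq]
      exact h0
    have hquarter : ((1:ℝ)/2)^2 ≤ 1/4 := by norm_num
    have hquarter' : (-(1:ℝ)/2)^2 ≤ 1/4 := by norm_num
    have hplus := hmaster (1/2) hquarter
    have hminus := hmaster (-1/2) hquarter'
    have hsplitω : ∀ s : ℝ, (∑ i : Fin (n+1), if k ≤ (i:ℕ) then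
          ω i * (((∑ j : Fin (n+1), if (j:ℕ) < k then A α i j * p j else 0)
            - (∑ j : Fin (n+1), A α i j * q j)) + s * A α i b) else 0)
        = (∑ i : Fin (n+1), if k ≤ (i:ℕ) then
            ((∑ j : Fin (n+1), if (j:ℕ) < k then A α i j * p j else 0)
              - (∑ j : Fin (n+1), A α i j * q j)) * ω i else 0)
          + s * (∑ i : Fin (n+1), if k ≤ (i:ℕ) then (A α i b) * ω i else 0) := by
      intro s
      rw [Finset.mul_sum, ← Finset.sum_add_distrib]
      refine Finset.sum_congr rfl fun i _ => ?_
      by_cases h : k ≤ (i:ℕ)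
      · rw [if_pos h, if_pos h, if_pos h]; ring
      · rw [if_neg h, if_neg h, if_neg h]; ring
    rw [hsplitω] at hplus hminus
    constructor
    · linarith
    · linarith
  -- R-block vanishes
  have hR : ∀ α (i b : Fin (n+1)), k ≤ (i:ℕ) → (b:ℕ) < k → A α i b = 0 := by
    intro α i b hi hb
    exact sphere_span p (fun i => A α i b) hp
      (fun ω h1 h2 => (hlin α b hb ω h1 h2).1) i hi
  have hu0 : ∀ α (i : Fin (n+1)), k ≤ (i:ℕ) →
      ((∑ j : Fin (n+1), if (j:ℕ) < k then A α i j * p j else 0)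
        - (∑ j : Fin (n+1), A α i j * q j)) = 0 := by
    intro α i hi
    have hb0 : ((⟨0, by omega⟩ : Fin (n+1)) : ℕ) < k := by simp; omega
    exact sphere_span p (fun i => (∑ j : Fin (n+1), if (j:ℕ) < k then A α i j * p j else 0)
        - (∑ j : Fin (n+1), A α i j * q j)) hp
      (fun ω h1 h2 => (hlin α ⟨0, by omega⟩ hb0 ω h1 h2).2) i hi
  have hAq0 : ∀ α (i : Fin (n+1)), k ≤ (i:ℕ) → (∑ j : Fin (n+1), A α i j * q j) = 0 := by
    intro α i hi
    have h1 := hu0 α i hi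
    have h2 : (∑ j : Fin (n+1), if (j:ℕ) < k then A α i j * p j else 0) = 0 :=
      Finset.sum_eq_zero fun j _ => by
        by_cases hj : (j:ℕ) < k
        · rw [if_pos hj, hR α i j hi hj]; ring
        · rw [if_neg hj]
    rw [h2] at h1
    linarith
  -- entrywise bound on the k×k block from hbound
  have hAab : ∀ α (a b : Fin (n+1)), (a:ℕ) < k → (b:ℕ) < k →
      |A α a b| * (2 * (n:ℝ) * dr) ≤ 1 := by
    intro α a b ha hb
    set t : ℝ := 10 * (n:ℝ)^2 with ht
    have htpos : 0 < t := by
      rw [ht]; positivity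
    have key : ∀ c : ℝ, |c| = t →
        |(∑ j : Fin (n+1), A α a j * (p j - q j)) + c * A α a b| * dr ≤ 5 * n := by
      intro c hc
      set xc : Fin (n+1) → ℝ := fun i => p i + c * (if i = b then 1 else 0) with hxc
      have hsph : (∑ i : Fin (n+1), if k ≤ (i:ℕ) then xc i ^2 else 0) = 1 := by
        rw [← hp]
        refine Finset.sum_congr rfl fun i _ => ?_
        by_cases h : k ≤ (i:ℕ)
        · rw [if_pos h, if_pos h]
          have hib : ¬ (i = b) := fun hh => by omega
          simp [hxc, hib]
        · rw [if_neg h, if_neg h]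
      have hdistc : Real.sqrt (∑ i : Fin (n+1), (xc i - p i)^2) ≤ 10*(n:ℝ)^2 := by
        have e1 : (∑ i : Fin (n+1), (xc i - p i)^2) = c^2 := by
          rw [Finset.sum_eq_single b]
          · simp [hxc]
          · intro i _ hib; simp [hxc, hib]
          · simp
        rw [e1, Real.sqrt_sq_eq_abs, hc, ht]
      have hbd := hbound α xc hsph hdistc
      rw [hnk] at hbd
      have hKa : (K α xc a)^2 ≤ ∑ i : Fin (n+1), (K α xc i)^2 :=
        Finset.single_le_sum (f := fun i => (K α xc i)^2) (fun i _ => sq_nonneg _)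
          (Finset.mem_univ a)
      have habs : |K α xc a| ≤ Real.sqrt (∑ i : Fin (n+1), (K α xc i)^2) := by
        rw [← Real.sqrt_sq_eq_abs]
        exact Real.sqrt_le_sqrt hKa
      have h5 : |K α xc a| * dr ≤ 5*n := by
        calc |K α xc a| * dr ≤ Real.sqrt (∑ i : Fin (n+1), (K α xc i)^2) * dr :=
              mul_le_mul_of_nonneg_right habs (le_of_lt hdrpos)
          _ ≤ 5*n := hbd
      have hKval : K α xc a = (∑ j : Fin (n+1), A α a j * (p j - q j)) + c * A α a b := by
        rw [hK']
        simp only [Matrix.mulVec, dotProduct, Pi.sub_apply]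
        have e2 : ∀ j : Fin (n+1), A α a j * (xc j - q j)
            = A α a j * (p j - q j) + (c * A α a j) * (if j = b then 1 else 0) := by
          intro j
          by_cases hjb : j = b
          · simp [hxc, hjb]; ring
          · simp [hxc, hjb]
        rw [Finset.sum_congr rfl fun j _ => e2 j, Finset.sum_add_distrib]
        congr 1
        rw [Finset.sum_eq_single b]
        · simp
        · intro j _ hjb; simp [hjb]
        · simp
      rw [← hKval]
      exact h5
    have h1 := key t (abs_of_pos htpos)
    have h2 := key (-t) (by rw [abs_neg]; exact abs_of_pos htpos)
    set v := (∑ j : Fin (n+1), A α a j * (p j - q j)) with hv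
    have h3 : |2 * t * A α a b| ≤ |v + t * A α a b| + |v + (-t) * A α a b| := by
      have e3 : |2 * t * A α a b| = |(v + t * A α a b) + -(v + (-t) * A α a b)| := by
        congr 1; ring
      rw [e3]
      calc |(v + t * A α a b) + -(v + (-t) * A α a b)|
          ≤ |v + t * A α a b| + |-(v + (-t) * A α a b)| := abs_add_le _ _
        _ = |v + t * A α a b| + |v + (-t) * A α a b| := by rw [abs_neg]
    have h4 : |2 * t * A α a b| * dr ≤ 10 * n := by
      calc |2*t*A α a b| * dr ≤ (|v + t * A α a b| + |v + (-t) * A α a b|) * dr :=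
            mul_le_mul_of_nonneg_right h3 (le_of_lt hdrpos)
        _ = |v + t * A α a b| * dr + |v + (-t) * A α a b| * dr := by ring
        _ ≤ 5*n + 5*n := add_le_add h1 h2
        _ = 10*n := by ring
    have h6 : |2*t*A α a b| = 2 * t * |A α a b| := by
      rw [abs_mul, abs_of_pos (by positivity : (0:ℝ) < 2*t)]
    rw [h6, ht] at h4
    nlinarith [abs_nonneg (A α a b), hnr2, hdrpos, h4]
  -- Casimir: sum of squares of the basis
  have hCas := casimir n k N hkn' hN J hJanti hJblock hJortho
  set Pm : Matrix (Fin (n+1)) (Fin (n+1)) ℝ :=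
    Matrix.of (fun i j => if k ≤ (i:ℕ) ∧ i = j then (1:ℝ) else 0) with hPm
  have hPmval : ∀ i j : Fin (n+1), Pm i j = if k ≤ (i:ℕ) ∧ i = j then (1:ℝ) else 0 :=
    fun i j => rfl
  have hJJ : (∑ α, J α * J α) = (-dr/2) • Pm := by
    ext i j
    rw [hCas i j, Matrix.smul_apply, hPmval, smul_eq_mul, ← hdr]
    split_ifs <;> ring
  set W : Matrix (Fin (n+1)) (Fin (n+1)) ℝ := S * Pm * Sᵀ with hW
  have hAsq : (∑ α, A α * A α) = (-dr/2) • W := by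
    have e : ∀ α : Fin N, A α * A α = S * (J α * J α) * Sᵀ := by
      intro α
      rw [hA]
      simp only [Matrix.mul_assoc]
      rw [← Matrix.mul_assoc Sᵀ S (J α * Sᵀ), hStS, Matrix.one_mul]
    rw [Finset.sum_congr rfl fun α _ => e α, ← Finset.sum_mul, ← Finset.mul_sum, hJJ,
      Matrix.mul_smul, Matrix.smul_mul]
  have hPmPm : Pm * Pm = Pm := by
    ext i j
    rw [Matrix.mul_apply]
    rw [Finset.sum_eq_single i]
    · simp only [hPmval]
      by_cases h2 : i = j
      · subst h2
        by_cases h : k ≤ (i:ℕ) <;> simp [h]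
      · have hz : (if k ≤ (i:ℕ) ∧ i = j then (1:ℝ) else 0) = 0 := if_neg (fun hh => h2 hh.2)
        rw [hz, mul_zero]
    · intro l _ hli
      simp only [hPmval]
      rw [if_neg (fun hh => hli hh.2.symm)]
      ring
    · simp
  have hWidem : W * W = W := by
    rw [hW]
    simp only [Matrix.mul_assoc]
    rw [← Matrix.mul_assoc Sᵀ S (Pm * Sᵀ), hStS, Matrix.one_mul,
      ← Matrix.mul_assoc Pm Pm Sᵀ, hPmPm]
  have hWsymm : ∀ i j, W i j = W j i := by
    have hT : Wᵀ = W := by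
      rw [hW, Matrix.transpose_mul, Matrix.transpose_mul, Matrix.transpose_transpose]
      have hPmT : Pmᵀ = Pm := by
        ext i j
        rw [Matrix.transpose_apply, hPmval, hPmval]
        by_cases h : i = j
        · subst h; rfl
        · rw [if_neg (fun hh => h hh.2.symm), if_neg (fun hh => h hh.2)]
      rw [hPmT, Matrix.mul_assoc]
    intro i j
    have h := congrFun (congrFun hT j) i
    rw [Matrix.transpose_apply] at h
    exact h
  have hdrne : dr ≠ 0 := ne_of_gt hdrpos
  have hWentry : ∀ i j, W i j = (-2/dr) * (∑ α, A α * A α) i j := by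
    intro i j
    have h := congrFun (congrFun hAsq i) j
    rw [Matrix.smul_apply, smul_eq_mul] at h
    rw [h]
    field_simp
  have hsum2 : ∀ i j, (∑ α, A α * A α) i j = ∑ α, ∑ l, A α i l * A α l j := by
    intro i j
    rw [Matrix.sum_apply]
    exact Finset.sum_congr rfl fun α _ => Matrix.mul_apply
  have hWblock : ∀ i j : Fin (n+1),
      (((i:ℕ) < k ∧ k ≤ (j:ℕ)) ∨ (k ≤ (i:ℕ) ∧ (j:ℕ) < k)) → W i j = 0 := by
    intro i j hij
    rw [hWentry, hsum2]
    have hz : (∑ α, ∑ l : Fin (n+1), A α i l * A α l j) = 0 := by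
      refine Finset.sum_eq_zero fun α _ => Finset.sum_eq_zero fun l _ => ?_
      rcases hij with ⟨h1, h2⟩ | ⟨h1, h2⟩
      · by_cases hl : k ≤ (l:ℕ)
        · have hz1 : A α i l = 0 := by
            rw [hAanti' α l i, hR α l i hl h1]; ring
          rw [hz1]; ring
        · have hz1 : A α l j = 0 := by
            rw [hAanti' α j l, hR α j l h2 (by omega)]; ring
          rw [hz1]; ring
      · by_cases hl : k ≤ (l:ℕ)
        · have hz1 : A α l j = 0 := hR α l j hl h2
          rw [hz1]; ring
        · have hz1 : A α i l = 0 := hR α i l h1 (by omega)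
          rw [hz1]; ring
    rw [hz]; ring
  have hWdiagval : ∀ a : Fin (n+1), (a:ℕ) < k →
      W a a = (2/dr) * ∑ α, ∑ l : Fin (n+1), (A α a l)^2 := by
    intro a ha
    rw [hWentry, hsum2]
    have e : (∑ α, ∑ l : Fin (n+1), A α a l * A α l a)
        = -∑ α, ∑ l : Fin (n+1), (A α a l)^2 := by
      rw [← Finset.sum_neg_distrib]
      refine Finset.sum_congr rfl fun α _ => ?_
      rw [← Finset.sum_neg_distrib]
      refine Finset.sum_congr rfl fun l _ => ?_
      rw [hAanti' α a l]
      ring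
    rw [e]
    field_simp
  have hdiagsq : ∀ a : Fin (n+1), (a:ℕ) < k →
      W a a = ∑ j : Fin (n+1), if (j:ℕ) < k then (W a j)^2 else 0 := by
    intro a ha
    have h1 : W a a = (W * W) a a := by rw [hWidem]
    rw [Matrix.mul_apply] at h1
    rw [h1]
    refine Finset.sum_congr rfl fun j _ => ?_
    by_cases hj : (j:ℕ) < k
    · rw [if_pos hj, ← hWsymm a j]; ring
    · rw [if_neg hj]
      have hz : W a j = 0 := hWblock a j (Or.inl ⟨ha, by omega⟩)
      rw [← hWsymm a j, hz]; ring
  -- the trace of the k×k block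
  have hcountk : (∑ a : Fin (n+1), if (a:ℕ) < k then (1:ℝ) else 0) = k := by
    rw [Finset.sum_boole]
    congr 1
    have hfil : Finset.filter (fun l : Fin (n+1) => (l:ℕ) < k) Finset.univ
        = Finset.Iio (⟨k, by omega⟩ : Fin (n+1)) := by
      ext l; simp [Fin.lt_def]
    rw [hfil, Fin.card_Iio]
  have htermb : ∀ α (a l : Fin (n+1)), (a:ℕ) < k →
      (A α a l)^2 * (4 * (n:ℝ)^2 * dr^2) ≤ (if (l:ℕ) < k then (1:ℝ) else 0) := by
    intro α a l ha
    by_cases hl : (l:ℕ) < k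
    · rw [if_pos hl]
      have h1 := hAab α a l ha hl
      have h2 : (0:ℝ) ≤ |A α a l| := abs_nonneg _
      have hy : (0:ℝ) ≤ |A α a l| * (2*(n:ℝ)*dr) := mul_nonneg h2 (by positivity)
      calc (A α a l)^2 * (4*(n:ℝ)^2*dr^2) = (|A α a l| * (2*(n:ℝ)*dr))^2 := by
            rw [mul_pow, sq_abs]; ring
        _ ≤ 1 := by nlinarith [h1, hy]
    · rw [if_neg hl]
      have hz : A α a l = 0 := by
        rw [hAanti' α l a, hR α l a (by omega) ha]; ring
      rw [hz]
      norm_num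
  have hrowb : ∀ α (a : Fin (n+1)), (a:ℕ) < k →
      (∑ l : Fin (n+1), (A α a l)^2) * (4*(n:ℝ)^2*dr^2) ≤ (k:ℝ) := by
    intro α a ha
    rw [Finset.sum_mul]
    calc (∑ l : Fin (n+1), (A α a l)^2 * (4*(n:ℝ)^2*dr^2))
        ≤ ∑ l : Fin (n+1), (if (l:ℕ) < k then (1:ℝ) else 0) :=
          Finset.sum_le_sum fun l _ => htermb α a l ha
      _ = (k:ℝ) := hcountk
  have hWaa_b : ∀ a : Fin (n+1), (a:ℕ) < k →
      W a a * (4*(n:ℝ)^2*dr^3) ≤ 2 * ((N:ℝ) * k) := by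
    intro a ha
    rw [hWdiagval a ha]
    have h1 : (2/dr) * (∑ α, ∑ l : Fin (n+1), (A α a l)^2) * (4*(n:ℝ)^2*dr^3)
        = ((∑ α, ∑ l : Fin (n+1), (A α a l)^2) * (4*(n:ℝ)^2*dr^2)) * 2 := by
      field_simp
    rw [h1]
    have h2 : (∑ α, ∑ l : Fin (n+1), (A α a l)^2) * (4*(n:ℝ)^2*dr^2) ≤ (N:ℝ) * k := by
      rw [Finset.sum_mul]
      calc (∑ α, (∑ l : Fin (n+1), (A α a l)^2) * (4*(n:ℝ)^2*dr^2))
          ≤ ∑ _α : Fin N, (k:ℝ) := Finset.sum_le_sum fun α _ => hrowb α a ha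
        _ = (N:ℝ) * k := by
            rw [Finset.sum_const, Finset.card_univ, Fintype.card_fin, nsmul_eq_mul]
    linarith
  set ss : ℝ := ∑ a : Fin (n+1), if (a:ℕ) < k then
      (∑ j : Fin (n+1), if (j:ℕ) < k then (W a j)^2 else 0) else 0 with hss
  have htts : (∑ a : Fin (n+1), if (a:ℕ) < k then W a a else 0) = ss := by
    rw [hss]
    refine Finset.sum_congr rfl fun a _ => ?_
    by_cases h : (a:ℕ) < k
    · rw [if_pos h, if_pos h, hdiagsq a h]
    · rw [if_neg h, if_neg h]
  have htt_small : (∑ a : Fin (n+1), if (a:ℕ) < k then W a a else 0) * (4*(n:ℝ)^2*dr^3)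
      ≤ 2 * ((N:ℝ) * k) * k := by
    rw [Finset.sum_mul]
    calc (∑ a : Fin (n+1), (if (a:ℕ) < k then W a a else 0) * (4*(n:ℝ)^2*dr^3))
        ≤ ∑ a : Fin (n+1), (if (a:ℕ) < k then 2 * ((N:ℝ)*k) else 0) := by
          refine Finset.sum_le_sum fun a _ => ?_
          by_cases h : (a:ℕ) < k
          · rw [if_pos h, if_pos h]; exact hWaa_b a h
          · rw [if_neg h, if_neg h]; simp
      _ = 2 * ((N:ℝ)*k) * k := by
          have e : ∀ a : Fin (n+1), (if (a:ℕ) < k then 2 * ((N:ℝ)*k) else 0)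
              = 2 * ((N:ℝ)*k) * (if (a:ℕ) < k then (1:ℝ) else 0) := fun a => by
            split_ifs <;> ring
          rw [Finset.sum_congr rfl fun a _ => e a, ← Finset.mul_sum, hcountk]
  have hss_small : ss < 1 := by
    have hC : (0:ℝ) < 4*(n:ℝ)^2*dr^3 := by positivity
    have hB : 2 * ((N:ℝ)*k) * k < 4*(n:ℝ)^2*dr^3 := by
      have e : 2 * ((N:ℝ)*k)*k = (dr+1)*dr*(k:ℝ)^2 := by
        rw [show (2:ℝ) * ((N:ℝ)*k)*k = (2*(N:ℝ))*(k:ℝ)^2 by ring, hNr]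
      rw [e]
      have e1 : dr + 1 ≤ 2*dr^2 := by nlinarith [hdr1]
      have e2 : (k:ℝ)^2 ≤ ((n:ℝ)-1)^2 := by nlinarith [hkr1, hkrn]
      have hk2 : (0:ℝ) ≤ (k:ℝ)^2 := sq_nonneg _
      have c1 : (dr+1)*dr*(k:ℝ)^2 ≤ (2*dr^2)*dr*(k:ℝ)^2 := by
        nlinarith [mul_nonneg (mul_nonneg (by linarith : (0:ℝ) ≤ 2*dr^2 - (dr+1)) hdrpos.le) hk2]
      have c2 : (2*dr^2)*dr*(k:ℝ)^2 ≤ 2*dr^3*((n:ℝ)-1)^2 := by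
        nlinarith [mul_nonneg (by positivity : (0:ℝ) ≤ 2*dr^3)
          (by linarith : (0:ℝ) ≤ ((n:ℝ)-1)^2 - (k:ℝ)^2)]
      have c3 : 2*dr^3*((n:ℝ)-1)^2 < 4*(n:ℝ)^2*dr^3 := by
        have e3 : ((n:ℝ)-1)^2 < 2*(n:ℝ)^2 := by nlinarith [hnr2]
        nlinarith [mul_lt_mul_of_pos_left e3 (by positivity : (0:ℝ) < 2*dr^3)]
      linarith
    have h1 : ss * (4*(n:ℝ)^2*dr^3) ≤ 2*((N:ℝ)*k)*k := by
      rw [← htts]; exact htt_small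
    nlinarith [hC, hB, h1]
  have hssnn : 0 ≤ ss := by
    rw [hss]
    refine Finset.sum_nonneg fun a _ => ?_
    by_cases h : (a:ℕ) < k
    · rw [if_pos h]
      refine Finset.sum_nonneg fun j _ => ?_
      by_cases hj : (j:ℕ) < k
      · rw [if_pos hj]; positivity
      · rw [if_neg hj]
    · rw [if_neg h]
  -- Cauchy-Schwarz: ss ≤ ss * ss
  have hWoff : ∀ a j : Fin (n+1), (a:ℕ) < k → (j:ℕ) < k →
      (W a j)^2 ≤ (∑ l : Fin (n+1), if (l:ℕ) < k then (W a l)^2 else 0)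
        * (∑ l : Fin (n+1), if (l:ℕ) < k then (W l j)^2 else 0) := by
    intro a j ha hj
    have h1 : W a j = ∑ l : Fin (n+1),
        (if (l:ℕ) < k then W a l else 0) * (if (l:ℕ) < k then W l j else 0) := by
      have h2 : W a j = (W*W) a j := by rw [hWidem]
      rw [Matrix.mul_apply] at h2
      rw [h2]
      refine Finset.sum_congr rfl fun l _ => ?_
      by_cases hl : (l:ℕ) < k
      · rw [if_pos hl, if_pos hl]
      · rw [if_neg hl, if_neg hl]
        have hz : W a l = 0 := hWblock a l (Or.inl ⟨ha, by omega⟩)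
        rw [hz]; ring
    have hcs := Finset.sum_mul_sq_le_sq_mul_sq Finset.univ
      (fun l : Fin (n+1) => if (l:ℕ) < k then W a l else 0)
      (fun l : Fin (n+1) => if (l:ℕ) < k then W l j else 0)
    have e1 : (∑ l : Fin (n+1), (if (l:ℕ) < k then W a l else 0)^2)
        = ∑ l : Fin (n+1), if (l:ℕ) < k then (W a l)^2 else 0 :=
      Finset.sum_congr rfl fun l _ => by split_ifs <;> simp
    have e2 : (∑ l : Fin (n+1), (if (l:ℕ) < k then W l j else 0)^2)
        = ∑ l : Fin (n+1), if (l:ℕ) < k then (W l j)^2 else 0 :=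
      Finset.sum_congr rfl fun l _ => by split_ifs <;> simp
    calc (W a j)^2
        = (∑ l : Fin (n+1), (if (l:ℕ) < k then W a l else 0) * (if (l:ℕ) < k then W l j else 0))^2 := by
          rw [← h1]
      _ ≤ (∑ l : Fin (n+1), (if (l:ℕ) < k then W a l else 0)^2)
          * (∑ l : Fin (n+1), (if (l:ℕ) < k then W l j else 0)^2) := hcs
      _ = _ := by rw [e1, e2]
  have hcolss : (∑ j : Fin (n+1), if (j:ℕ) < k then
      (∑ l : Fin (n+1), if (l:ℕ) < k then (W l j)^2 else 0) else 0) = ss := by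
    rw [hss]
    rw [Finset.sum_congr rfl fun (j : Fin (n+1)) _ =>
      ite_sum_push ((j:ℕ) < k) (fun l : Fin (n+1) => if (l:ℕ) < k then (W l j)^2 else 0)]
    rw [Finset.sum_congr rfl fun (a : Fin (n+1)) _ =>
      ite_sum_push ((a:ℕ) < k) (fun j : Fin (n+1) => if (j:ℕ) < k then (W a j)^2 else 0)]
    rw [Finset.sum_comm]
    refine Finset.sum_congr rfl fun a _ => Finset.sum_congr rfl fun j _ => ?_
    split_ifs <;> rfl
  have hCS : ss ≤ ss * ss := by
    have step1 : ss ≤ ∑ a : Fin (n+1), if (a:ℕ) < k then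
        (∑ l : Fin (n+1), if (l:ℕ) < k then (W a l)^2 else 0) * ss else 0 := by
      conv_lhs => rw [hss]
      refine Finset.sum_le_sum fun a _ => ?_
      by_cases ha : (a:ℕ) < k
      · rw [if_pos ha, if_pos ha]
        rw [← hcolss]
        rw [Finset.mul_sum]
        refine Finset.sum_le_sum fun j _ => ?_
        by_cases hj : (j:ℕ) < k
        · rw [if_pos hj, if_pos hj]
          exact hWoff a j ha hj
        · rw [if_neg hj, if_neg hj]
          simp
      · rw [if_neg ha, if_neg ha]
    have step2 : (∑ a : Fin (n+1), if (a:ℕ) < k then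
        (∑ l : Fin (n+1), if (l:ℕ) < k then (W a l)^2 else 0) * ss else 0) = ss * ss := by
      have e : ∀ a : Fin (n+1), (if (a:ℕ) < k then
          (∑ l : Fin (n+1), if (l:ℕ) < k then (W a l)^2 else 0) * ss else 0)
          = (if (a:ℕ) < k then
            (∑ l : Fin (n+1), if (l:ℕ) < k then (W a l)^2 else 0) else 0) * ss := fun a => by
        split_ifs <;> ring
      rw [Finset.sum_congr rfl fun a _ => e a, ← Finset.sum_mul, ← hss]
    rw [step2] at step1
    exact step1
  have hss0 : ss = 0 := by nlinarith [hssnn, hCS, hss_small]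
  -- rows < k of each A α vanish
  have hWdiag0 : ∀ a : Fin (n+1), (a:ℕ) < k → W a a = 0 := by
    intro a ha
    have htt0 : (∑ b : Fin (n+1), if (b:ℕ) < k then W b b else 0) = 0 := by
      rw [htts, hss0]
    have hnn : ∀ b : Fin (n+1), b ∈ Finset.univ →
        0 ≤ (if (b:ℕ) < k then W b b else 0) := by
      intro b _
      by_cases hb : (b:ℕ) < k
      · rw [if_pos hb, hdiagsq b hb]
        refine Finset.sum_nonneg fun j _ => ?_
        by_cases hj : (j:ℕ) < k
        · rw [if_pos hj]; positivity
        · rw [if_neg hj]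
      · rw [if_neg hb]
    have h := (Finset.sum_eq_zero_iff_of_nonneg hnn).1 htt0 a (Finset.mem_univ a)
    rw [if_pos ha] at h
    exact h
  have hrowzero : ∀ α (a l : Fin (n+1)), (a:ℕ) < k → A α a l = 0 := by
    intro α a l ha
    have h1 := hWdiag0 a ha
    rw [hWdiagval a ha] at h1
    have h2 : (∑ α, ∑ l : Fin (n+1), (A α a l)^2) = 0 := by
      have hne : (2:ℝ)/dr ≠ 0 := by positivity
      rcases mul_eq_zero.1 h1 with h | h
      · exact absurd h hne
      · exact h
    have h3 := (Finset.sum_eq_zero_iff_of_nonneg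
      (fun β _ => Finset.sum_nonneg fun l _ => sq_nonneg _)).1 h2 α (Finset.mem_univ α)
    have h4 := (Finset.sum_eq_zero_iff_of_nonneg
      (fun l _ => sq_nonneg _)).1 h3 l (Finset.mem_univ l)
    exact pow_eq_zero_iff (two_ne_zero) |>.1 h4
  -- conclusion
  refine ⟨A, hAanti, ?_, hAortho, ?_⟩
  · intro α i j hij
    rcases hij with hi | hj
    · exact hrowzero α i j hi
    · by_cases hi : k ≤ (i:ℕ)
      · exact hR α i j hi hj
      · exact hrowzero α i j (by omega)
  · intro α x
    rw [hK']
    have hq0 : (A α).mulVec q = 0 := by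
      funext i
      simp only [Matrix.mulVec, dotProduct, Pi.zero_apply]
      by_cases hi : k ≤ (i:ℕ)
      · exact hAq0 α i hi
      · exact Finset.sum_eq_zero fun j _ => by rw [hrowzero α i j (by omega)]; ring
    rw [Matrix.mulVec_sub, hq0, sub_zero]
end
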